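/- arXiv:2008.06025 — 2 statements merged into one kernel-verified Lean document; each statement's English description precedes it below -/
import Mathlib

section
/- The set of strong cubic critical portraits is open and dense in the space CrP of all cubic critical portraits, and the set of weak cubic critical portraits is closed and nowhere dense in CrP. -/
noncomputable section

open Filter Metric

/-- Points of the unit circle `S`. -/
abbrev SPt : Type := {z : ℂ // ‖z‖ = 1}

/-- The unit circle, as a subset of `ℂ`. -/
def circleSet : Set ℂ := {z : ℂ | ‖z‖ = 1}

/-- The open unit disk `D`. -/
def openDisk : Set ℂ := Metric.ball (0 : ℂ) 1

/-- The map `σ_d : S → S`, `z ↦ z ^ d`. -/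
def sigmaS (d : ℕ) (z : SPt) : SPt :=
  ⟨(z : ℂ) ^ d, by rw [norm_pow, z.2, one_pow]⟩

/-- A chord, identified with the unordered pair of its endpoints. -/
abbrev Chord : Type := Sym2 SPt

/-- The closed straight segment in `ℂ` spanned by a chord. -/
def chordSet : Chord → Set ℂ :=
  Sym2.lift ⟨fun a b => segment ℝ (a : ℂ) (b : ℂ), fun a b => segment_symm ℝ _ _⟩

/-- The image chord `σ_d(ℓ)`. -/
def chordMap (d : ℕ) : Chord → Chord := Sym2.map (sigmaS d)

/-- Two (distinct) chords cross if they intersect in the open unit disk. -/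
def Cross (c₁ c₂ : Chord) : Prop :=
  c₁ ≠ c₂ ∧ (chordSet c₁ ∩ chordSet c₂ ∩ openDisk).Nonempty

/-- The length `|ℓ|` of a chord: the normalized length of the shorter arc
subtended by its endpoints (total circle length 1). -/
def chordLength : Chord → ℝ :=
  Sym2.lift ⟨fun a b => |Complex.arg ((a : ℂ) / (b : ℂ))| / (2 * Real.pi), by
    intro a b
    dsimp only
    have h : ((b : ℂ) / (a : ℂ)) = ((a : ℂ) / (b : ℂ))⁻¹ := (inv_div _ _).symm
    rw [h, Complex.arg_inv]
    split_ifs with hpi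
    · rw [hpi]
    · rw [abs_neg]⟩

/-- A lamination: a family of pairwise non-crossing chords containing all
degenerate chords, whose union is compact. -/
structure Lamination : Type where
  leaves : Set Chord
  no_cross : ∀ ℓ₁ ∈ leaves, ∀ ℓ₂ ∈ leaves, ¬ Cross ℓ₁ ℓ₂
  diag_mem : ∀ z : SPt, Sym2.diag z ∈ leaves
  plus_compact : IsCompact (⋃ ℓ ∈ leaves, chordSet ℓ)

/-- `Λ⁺`, the union of all leaves of `Λ`. -/
def Lamination.plus (Λ : Lamination) : Set ℂ := ⋃ ℓ ∈ Λ.leaves, chordSet ℓ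

/-- Sibling `σ_d`-invariance of a lamination. -/
def Lamination.Invariant (Λ : Lamination) (d : ℕ) : Prop :=
  (∀ ℓ ∈ Λ.leaves, chordMap d ℓ ∈ Λ.leaves) ∧
  (∀ ℓ ∈ Λ.leaves, ∃ p ∈ Λ.leaves, chordMap d p = ℓ) ∧
  (∀ ℓ ∈ Λ.leaves, ¬ (chordMap d ℓ).IsDiag →
    ∃ s : Fin d → Chord, (∃ i, s i = ℓ) ∧ (∀ i, s i ∈ Λ.leaves) ∧
      Function.Injective s ∧
      (∀ i j, i ≠ j → chordSet (s i) ∩ chordSet (s j) = ∅) ∧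
      (∀ i, chordMap d (s i) = chordMap d ℓ))

/-- A lamination is nonempty if it has a nondegenerate leaf. -/
def Lamination.NonemptyLam (Λ : Lamination) : Prop := ∃ ℓ ∈ Λ.leaves, ¬ ℓ.IsDiag

/-- A gap of `Λ`: the closure of a connected component of `D ∖ Λ⁺`. -/
def IsGap (Λ : Lamination) (G : Set ℂ) : Prop :=
  ∃ x ∈ openDisk \ Λ.plus, G = closure (connectedComponentIn (openDisk \ Λ.plus) x)

/-- A finite gap: a gap meeting the circle in finitely many points. -/
def FiniteGap (Λ : Lamination) (G : Set ℂ) : Prop := IsGap Λ G ∧ (G ∩ circleSet).Finite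

/-- `ℓ` is an edge of `G`: a maximal nondegenerate straight segment (with
endpoints on the circle) contained in the boundary of `G`. -/
def IsEdge (G : Set ℂ) (ℓ : Chord) : Prop :=
  ¬ ℓ.IsDiag ∧ chordSet ℓ ⊆ frontier G ∧
    ∀ ℓ' : Chord, chordSet ℓ ⊆ chordSet ℓ' → chordSet ℓ' ⊆ frontier G →
      chordSet ℓ' = chordSet ℓ

/-- `σ_d(G)` for a set `G`: the convex hull of the image of `G ∩ S`. -/
def gapImage (d : ℕ) (G : Set ℂ) : Set ℂ :=
  convexHull ℝ ((fun z : ℂ => z ^ d) '' (G ∩ circleSet))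

/-- A lap of `Λ`: a finite gap, or (the segment of) a nondegenerate leaf not
contained in the boundary of a finite gap. -/
def IsLap (Λ : Lamination) (G : Set ℂ) : Prop :=
  FiniteGap Λ G ∨
    ∃ ℓ ∈ Λ.leaves, ¬ ℓ.IsDiag ∧ G = chordSet ℓ ∧
      ∀ H : Set ℂ, FiniteGap Λ H → ¬ chordSet ℓ ⊆ frontier H

/-- Distance between chords (Hausdorff distance between their segments). -/
def chordDist (c₁ c₂ : Chord) : ℝ := Metric.hausdorffDist (chordSet c₁) (chordSet c₂)

/-- Hausdorff convergence `Λ_i → Λ` of laminations (leaf sets converge in the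
Hausdorff metric on the compact space of chords). -/
def LamTendsto (Λi : ℕ → Lamination) (Λ : Lamination) : Prop :=
  ∀ ε > (0 : ℝ), ∀ᶠ n in atTop,
    (∀ ℓ ∈ (Λi n).leaves, ∃ ℓ' ∈ Λ.leaves, chordDist ℓ ℓ' < ε) ∧
    (∀ ℓ' ∈ Λ.leaves, ∃ ℓ ∈ (Λi n).leaves, chordDist ℓ ℓ' < ε)

/-- An isolated leaf of `Λ`: some neighborhood of it in the space of chords
contains no other leaf of `Λ`. -/
def IsolatedLeaf (Λ : Lamination) (ℓ : Chord) : Prop :=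
  ℓ ∈ Λ.leaves ∧ ∃ ε > (0 : ℝ), ∀ ℓ' ∈ Λ.leaves, chordDist ℓ' ℓ < ε → ℓ' = ℓ

/-- A perfect lamination: no isolated leaves. -/
def Lamination.PerfectLam (Λ : Lamination) : Prop := ∀ ℓ ∈ Λ.leaves, ¬ IsolatedLeaf Λ ℓ

/-- A set of chords closed under limits. -/
def ClosedChordSet (P : Set Chord) : Prop :=
  ∀ f : ℕ → Chord, (∀ n, f n ∈ P) → ∀ c : Chord,
    Tendsto (fun n => chordDist (f n) c) atTop (nhds 0) → c ∈ P

/-- A perfect set of chords: closed and with no isolated points. -/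
def PerfectChordSet (P : Set Chord) : Prop :=
  ClosedChordSet P ∧ ∀ c ∈ P, ∀ ε > (0 : ℝ), ∃ c' ∈ P, c' ≠ c ∧ chordDist c c' < ε

/-- The perfect part `Λᵖ` of `Λ`: the maximal perfect subset of its leaf set. -/
def perfectPart (Λ : Lamination) : Set Chord :=
  ⋃₀ {P : Set Chord | P ⊆ Λ.leaves ∧ PerfectChordSet P}

/-- A countable lamination: countably many nondegenerate leaves. -/
def Lamination.CountableLam (Λ : Lamination) : Prop :=
  {ℓ ∈ Λ.leaves | ¬ ℓ.IsDiag}.Countable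

/-- `Λc` is a chief of `Λ`: a minimal-by-inclusion nonempty sibling
`σ_d`-invariant sublamination of `Λ`. -/
def IsChiefOf (d : ℕ) (Λc Λ : Lamination) : Prop :=
  Λc.leaves ⊆ Λ.leaves ∧ Λc.Invariant d ∧ Λc.NonemptyLam ∧
    ∀ Λ' : Lamination, Λ'.leaves ⊆ Λc.leaves → Λ'.Invariant d → Λ'.NonemptyLam →
      Λ'.leaves = Λc.leaves

/-- A clean lamination: distinct non-disjoint leaves lie on the boundary of a
common finite gap. -/
def Lamination.Clean (Λ : Lamination) : Prop :=
  ∀ ℓ₁ ∈ Λ.leaves, ∀ ℓ₂ ∈ Λ.leaves, ℓ₁ ≠ ℓ₂ → (chordSet ℓ₁ ∩ chordSet ℓ₂).Nonempty →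
    ∃ G : Set ℂ, FiniteGap Λ G ∧ chordSet ℓ₁ ⊆ frontier G ∧ chordSet ℓ₂ ⊆ frontier G

/-- A limit lamination: a sibling `σ_3`-invariant lamination that is a limit of
clean sibling `σ_3`-invariant laminations. -/
def IsLimitLam (Λ : Lamination) : Prop :=
  Λ.Invariant 3 ∧
    ∃ Λi : ℕ → Lamination, (∀ n, (Λi n).Invariant 3 ∧ (Λi n).Clean) ∧ LamTendsto Λi Λ

/-- A chief: a chief of some nonempty limit lamination. -/
def IsChief (Λc : Lamination) : Prop :=
  ∃ Λ : Lamination, IsLimitLam Λ ∧ Λ.NonemptyLam ∧ IsChiefOf 3 Λc Λ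

/-- A `σ_3`-critical chord. -/
def IsCritChord (c : Chord) : Prop := ¬ c.IsDiag ∧ (chordMap 3 c).IsDiag

/-- An unordered pair of chords (candidate critical portrait). -/
abbrev Portrait : Type := Sym2 Chord

/-- A cubic critical portrait: an unordered pair of non-crossing
`σ_3`-critical chords. -/
def IsPortrait (K : Portrait) : Prop :=
  ∃ c y : Chord, K = s(c, y) ∧ IsCritChord c ∧ IsCritChord y ∧ ¬ Cross c y

/-- The space `CrP` of all cubic critical portraits. -/
def CrP : Set Portrait := {K | IsPortrait K}

/-- `I(ℓ)` for a critical chord `ℓ`: the open arc of length 1/3 cut off by `ℓ`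
(the points of the circle strictly separated from the center by `ℓ`). -/
def Iarc (ℓ : Chord) : Set SPt :=
  {z : SPt | (z : ℂ) ∉ chordSet ℓ ∧ (segment ℝ (0 : ℂ) (z : ℂ) ∩ chordSet ℓ).Nonempty}

/-- The forward orbit `{σ_3ⁿ(ℓ) : n ≥ 1}` of a critical chord `ℓ` (each image
is a single point of the circle). -/
def critOrbit (ℓ : Chord) : Set SPt :=
  {z : SPt | ∃ n, 1 ≤ n ∧ ∃ a ∈ ℓ, (sigmaS 3)^[n] a = z}

/-- A weak critical portrait. -/
def IsWeak (K : Portrait) : Prop :=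
  IsPortrait K ∧ ∃ c y : Chord, K = s(c, y) ∧
    (critOrbit c ∩ Iarc y = ∅ ∨ critOrbit y ∩ Iarc c = ∅)

/-- A strong critical portrait. -/
def IsStrong (K : Portrait) : Prop := IsPortrait K ∧ ¬ IsWeak K

/-- Distance between (critical) portraits, metrizing convergence of the
unordered pairs of chords. -/
def portraitDist : Portrait → Portrait → ℝ :=
  Sym2.lift₂ ⟨fun a b c d =>
      min (max (chordDist a c) (chordDist b d)) (max (chordDist a d) (chordDist b c)), by
    intro a₁ a₂ b₁ b₂
    constructor
    · dsimp only
      rw [min_comm, max_comm (chordDist a₁ b₂), max_comm (chordDist a₁ b₁)]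
    · dsimp only
      rw [min_comm]⟩

/-- Convergence `K_i → K` in `CrP`. -/
def PortraitTendsto (f : ℕ → Portrait) (K : Portrait) : Prop :=
  Tendsto (fun n => portraitDist (f n) K) atTop (nhds 0)

/-- A critical portrait is compatible with a lamination if none of its chords
crosses a leaf. -/
def Compat (K : Portrait) (Λ : Lamination) : Prop :=
  ∀ c ∈ K, ∀ ℓ ∈ Λ.leaves, ¬ Cross c ℓ

/-- `C(Λ)`: the set of critical portraits compatible with `Λ`. -/
def CC (Λ : Lamination) : Set Portrait := {K | K ∈ CrP ∧ Compat K Λ}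

/-- Friendship of critical portraits: both compatible with a common nonempty
limit lamination. -/
def Friends (K₁ K₂ : Portrait) : Prop :=
  ∃ Λ : Lamination, IsLimitLam Λ ∧ Λ.NonemptyLam ∧ K₁ ∈ CC Λ ∧ K₂ ∈ CC Λ

/-- A prime critical portrait: some friend of it has a weak friend. -/
def IsPrime (K : Portrait) : Prop :=
  ∃ K' K'' : Portrait, Friends K K' ∧ Friends K' K'' ∧ IsWeak K''

/-- A regular chief: a chief all of whose critical portraits have only strong
friends. -/
def RegularChief (Λ : Lamination) : Prop :=
  IsChief Λ ∧ ∀ K ∈ CC Λ, ∀ K' : Portrait, Friends K K' → IsStrong K'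

/-- A regular lamination: one having a regular chief. -/
def RegularLam (Λ : Lamination) : Prop :=
  ∃ Λc : Lamination, IsChiefOf 3 Λc Λ ∧ RegularChief Λc

/-- A regular critical portrait: one compatible with a regular chief. -/
def RegularPortrait (K : Portrait) : Prop :=
  ∃ Λ : Lamination, RegularChief Λ ∧ K ∈ CC Λ

/-- Rotation of a circle point by angle `2πt`. -/
def rotPt (t : ℝ) (a : SPt) : SPt :=
  ⟨Complex.exp ((t * (2 * Real.pi) : ℝ) * Complex.I) * (a : ℂ), by
    rw [norm_mul, a.2, mul_one, Complex.norm_exp_ofReal_mul_I]⟩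

/-- Circular betweenness: `b` lies on the (closed) counterclockwise arc from
`a` to `c` (and `a`, `b`, `c` occur in this counterclockwise order). -/
def CBtw (a b c : SPt) : Prop :=
  ∃ s t : ℝ, 0 ≤ s ∧ s ≤ t ∧ t < 1 ∧ b = rotPt s a ∧ c = rotPt t a

/-- An invariant gap: a gap `G` of some sibling `σ_3`-invariant lamination
with `σ_3(G) = G`. -/
def IsInvGap (G : Set ℂ) : Prop :=
  ∃ Λ : Lamination, Λ.Invariant 3 ∧ IsGap Λ G ∧ gapImage 3 G = G

/-- An infinite gap (meets the circle in infinitely many points). -/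
def InfiniteGapSet (G : Set ℂ) : Prop := (G ∩ circleSet).Infinite

/-- Two circle points lie in the closure of a common complementary arc of
`G ∩ S` (or coincide): the fibers of the edge-collapsing map of `∂G`. -/
def complArcFiber (G : Set ℂ) (z w : SPt) : Prop :=
  z = w ∨ ∃ x : SPt, (x : ℂ) ∉ G ∧
    z ∈ closure (connectedComponentIn {y : SPt | (y : ℂ) ∉ G} x) ∧
    w ∈ closure (connectedComponentIn {y : SPt | (y : ℂ) ∉ G} x)

/-- A quadratic invariant gap: an infinite invariant gap of degree 2, i.e.
after collapsing the complementary arcs (edges) of its boundary, `σ_3` induces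
a two-to-one covering map of the circle. -/
def QuadGap (G : Set ℂ) : Prop :=
  IsInvGap G ∧ InfiniteGapSet G ∧
    ∃ φ : SPt → SPt, Continuous φ ∧ Function.Surjective φ ∧
      (∀ z w : SPt, φ z = φ w ↔ complArcFiber G z w) ∧
      ∃ g : SPt → SPt, IsCoveringMap g ∧ (∀ w : SPt, Nat.card (g ⁻¹' {w}) = 2) ∧
        ∀ z : SPt, (z : ℂ) ∈ G → φ (sigmaS 3 z) = g (φ z)

/-- A critical portrait is compatible with a gap if none of its chords crosses
an edge of the gap. -/
def CompatGap (K : Portrait) (G : Set ℂ) : Prop :=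
  ∀ c ∈ K, ∀ ℓ : Chord, IsEdge G ℓ → ¬ Cross c ℓ

/-- A set of portraits closed in `CrP`. -/
def ClosedPortraitSet (A : Set Portrait) : Prop :=
  ∀ f : ℕ → Portrait, (∀ n, f n ∈ A) → ∀ K ∈ CrP, PortraitTendsto f K → K ∈ A

/-- A finite rotational lap: a finite lap on which `σ_3` acts as a
combinatorial rotation of the vertices. -/
def RotationalLap (Λ : Lamination) (G : Set ℂ) : Prop :=
  IsLap Λ G ∧ (G ∩ circleSet).Finite ∧ gapImage 3 G = G ∧
    (∀ z : SPt, (z : ℂ) ∈ G → ((sigmaS 3 z : SPt) : ℂ) ∈ G) ∧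
    ∀ a b c : SPt, (a : ℂ) ∈ G → (b : ℂ) ∈ G → (c : ℂ) ∈ G →
      CBtw a b c → CBtw (sigmaS 3 a) (sigmaS 3 b) (sigmaS 3 c)

namespace Stmt6Dev

/-- real inner product on ℂ -/
def ip (z w : ℂ) : ℝ := z.re * w.re + z.im * w.im

lemma ip_comm (z w : ℂ) : ip z w = ip w z := by simp only [ip]; ring

lemma norm_sq_eq (z : ℂ) : ‖z‖ ^ 2 = ip z z := by
  rw [Complex.sq_norm, Complex.normSq_apply]; rfl

lemma norm_eq_one_of_ip {z : ℂ} (h : ip z z = 1) : ‖z‖ = 1 := by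
  have h2 := norm_sq_eq z
  nlinarith [norm_nonneg z]

lemma norm_lt_one_of_ip {z : ℂ} (h : ip z z < 1) : ‖z‖ < 1 := by
  have h2 := norm_sq_eq z
  nlinarith [norm_nonneg z]

lemma ip_unit (z : {z : ℂ // ‖z‖ = 1}) : ip z z = 1 := by
  rw [← norm_sq_eq, z.2]; norm_num

lemma ip_sq_le (z w : ℂ) : (ip z w) ^ 2 ≤ ip z z * ip w w := by
  simp only [ip]; nlinarith [sq_nonneg (z.re * w.im - z.im * w.re)]

lemma abs_ip_le (z w : ℂ) : |ip z w| ≤ ‖z‖ * ‖w‖ := by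
  rw [abs_le]
  constructor <;>
    nlinarith [ip_sq_le z w, norm_sq_eq z, norm_sq_eq w,
      mul_nonneg (norm_nonneg z) (norm_nonneg w), norm_nonneg z, norm_nonneg w]

lemma ip_add_left (x y w : ℂ) : ip (x + y) w = ip x w + ip y w := by simp only [ip, Complex.add_re, Complex.add_im]; ring
lemma ip_add_right (x y w : ℂ) : ip x (y + w) = ip x y + ip x w := by simp only [ip, Complex.add_re, Complex.add_im]; ring
lemma ip_sub_left (x y w : ℂ) : ip (x - y) w = ip x w - ip y w := by simp only [ip, Complex.sub_re, Complex.sub_im]; ring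
lemma ip_sub_right (x y w : ℂ) : ip x (y - w) = ip x y - ip x w := by simp only [ip, Complex.sub_re, Complex.sub_im]; ring
lemma ip_smul_left (r : ℝ) (z w : ℂ) : ip (r • z) w = r * ip z w := by
  simp only [ip, Complex.real_smul, Complex.mul_re, Complex.mul_im, Complex.ofReal_re,
    Complex.ofReal_im]; ring
lemma ip_smul_right (r : ℝ) (z w : ℂ) : ip z (r • w) = r * ip z w := by
  simp only [ip, Complex.real_smul, Complex.mul_re, Complex.mul_im, Complex.ofReal_re,
    Complex.ofReal_im]; ring

lemma mem_seg {x y p : ℂ} :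
    p ∈ segment ℝ x y ↔ ∃ t : ℝ, 0 ≤ t ∧ t ≤ 1 ∧ (1 - t) • x + t • y = p := by
  rw [segment_eq_image]
  constructor
  · rintro ⟨t, ⟨h0, h1⟩, rfl⟩; exact ⟨t, h0, h1, rfl⟩
  · rintro ⟨t, h0, h1, h⟩; exact ⟨t, ⟨h0, h1⟩, h⟩

lemma cross_zero {u1 u2 v1 v2 m1 m2 : ℝ} (h1 : u1*m1 + u2*m2 = 0) (h2 : v1*m1 + v2*m2 = 0)
    (h3 : m1*m1 + m2*m2 = 1) : u1*v2 - u2*v1 = 0 := by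
  linear_combination (m1*v2 - m2*v1)*h1 - (m1*u2 - m2*u1)*h2 - (u1*v2 - u2*v1)*h3

/-- key geometric lemma: points on the chord line inside the disk lie on the chord. -/
lemma seg_mem_of {a b p : ℂ} (ha : ip a a = 1) (hb : ip b b = 1) (hab : ip a b = -(1/2))
    (hp : ip p (a + b) = 1/2) (hpn : ip p p < 1) : p ∈ segment ℝ a b := by
  have hpa : ip p a < 1 := by nlinarith [ip_sq_le p a, sq_nonneg (ip p a - 1)]
  have hpb : ip p b < 1 := by nlinarith [ip_sq_le p b, sq_nonneg (ip p b - 1)]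
  have hsum : ip p a + ip p b = 1/2 := by
    have h := ip_add_right p a b; rw [hp] at h; linarith
  refine mem_seg.mpr ⟨(2 - 2 * ip p a)/3, by linarith, by linarith, ?_⟩
  set τ : ℝ := (2 - 2 * ip p a)/3 with hτ
  have e1' : ip (p - a) (a + b) = 0 := by
    rw [ip_sub_left, hp, ip_add_right]; linarith
  have e2' : ip (b - a) (a + b) = 0 := by
    rw [ip_sub_left, ip_add_right, ip_add_right]
    linarith [ip_comm b a, hab, ha, hb]
  have e3' : ip (a + b) (a + b) = 1 := by
    rw [ip_add_left, ip_add_right, ip_add_right]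
    linarith [ip_comm b a, hab, ha, hb]
  have hdot' : ip (p - a) (b - a) = 3 * τ := by
    rw [ip_sub_left, ip_sub_right, ip_sub_right, hτ]
    linarith [ip_comm b a, hab, ha, hsum]
  have hvv' : ip (b - a) (b - a) = 3 := by
    rw [ip_sub_left, ip_sub_right, ip_sub_right]
    linarith [ip_comm b a, hab, ha, hb]
  have e1 : (p.re - a.re) * (a.re + b.re) + (p.im - a.im) * (a.im + b.im) = 0 := by
    simpa [ip, Complex.sub_re, Complex.sub_im, Complex.add_re, Complex.add_im] using e1'
  have e2 : (b.re - a.re) * (a.re + b.re) + (b.im - a.im) * (a.im + b.im) = 0 := by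
    simpa [ip, Complex.sub_re, Complex.sub_im, Complex.add_re, Complex.add_im] using e2'
  have e3 : (a.re + b.re) * (a.re + b.re) + (a.im + b.im) * (a.im + b.im) = 1 := by
    simpa [ip, Complex.add_re, Complex.add_im] using e3'
  have hdot : (p.re - a.re) * (b.re - a.re) + (p.im - a.im) * (b.im - a.im) = 3 * τ := by
    simpa [ip, Complex.sub_re, Complex.sub_im] using hdot'
  have hvv : (b.re - a.re) * (b.re - a.re) + (b.im - a.im) * (b.im - a.im) = 3 := by
    simpa [ip, Complex.sub_re, Complex.sub_im] using hvv'
  have hcr : (p.re - a.re) * (b.im - a.im) - (p.im - a.im) * (b.re - a.re) = 0 :=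
    cross_zero e1 e2 e3
  have hre : p.re - a.re = τ * (b.re - a.re) := by
    have key : (p.re - a.re) * ((b.re - a.re) * (b.re - a.re) + (b.im - a.im) * (b.im - a.im))
        = ((p.re - a.re) * (b.re - a.re) + (p.im - a.im) * (b.im - a.im)) * (b.re - a.re)
          + ((p.re - a.re) * (b.im - a.im) - (p.im - a.im) * (b.re - a.re)) * (b.im - a.im) := by
      ring
    rw [hvv, hdot, hcr] at key; linarith
  have him : p.im - a.im = τ * (b.im - a.im) := by
    have key : (p.im - a.im) * ((b.re - a.re) * (b.re - a.re) + (b.im - a.im) * (b.im - a.im))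
        = ((p.re - a.re) * (b.re - a.re) + (p.im - a.im) * (b.im - a.im)) * (b.im - a.im)
          - ((p.re - a.re) * (b.im - a.im) - (p.im - a.im) * (b.re - a.re)) * (b.re - a.re) := by
      ring
    rw [hvv, hdot, hcr] at key; linarith
  apply Complex.ext
  · simp only [Complex.add_re, Complex.real_smul, Complex.mul_re, Complex.ofReal_re,
      Complex.ofReal_im, zero_mul, sub_zero]
    linear_combination (-1 : ℝ) * hre
  · simp only [Complex.add_im, Complex.real_smul, Complex.mul_im, Complex.ofReal_re,
      Complex.ofReal_im, zero_mul, add_zero]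
    linear_combination (-1 : ℝ) * him

lemma ip_seg {x y q w : ℂ} (hq : q ∈ segment ℝ x y) :
    ∃ t : ℝ, 0 ≤ t ∧ t ≤ 1 ∧ ip q w = (1-t) * ip x w + t * ip y w := by
  obtain ⟨t, h0, h1, rfl⟩ := mem_seg.mp hq
  exact ⟨t, h0, h1, by rw [ip_add_left, ip_smul_left, ip_smul_left]⟩

lemma chordSet_mk (a b : SPt) : chordSet s(a, b) = segment ℝ (a : ℂ) (b : ℂ) := by
  simp [chordSet]

lemma crit_facts {a b : SPt} (h : IsCritChord s(a, b)) :
    a ≠ b ∧ (a : ℂ) ^ 3 = (b : ℂ) ^ 3 := by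
  obtain ⟨h1, h2⟩ := h
  rw [Sym2.mk_isDiag_iff] at h1
  refine ⟨h1, ?_⟩
  have hm : chordMap 3 s(a, b) = s(sigmaS 3 a, sigmaS 3 b) := Sym2.map_pair_eq _ _ _
  rw [hm, Sym2.mk_isDiag_iff] at h2
  exact congrArg Subtype.val h2

lemma crit_ip {a b : SPt} (hne : a ≠ b) (h3 : (a : ℂ) ^ 3 = (b : ℂ) ^ 3) :
    ip ↑a ↑b = -(1/2) := by
  have hnsb : Complex.normSq (b : ℂ) = 1 := by
    rw [Complex.normSq_eq_norm_sq, b.2]; norm_num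
  have hnsa : Complex.normSq (a : ℂ) = 1 := by
    rw [Complex.normSq_eq_norm_sq, a.2]; norm_num
  set w : ℂ := (a : ℂ) * (starRingEnd ℂ) (b : ℂ) with hw
  have hw3 : w ^ 3 = 1 := by
    rw [hw, mul_pow, ← map_pow, h3, Complex.mul_conj, map_pow, hnsb]
    norm_num
  have hwne : w ≠ 1 := by
    intro hcon
    apply hne
    apply Subtype.ext
    have : (a : ℂ) * ((starRingEnd ℂ) (b : ℂ) * (b : ℂ)) = (b : ℂ) := by
      rw [← mul_assoc, ← hw, hcon, one_mul]
    rwa [mul_comm ((starRingEnd ℂ) (b:ℂ)) (b:ℂ), Complex.mul_conj, hnsb, Complex.ofReal_one,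
      mul_one] at this
  have hq : w ^ 2 + w + 1 = 0 := by
    have hfac : (w - 1) * (w ^ 2 + w + 1) = w ^ 3 - 1 := by ring
    rw [hw3, sub_self] at hfac
    rcases mul_eq_zero.mp hfac with h | h
    · exact absurd (sub_eq_zero.mp h) hwne
    · exact h
  have hns : w.re * w.re + w.im * w.im = 1 := by
    have : Complex.normSq w = 1 := by
      rw [hw, Complex.normSq_mul, Complex.normSq_conj, hnsa, hnsb]; norm_num
    rw [← Complex.normSq_apply]; exact this
  have hqim : w.im * (2 * w.re + 1) = 0 := by
    have h0 := congrArg Complex.im hq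
    simp only [Complex.add_im, Complex.one_im, Complex.zero_im, pow_two, Complex.mul_im] at h0
    linear_combination h0
  have hqre : w.re * w.re - w.im * w.im + w.re + 1 = 0 := by
    have h0 := congrArg Complex.re hq
    simp only [Complex.add_re, Complex.one_re, Complex.zero_re, pow_two, Complex.mul_re] at h0
    linear_combination h0
  have hre : w.re = -(1/2) := by
    rcases mul_eq_zero.mp hqim with h | h
    · nlinarith
    · linarith
  have : ip ↑a ↑b = w.re := by
    simp only [ip, hw, Complex.mul_re, Complex.conj_re, Complex.conj_im]
    ring
  rw [this, hre]

lemma ip_m_unit {a b : SPt} (hab : ip ↑a ↑b = -(1/2)) :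
    ip ((a : ℂ) + b) ((a : ℂ) + b) = 1 := by
  rw [ip_add_left, ip_add_right, ip_add_right]
  linarith [ip_comm (b : ℂ) a, ip_unit a, ip_unit b]

lemma ip_chord_pt {a b : SPt} (hab : ip ↑a ↑b = -(1/2)) {q : ℂ}
    (hq : q ∈ segment ℝ (a : ℂ) (b : ℂ)) : ip q ((a : ℂ) + b) = 1/2 := by
  obtain ⟨t, _, _, h⟩ := ip_seg (w := (a : ℂ) + b) hq
  have ha' : ip ↑a ((a : ℂ) + b) = 1/2 := by rw [ip_add_right]; linarith [ip_unit a]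
  have hb' : ip ↑b ((a : ℂ) + b) = 1/2 := by
    rw [ip_add_right]; linarith [ip_unit b, ip_comm (b : ℂ) a]
  rw [ha', hb'] at h; linarith [h]

lemma iarc_iff {u v : SPt} (huv : ip ↑u ↑v = -(1/2)) (z : SPt) :
    z ∈ Iarc s(u, v) ↔ 1/2 < ip ↑z ((u : ℂ) + v) := by
  constructor
  · rintro ⟨hz1, p, hp1, hp2⟩
    rw [chordSet_mk] at hz1 hp2
    obtain ⟨t, h0, h1, heq⟩ := mem_seg.mp hp1
    rw [smul_zero, zero_add] at heq
    have hip : ip p ((u : ℂ) + v) = 1/2 := ip_chord_pt huv hp2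
    rw [← heq, ip_smul_left] at hip
    have ht0 : 0 < t := by
      rcases lt_or_eq_of_le h0 with h | h
      · exact h
      · exfalso; rw [← h, zero_mul] at hip; norm_num at hip
    have hge : 1/2 ≤ ip ↑z ((u : ℂ) + v) := by nlinarith
    rcases lt_or_eq_of_le hge with h | h
    · exact h
    · exfalso
      have ht1 : t = 1 := by nlinarith
      rw [ht1, one_smul] at heq
      rw [← heq] at hp2
      exact hz1 hp2
  · intro h
    have hpos : 0 < ip ↑z ((u : ℂ) + v) := by linarith
    set t : ℝ := 1 / (2 * ip ↑z ((u : ℂ) + v)) with ht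
    have ht0 : 0 < t := by positivity
    have ht1 : t < 1 := by rw [ht]; rw [div_lt_one (by positivity)]; linarith
    refine ⟨?_, t • (z : ℂ), ?_, ?_⟩
    · rw [chordSet_mk]
      intro hzc
      have := ip_chord_pt huv hzc
      linarith
    · exact mem_seg.mpr ⟨t, le_of_lt ht0, le_of_lt ht1, by rw [smul_zero, zero_add]⟩
    · rw [chordSet_mk]
      apply seg_mem_of (ip_unit u) (ip_unit v) huv
      · rw [ip_smul_left, ht]; field_simp
      · rw [ip_smul_left, ip_smul_right, ip_unit z]
        nlinarith

lemma not_cross_of_lt {a b u v : SPt} (hab : ip ↑a ↑b = -(1/2))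
    (hu : ip ↑u ((a : ℂ) + b) < 1/2) (hv : ip ↑v ((a : ℂ) + b) < 1/2) :
    ¬ Cross s(a, b) s(u, v) := by
  rintro ⟨-, q, ⟨hq1, hq2⟩, -⟩
  rw [chordSet_mk] at hq1 hq2
  have h1 := ip_chord_pt hab hq1
  obtain ⟨t, h0, h1', hq⟩ := ip_seg (w := (a : ℂ) + b) hq2
  have e1 : (1-t) * ip (↑u) ((a:ℂ) + b) ≤ (1-t) * (1/2) :=
    mul_le_mul_of_nonneg_left (le_of_lt hu) (by linarith)
  rw [h1] at hq
  rcases lt_or_eq_of_le h0 with ht | ht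
  · have e2 : t * ip (↑v) ((a:ℂ) + b) < t * (1/2) :=
      mul_lt_mul_of_pos_left hv ht
    linarith
  · rw [← ht] at hq
    simp at hq
    linarith

lemma crp_dichotomy {a b u v : SPt} (hab : ip ↑a ↑b = -(1/2)) (huv : ip ↑u ↑v = -(1/2))
    (hnc : ¬ Cross s(a, b) s(u, v)) :
    s(a, b) = s(u, v) ∨ ip ((a : ℂ) + b) ((u : ℂ) + v) ≤ -(1/2) := by
  by_contra hcon
  push_neg at hcon
  obtain ⟨hne, hgt⟩ := hcon
  apply hnc
  set g : ℝ := ip ((a : ℂ) + b) ((u : ℂ) + v) with hgdef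
  have hg1 : g ≤ 1 := by
    have h := abs_ip_le ((a : ℂ) + b) ((u : ℂ) + v)
    rw [norm_eq_one_of_ip (ip_m_unit hab), norm_eq_one_of_ip (ip_m_unit huv), one_mul] at h
    have := abs_le.mp h
    linarith [this.2]
  have hg : -(1/2) < g := hgt
  set lam : ℝ := 1 / (2 * (1 + g)) with hlam
  have h1g : (0:ℝ) < 1 + g := by linarith
  set q : ℂ := lam • (((a : ℂ) + b) + ((u : ℂ) + v)) with hqdef
  have hq1 : ip q ((a : ℂ) + b) = 1/2 := by
    rw [hqdef, ip_smul_left, ip_add_left, ip_m_unit hab, ip_comm ((u:ℂ)+v) ((a:ℂ)+b), ← hgdef,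
      hlam]
    field_simp
  have hq2 : ip q ((u : ℂ) + v) = 1/2 := by
    rw [hqdef, ip_smul_left, ip_add_left, ip_m_unit huv, ← hgdef, hlam]
    field_simp
    ring
  have hqq : ip q q < 1 := by
    have hgex : g = ip ↑a ↑u + ip ↑a ↑v + ip ↑b ↑u + ip ↑b ↑v := by
      rw [hgdef]; simp only [ip_add_left, ip_add_right]; ring
    have hSS : ip (((a:ℂ)+b) + ((u:ℂ)+v)) (((a:ℂ)+b) + ((u:ℂ)+v)) = 2 + 2 * g := by
      simp only [ip_add_left, ip_add_right]
      linarith [hgex, ip_unit a, ip_unit b, ip_unit u, ip_unit v, hab, huv,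
        ip_comm (b:ℂ) a, ip_comm (u:ℂ) a, ip_comm (u:ℂ) b, ip_comm (v:ℂ) a,
        ip_comm (v:ℂ) b, ip_comm (v:ℂ) u]
    have : ip q q = lam * (lam * (2 + 2*g)) := by
      rw [hqdef, ip_smul_left, ip_smul_right, hSS]
    rw [this, hlam]
    rw [div_mul_eq_mul_div, one_mul, div_mul_eq_mul_div, div_div]
    rw [div_lt_one (by positivity)]
    nlinarith
  refine ⟨hne, q, ⟨⟨?_, ?_⟩, ?_⟩⟩
  · rw [chordSet_mk]; exact seg_mem_of (ip_unit a) (ip_unit b) hab hq1 hqq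
  · rw [chordSet_mk]; exact seg_mem_of (ip_unit u) (ip_unit v) huv hq2 hqq
  · show q ∈ Metric.ball (0 : ℂ) 1
    rw [Metric.mem_ball, dist_zero_right]
    exact norm_lt_one_of_ip hqq

lemma sigma_iter (n : ℕ) (w : SPt) : (((sigmaS 3)^[n] w : SPt) : ℂ) = (w : ℂ) ^ (3 ^ n) := by
  induction n with
  | zero => simp
  | succ k ih =>
    rw [Function.iterate_succ_apply']
    have hs : ∀ x : SPt, ((sigmaS 3 x : SPt) : ℂ) = (x : ℂ) ^ 3 := fun _ => rfl
    rw [hs, ih, ← pow_mul, ← pow_succ]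

lemma pow_cube_eq {x y : ℂ} (h : x ^ 3 = y ^ 3) {n : ℕ} (hn : 1 ≤ n) :
    x ^ (3 ^ n) = y ^ (3 ^ n) := by
  obtain ⟨m, rfl⟩ : ∃ m, n = m + 1 := ⟨n - 1, by omega⟩
  have h3 : (3:ℕ) ^ (m + 1) = 3 * 3 ^ m := by rw [pow_succ]; ring
  rw [h3, pow_mul, pow_mul, h]

lemma mem_critOrbit {a b : SPt} (z : SPt) (N : ℕ) (hN : 1 ≤ N)
    (hz : (z : ℂ) = (a : ℂ) ^ (3 ^ N)) : z ∈ critOrbit s(a, b) :=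
  ⟨N, hN, a, Sym2.mem_mk_left a b, Subtype.ext (by rw [sigma_iter]; exact hz.symm)⟩

lemma critOrbit_elim {a b : SPt} (h3 : (a : ℂ) ^ 3 = (b : ℂ) ^ 3) {z : SPt}
    (hz : z ∈ critOrbit s(a, b)) : ∃ N, 1 ≤ N ∧ (z : ℂ) = (a : ℂ) ^ (3 ^ N) := by
  obtain ⟨n, hn, e, he, hiter⟩ := hz
  refine ⟨n, hn, ?_⟩
  rcases Sym2.mem_iff.mp he with rfl | rfl
  · rw [← hiter, sigma_iter]
  · rw [← hiter, sigma_iter, pow_cube_eq h3.symm hn]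

lemma not_weak_mk {c y : Chord} (h1 : (critOrbit c ∩ Iarc y).Nonempty)
    (h2 : (critOrbit y ∩ Iarc c).Nonempty) : ¬ IsWeak s(c, y) := by
  rintro ⟨-, c', y', heq, hd⟩
  rcases Sym2.eq_iff.mp heq with ⟨rfl, rfl⟩ | ⟨h3, h4⟩
  · rcases hd with h | h
    · exact h1.ne_empty h
    · exact h2.ne_empty h
  · subst h3; subst h4
    rcases hd with h | h
    · exact h2.ne_empty h
    · exact h1.ne_empty h

lemma strong_elim {c y : Chord} (hP : IsPortrait s(c, y)) (hnw : ¬ IsWeak s(c, y)) :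
    (critOrbit c ∩ Iarc y).Nonempty ∧ (critOrbit y ∩ Iarc c).Nonempty := by
  constructor
  · by_contra h
    rw [Set.not_nonempty_iff_eq_empty] at h
    exact hnw ⟨hP, c, y, rfl, Or.inl h⟩
  · by_contra h
    rw [Set.not_nonempty_iff_eq_empty] at h
    exact hnw ⟨hP, c, y, rfl, Or.inr h⟩

lemma isBounded_seg (x y : ℂ) : Bornology.IsBounded (segment ℝ x y) := by
  rw [segment_eq_image]
  exact (isCompact_Icc.image (by continuity)).isBounded

lemma comb_dist (x y x' y' : ℂ) (t : ℝ) (h0 : 0 ≤ t) (h1 : t ≤ 1) :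
    dist ((1-t) • x + t • y) ((1-t) • x' + t • y') ≤ max (dist x x') (dist y y') := by
  rw [dist_eq_norm]
  have heq : ((1-t) • x + t • y) - ((1-t) • x' + t • y') = (1-t) • (x - x') + t • (y - y') := by
    simp only [Complex.real_smul]; push_cast; ring
  rw [heq]
  have hb := norm_add_le ((1-t) • (x - x')) (t • (y - y'))
  rw [norm_smul, norm_smul, Real.norm_of_nonneg (by linarith : (0:ℝ) ≤ 1 - t),
    Real.norm_of_nonneg h0] at hb
  rw [dist_eq_norm, dist_eq_norm]
  have hmax1 : ‖x - x'‖ ≤ max ‖x - x'‖ ‖y - y'‖ := le_max_left _ _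
  have hmax2 : ‖y - y'‖ ≤ max ‖x - x'‖ ‖y - y'‖ := le_max_right _ _
  nlinarith [norm_nonneg (x - x'), norm_nonneg (y - y')]

lemma chordDist_le {a b a' b' : SPt} :
    chordDist s(a, b) s(a', b') ≤ max (dist (a : ℂ) a') (dist (b : ℂ) b') := by
  show Metric.hausdorffDist _ _ ≤ _
  rw [chordSet_mk, chordSet_mk]
  apply Metric.hausdorffDist_le_of_mem_dist
  · exact le_trans dist_nonneg (le_max_left _ _)
  · intro x hx
    obtain ⟨t, h0, h1, rfl⟩ := mem_seg.mp hx
    exact ⟨(1-t) • (a' : ℂ) + t • (b' : ℂ), mem_seg.mpr ⟨t, h0, h1, rfl⟩,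
      comb_dist _ _ _ _ t h0 h1⟩
  · intro x hx
    obtain ⟨t, h0, h1, rfl⟩ := mem_seg.mp hx
    refine ⟨(1-t) • (a : ℂ) + t • (b : ℂ), mem_seg.mpr ⟨t, h0, h1, rfl⟩, ?_⟩
    have := comb_dist (a':ℂ) (b':ℂ) (a:ℂ) (b:ℂ) t h0 h1
    rw [dist_comm ((a':ℂ)) (a:ℂ), dist_comm ((b':ℂ)) (b:ℂ)] at this
    exact this

lemma pow_dist_le {x y : ℂ} (hx : ‖x‖ = 1) (hy : ‖y‖ = 1) (k : ℕ) :
    dist (x ^ k) (y ^ k) ≤ k * dist x y := by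
  induction k with
  | zero => simp
  | succ n ih =>
    simp only [dist_eq_norm] at *
    have hsplit : x ^ (n+1) - y ^ (n+1) = x ^ n * (x - y) + (x ^ n - y ^ n) * y := by ring
    calc ‖x ^ (n+1) - y ^ (n+1)‖ = ‖x ^ n * (x - y) + (x ^ n - y ^ n) * y‖ := by rw [hsplit]
    _ ≤ ‖x ^ n * (x - y)‖ + ‖(x ^ n - y ^ n) * y‖ := norm_add_le _ _
    _ = ‖x - y‖ + ‖x ^ n - y ^ n‖ := by
        rw [norm_mul, norm_mul, norm_pow, hx, hy, one_pow, one_mul, mul_one]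
    _ ≤ ‖x - y‖ + n * ‖x - y‖ := by linarith
    _ = (↑(n+1) : ℝ) * ‖x - y‖ := by push_cast; ring

lemma portraitDist_mk (c y c' y' : Chord) :
    portraitDist s(c, y) s(c', y') =
      min (max (chordDist c c') (chordDist y y')) (max (chordDist c y') (chordDist y c')) :=
  Sym2.lift₂_mk _ c y c' y'

lemma near_endpoint {a b : SPt} (hab : ip ↑a ↑b = -(1/2)) {x q : ℂ} (hx : ‖x‖ = 1)
    (hq : q ∈ segment ℝ (a : ℂ) (b : ℂ)) {ε : ℝ} (hε0 : 0 < ε) (hεle : ε ≤ 1/4)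
    (hd : dist x q < ε) : dist x ↑a < 4*ε ∨ dist x ↑b < 4*ε := by
  obtain ⟨s, h0, h1, hqe⟩ := mem_seg.mp hq
  have hqn : 1 - ε ≤ ‖q‖ := by
    have h2 : ‖x‖ - ‖q‖ ≤ ‖x - q‖ := norm_sub_norm_le x q
    rw [hx] at h2
    rw [dist_eq_norm] at hd
    linarith
  have hqq : ip q q = 1 - 3*(s*(1-s)) := by
    rw [← hqe]
    simp only [ip_add_left, ip_add_right, ip_smul_left, ip_smul_right]
    rw [ip_comm (↑b) (↑a), hab, ip_unit a, ip_unit b]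
    ring
  have h3s : 3*(s*(1-s)) ≤ 2*ε := by
    have hq2 := norm_sq_eq q
    nlinarith [norm_nonneg q]
  have hvv : ip ((b:ℂ) - ↑a) ((b:ℂ) - ↑a) = 3 := by
    rw [ip_sub_left, ip_sub_right, ip_sub_right]
    linarith [ip_comm (↑b : ℂ) (↑a), hab, ip_unit a, ip_unit b]
  have hba : ‖(b:ℂ) - ↑a‖ ≤ 2 := by
    nlinarith [norm_sq_eq ((b:ℂ) - ↑a), norm_nonneg ((b:ℂ) - ↑a)]
  by_cases hs : s ≤ 1/2
  · left
    have hs4 : s ≤ 4*ε/3 := by nlinarith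
    have hqa : dist q ↑a ≤ 2*s := by
      have he : q - ↑a = s • ((b:ℂ) - ↑a) := by
        rw [← hqe]; simp only [Complex.real_smul]; push_cast; ring
      rw [dist_eq_norm, he, norm_smul, Real.norm_of_nonneg h0]
      nlinarith
    calc dist x ↑a ≤ dist x q + dist q ↑a := dist_triangle _ _ _
      _ < ε + 2*s := by linarith
      _ ≤ ε + 8*ε/3 := by linarith
      _ < 4*ε := by linarith
  · right
    push_neg at hs
    have hs4 : 1 - s ≤ 4*ε/3 := by nlinarith
    have hqb : dist q ↑b ≤ 2*(1-s) := by
      have he : q - ↑b = (1-s) • ((a:ℂ) - ↑b) := by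
        rw [← hqe]; simp only [Complex.real_smul]; push_cast; ring
      have hvv' : ‖(a:ℂ) - ↑b‖ ≤ 2 := by
        have : ‖(a:ℂ) - ↑b‖ = ‖(b:ℂ) - ↑a‖ := by rw [norm_sub_rev]
        linarith
      rw [dist_eq_norm, he, norm_smul, Real.norm_of_nonneg (by linarith : (0:ℝ) ≤ 1 - s)]
      nlinarith
    calc dist x ↑b ≤ dist x q + dist q ↑b := dist_triangle _ _ _
      _ < ε + 2*(1-s) := by linarith
      _ ≤ ε + 8*ε/3 := by linarith
      _ < 4*ε := by linarith

lemma seg_edist_ne_top (a b u v : SPt) :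
    EMetric.hausdorffEdist (segment ℝ (a:ℂ) (b:ℂ)) (segment ℝ (u:ℂ) (v:ℂ)) ≠ ⊤ :=
  Metric.hausdorffEdist_ne_top_of_nonempty_of_bounded ⟨_, left_mem_segment ℝ _ _⟩
    ⟨_, left_mem_segment ℝ _ _⟩ (isBounded_seg _ _) (isBounded_seg _ _)

lemma endpoint_of_chordDist {a b a' b' : SPt} (hab : ip ↑a ↑b = -(1/2)) {ε : ℝ}
    (hε0 : 0 < ε) (hεle : ε ≤ 1/4) (hlt : chordDist s(a', b') s(a, b) < ε) (x : SPt)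
    (hx : x = a' ∨ x = b') : dist (x:ℂ) ↑a < 4*ε ∨ dist (x:ℂ) ↑b < 4*ε := by
  have hH : Metric.hausdorffDist (segment ℝ (a':ℂ) (b':ℂ)) (segment ℝ (a:ℂ) (b:ℂ)) < ε := by
    rw [← chordSet_mk a' b', ← chordSet_mk a b]
    exact hlt
  have hmem : (x:ℂ) ∈ segment ℝ (a':ℂ) (b':ℂ) := by
    rcases hx with rfl | rfl
    · exact left_mem_segment ℝ _ _
    · exact right_mem_segment ℝ _ _
  obtain ⟨qq, hqq, hdq⟩ :=
    Metric.exists_dist_lt_of_hausdorffDist_lt hmem hH (seg_edist_ne_top a' b' a b)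
  exact near_endpoint hab x.2 hqq hε0 hεle hdq

lemma orbit_stable {a b u v a' b' u' v' : SPt}
    (hab : ip ↑a ↑b = -(1/2)) (h3ab : (a:ℂ)^3 = (b:ℂ)^3)
    (huv : ip ↑u ↑v = -(1/2)) (hu'v' : ip ↑u' ↑v' = -(1/2))
    {N : ℕ} (hN : 1 ≤ N) {ε : ℝ} (hε0 : 0 < ε) (hεle : ε ≤ 1/100)
    (hmargin : 1/2 + (4*(3:ℝ)^N + 8) * ε < ip ((a:ℂ)^(3^N)) ((u:ℂ) + v))
    (hc : chordDist s(a', b') s(a, b) < ε) (hy : chordDist s(u', v') s(u, v) < ε) :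
    (critOrbit s(a', b') ∩ Iarc s(u', v')).Nonempty := by
  have hεle4 : ε ≤ 1/4 := by linarith
  have ha' := endpoint_of_chordDist hab hε0 hεle4 hc a' (Or.inl rfl)
  have hu'c := endpoint_of_chordDist huv hε0 hεle4 hy u' (Or.inl rfl)
  have hv'c := endpoint_of_chordDist huv hε0 hεle4 hy v' (Or.inr rfl)
  have hpownn : (0:ℝ) ≤ (3:ℝ)^N := by positivity
  have hpow : dist ((a':ℂ)^(3^N)) ((a:ℂ)^(3^N)) ≤ (3:ℝ)^N * (4*ε) := by
    rcases ha' with h | h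
    · calc dist ((a':ℂ)^(3^N)) ((a:ℂ)^(3^N)) ≤ ((3^N : ℕ):ℝ) * dist (a':ℂ) ↑a :=
          pow_dist_le a'.2 a.2 _
        _ ≤ (3:ℝ)^N * (4*ε) := by
          push_cast
          exact mul_le_mul_of_nonneg_left (le_of_lt h) hpownn
    · have hba : ((b:ℂ))^(3^N) = (a:ℂ)^(3^N) := pow_cube_eq h3ab.symm hN
      calc dist ((a':ℂ)^(3^N)) ((a:ℂ)^(3^N)) = dist ((a':ℂ)^(3^N)) ((b:ℂ)^(3^N)) := by
            rw [hba]
        _ ≤ ((3^N : ℕ):ℝ) * dist (a':ℂ) ↑b := pow_dist_le a'.2 b.2 _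
        _ ≤ (3:ℝ)^N * (4*ε) := by
          push_cast
          exact mul_le_mul_of_nonneg_left (le_of_lt h) hpownn
  have hm' : ‖((u':ℂ) + ↑v') - ((u:ℂ) + ↑v)‖ < 8 * ε := by
    have hdist : ¬ (dist (u':ℂ) (v':ℂ) < 1) := by
      intro hcon
      have huvv : ip ((u':ℂ) - ↑v') ((u':ℂ) - ↑v') = 3 := by
        rw [ip_sub_left, ip_sub_right, ip_sub_right]
        linarith [ip_comm (↑v' : ℂ) (↑u'), hu'v', ip_unit u', ip_unit v']
      rw [dist_eq_norm] at hcon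
      nlinarith [norm_sq_eq ((u':ℂ) - ↑v'), norm_nonneg ((u':ℂ) - ↑v')]
    rcases hu'c with h1 | h1 <;> rcases hv'c with h2 | h2
    · exfalso
      apply hdist
      calc dist (u':ℂ) (v':ℂ) ≤ dist (u':ℂ) ↑u + dist (↑u:ℂ) ↑v' := dist_triangle _ _ _
        _ = dist (u':ℂ) ↑u + dist (v':ℂ) ↑u := by rw [dist_comm (↑u:ℂ) ↑v']
        _ < 4*ε + 4*ε := by linarith
        _ < 1 := by linarith
    · have he : ((u':ℂ) + ↑v') - ((u:ℂ) + ↑v) = ((u':ℂ) - ↑u) + ((v':ℂ) - ↑v) := by ring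
      rw [he]
      rw [dist_eq_norm] at h1 h2
      calc ‖((u':ℂ) - ↑u) + ((v':ℂ) - ↑v)‖ ≤ ‖(u':ℂ) - ↑u‖ + ‖(v':ℂ) - ↑v‖ := norm_add_le _ _
        _ < 8 * ε := by linarith
    · have he : ((u':ℂ) + ↑v') - ((u:ℂ) + ↑v) = ((u':ℂ) - ↑v) + ((v':ℂ) - ↑u) := by ring
      rw [he]
      rw [dist_eq_norm] at h1 h2
      calc ‖((u':ℂ) - ↑v) + ((v':ℂ) - ↑u)‖ ≤ ‖(u':ℂ) - ↑v‖ + ‖(v':ℂ) - ↑u‖ := norm_add_le _ _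
        _ < 8 * ε := by linarith
    · exfalso
      apply hdist
      calc dist (u':ℂ) (v':ℂ) ≤ dist (u':ℂ) ↑v + dist (↑v:ℂ) ↑v' := dist_triangle _ _ _
        _ = dist (u':ℂ) ↑v + dist (v':ℂ) ↑v := by rw [dist_comm (↑v:ℂ) ↑v']
        _ < 4*ε + 4*ε := by linarith
        _ < 1 := by linarith
  refine ⟨⟨(a':ℂ)^(3^N), by rw [norm_pow, a'.2, one_pow]⟩,
    mem_critOrbit _ N hN rfl, ?_⟩
  rw [iarc_iff hu'v']
  show 1/2 < ip ((a':ℂ)^(3^N)) ((u':ℂ) + ↑v')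
  have hXm : |ip ((a':ℂ)^(3^N) - (a:ℂ)^(3^N)) ((u:ℂ) + ↑v)| ≤ (3:ℝ)^N*(4*ε) := by
    have h := abs_ip_le ((a':ℂ)^(3^N) - (a:ℂ)^(3^N)) ((u:ℂ) + ↑v)
    rw [norm_eq_one_of_ip (ip_m_unit huv), mul_one, ← dist_eq_norm] at h
    linarith
  have hXm2 : |ip ((a':ℂ)^(3^N)) (((u':ℂ) + ↑v') - ((u:ℂ) + ↑v))| ≤ 8*ε := by
    have h := abs_ip_le ((a':ℂ)^(3^N)) (((u':ℂ) + ↑v') - ((u:ℂ) + ↑v))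
    have hn1 : ‖(a':ℂ)^(3^N)‖ = 1 := by rw [norm_pow, a'.2, one_pow]
    rw [hn1, one_mul] at h
    linarith
  have hexp : ip ((a':ℂ)^(3^N)) ((u':ℂ) + ↑v')
      = ip ((a:ℂ)^(3^N)) ((u:ℂ) + ↑v) + ip ((a':ℂ)^(3^N) - (a:ℂ)^(3^N)) ((u:ℂ) + ↑v)
        + ip ((a':ℂ)^(3^N)) (((u':ℂ) + ↑v') - ((u:ℂ) + ↑v)) := by
    rw [ip_sub_left, ip_sub_right]; ring
  have habs1 := (abs_le.mp hXm).1
  have habs2 := (abs_le.mp hXm2).1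
  linarith

lemma strong_open : ∀ K : Portrait, IsStrong K →
    ∃ ε > (0 : ℝ), ∀ K' ∈ CrP, portraitDist K' K < ε → IsStrong K' := by
  intro K hK
  obtain ⟨hP, hnw⟩ := hK
  obtain ⟨c, y, rfl, hcc, hcy, hncr⟩ := hP
  obtain ⟨a, b, rfl⟩ : ∃ a b : SPt, c = s(a, b) := by
    induction c using Sym2.ind with | _ x y => exact ⟨x, y, rfl⟩
  obtain ⟨u, v, rfl⟩ : ∃ u v : SPt, y = s(u, v) := by
    induction y using Sym2.ind with | _ x y => exact ⟨x, y, rfl⟩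
  have h3ab := (crit_facts hcc).2
  have h3uv := (crit_facts hcy).2
  have hab := crit_ip (crit_facts hcc).1 h3ab
  have huv := crit_ip (crit_facts hcy).1 h3uv
  have hPfull : IsPortrait s(s(a,b), s(u,v)) := ⟨_, _, rfl, hcc, hcy, hncr⟩
  obtain ⟨hne1, hne2⟩ := strong_elim hPfull hnw
  obtain ⟨z1, hz1o, hz1i⟩ := hne1
  obtain ⟨N, hN, hz1eq⟩ := critOrbit_elim h3ab hz1o
  have hz1ip : 1/2 < ip ((a:ℂ)^(3^N)) ((u:ℂ) + ↑v) := by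
    rw [← hz1eq]; exact ((iarc_iff huv z1).mp hz1i)
  obtain ⟨z2, hz2o, hz2i⟩ := hne2
  obtain ⟨M, hM, hz2eq⟩ := critOrbit_elim h3uv hz2o
  have hz2ip : 1/2 < ip ((u:ℂ)^(3^M)) ((a:ℂ) + ↑b) := by
    rw [← hz2eq]; exact ((iarc_iff hab z2).mp hz2i)
  set I1 : ℝ := ip ((a:ℂ)^(3^N)) ((u:ℂ) + ↑v) with hI1
  set I2 : ℝ := ip ((u:ℂ)^(3^M)) ((a:ℂ) + ↑b) with hI2
  have hd1 : (0:ℝ) < 4*(3:ℝ)^N + 9 := by positivity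
  have hd2 : (0:ℝ) < 4*(3:ℝ)^M + 9 := by positivity
  set ε : ℝ := min (min ((I1 - 1/2) / (4*(3:ℝ)^N + 9)) ((I2 - 1/2) / (4*(3:ℝ)^M + 9)))
    (1/100) with hεdef
  have hε0 : 0 < ε := by
    apply lt_min
    · exact lt_min (div_pos (by linarith) hd1) (div_pos (by linarith) hd2)
    · norm_num
  have hεle : ε ≤ 1/100 := min_le_right _ _
  have hm1 : 1/2 + (4*(3:ℝ)^N + 8) * ε < I1 := by
    have h1 : ε ≤ (I1 - 1/2) / (4*(3:ℝ)^N + 9) := le_trans (min_le_left _ _) (min_le_left _ _)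
    have h2 : ε * (4*(3:ℝ)^N + 9) ≤ I1 - 1/2 := by
      rw [← le_div_iff₀ hd1]; exact h1
    nlinarith
  have hm2 : 1/2 + (4*(3:ℝ)^M + 8) * ε < I2 := by
    have h1 : ε ≤ (I2 - 1/2) / (4*(3:ℝ)^M + 9) := le_trans (min_le_left _ _) (min_le_right _ _)
    have h2 : ε * (4*(3:ℝ)^M + 9) ≤ I2 - 1/2 := by
      rw [← le_div_iff₀ hd2]; exact h1
    nlinarith
  refine ⟨ε, hε0, ?_⟩
  intro K' hK' hdist
  obtain ⟨c', y', rfl, hcc', hcy', hncr'⟩ := hK'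
  obtain ⟨a', b', rfl⟩ : ∃ x1 x2 : SPt, c' = s(x1, x2) := by
    induction c' using Sym2.ind with | _ x1 x2 => exact ⟨x1, x2, rfl⟩
  obtain ⟨u', v', rfl⟩ : ∃ x1 x2 : SPt, y' = s(x1, x2) := by
    induction y' using Sym2.ind with | _ x1 x2 => exact ⟨x1, x2, rfl⟩
  have ha'b' := crit_ip (crit_facts hcc').1 (crit_facts hcc').2
  have hu'v' := crit_ip (crit_facts hcy').1 (crit_facts hcy').2
  rw [portraitDist_mk] at hdist
  have hPfull' : IsPortrait s(s(a',b'), s(u',v')) := ⟨_, _, rfl, hcc', hcy', hncr'⟩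
  rcases min_lt_iff.mp hdist with hcase | hcase
  · obtain ⟨h1, h2⟩ := max_lt_iff.mp hcase
    have s1 := orbit_stable hab h3ab huv hu'v' hN hε0 hεle hm1 h1 h2
    have s2 := orbit_stable huv h3uv hab ha'b' hM hε0 hεle hm2 h2 h1
    exact ⟨hPfull', not_weak_mk s1 s2⟩
  · obtain ⟨h1, h2⟩ := max_lt_iff.mp hcase
    have s1 := orbit_stable huv h3uv hab hu'v' hM hε0 hεle hm2 h1 h2
    have s2 := orbit_stable hab h3ab huv ha'b' hN hε0 hεle hm1 h2 h1
    exact ⟨hPfull', not_weak_mk s1 s2⟩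

def ee (t : ℝ) : ℂ := Complex.exp ((2 * Real.pi * t : ℝ) * Complex.I)

lemma ee_norm (t : ℝ) : ‖ee t‖ = 1 := by
  rw [ee]; exact Complex.norm_exp_ofReal_mul_I _

lemma ee_add (s t : ℝ) : ee (s + t) = ee s * ee t := by
  rw [ee, ee, ee, ← Complex.exp_add]; congr 1; push_cast; ring

lemma ee_int (k : ℤ) : ee k = 1 := by
  rw [ee]
  convert Complex.exp_int_mul_two_pi_mul_I k using 2
  push_cast; ring

lemma ee_add_int (t : ℝ) (k : ℤ) : ee (t + k) = ee t := by
  rw [ee_add, ee_int, mul_one]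

lemma ee_re (t : ℝ) : (ee t).re = Real.cos (2 * Real.pi * t) := Complex.exp_ofReal_mul_I_re _
lemma ee_im (t : ℝ) : (ee t).im = Real.sin (2 * Real.pi * t) := Complex.exp_ofReal_mul_I_im _

lemma ee_pow (t : ℝ) (n : ℕ) : (ee t) ^ n = ee (n * t) := by
  rw [ee, ee, ← Complex.exp_nat_mul]; congr 1; push_cast; ring

lemma ip_ee (s t : ℝ) : ip (ee s) (ee t) = Real.cos (2 * Real.pi * (s - t)) := by
  have h : ip (ee s) (ee t) = (ee s).re * (ee t).re + (ee s).im * (ee t).im := rfl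
  rw [h, ee_re, ee_im, ee_re, ee_im, ← Real.cos_sub]
  congr 1; ring

lemma ee_inj {s t : ℝ} (h : ee s = ee t) : ∃ k : ℤ, s = t + k := by
  rw [ee, ee] at h
  obtain ⟨n, hn⟩ := Complex.exp_eq_exp_iff_exists_int.mp h
  refine ⟨n, ?_⟩
  have him := congrArg Complex.im hn
  simp only [Complex.add_im, Complex.mul_im, Complex.ofReal_re, Complex.ofReal_im,
    Complex.I_re, Complex.I_im, Complex.intCast_re, Complex.intCast_im, mul_zero, mul_one,
    zero_mul, add_zero, zero_add, Complex.mul_re, sub_zero, Complex.re_ofNat,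
    Complex.im_ofNat] at him
  have hprod : 2 * Real.pi * (s - (t + n)) = 0 := by push_cast at him ⊢; nlinarith [him]
  rcases mul_eq_zero.mp hprod with h2 | h2
  · exact absurd h2 (by positivity

)
  · linarith

def ePt (t : ℝ) : SPt := ⟨ee t, ee_norm t⟩

def crd (t : ℝ) : Chord := s(ePt t, ePt (t + 1/3))

lemma ePt_coe (t : ℝ) : ((ePt t : SPt) : ℂ) = ee t := rfl

lemma crd_crit (t : ℝ) : IsCritChord (crd t) := by
  constructor
  · rw [crd, Sym2.mk_isDiag_iff]
    intro hcon
    have hval : ee t = ee (t + 1/3) := congrArg Subtype.val hcon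
    obtain ⟨k, hk⟩ := ee_inj hval
    have h3 : ((3*k : ℤ) : ℝ) = -1 := by push_cast; linarith
    have : (3*k : ℤ) = -1 := by exact_mod_cast h3
    omega
  · rw [crd, show chordMap 3 s(ePt t, ePt (t+1/3))
        = s(sigmaS 3 (ePt t), sigmaS 3 (ePt (t+1/3))) from Sym2.map_pair_eq _ _ _,
      Sym2.mk_isDiag_iff]
    apply Subtype.ext
    show (ee t)^3 = (ee (t+1/3))^3
    rw [ee_pow, ee_pow]
    have h1 : ((3:ℕ):ℝ) * (t + 1/3) = (((3:ℕ):ℝ) * t) + ((1:ℤ):ℝ) := by push_cast; ring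
    rw [h1, ee_add_int]

lemma crd_ip (t : ℝ) : ip ↑(ePt t) ↑(ePt (t+1/3)) = -(1/2) := by
  have h := crd_crit t
  exact crit_ip (crit_facts h).1 (crit_facts h).2

lemma sum_crd (t : ℝ) : ((ePt t : SPt) : ℂ) + ↑(ePt (t+1/3)) = ee (t + 1/6) := by
  show ee t + ee (t + 1/3) = ee (t + 1/6)
  have h1 : ee (t + 1/3) = ee (t + 1/6) * ee (1/6) := by
    rw [← ee_add]; congr 1; ring
  have h2 : ee t = ee (t + 1/6) * ee (-(1/6)) := by
    rw [← ee_add]; congr 1; ring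
  have h3 : ee (-(1/6)) + ee (1/6) = 1 := by
    apply Complex.ext
    · rw [Complex.add_re, ee_re, ee_re, Complex.one_re,
        show 2*Real.pi*(1/6) = Real.pi/3 by ring,
        show 2*Real.pi*(-(1/6)) = -(Real.pi/3) by ring,
        Real.cos_neg, Real.cos_pi_div_three]
      norm_num
    · rw [Complex.add_im, ee_im, ee_im, Complex.one_im,
        show 2*Real.pi*(1/6) = Real.pi/3 by ring,
        show 2*Real.pi*(-(1/6)) = -(Real.pi/3) by ring,
        Real.sin_neg]
      ring
  rw [h1, h2, ← mul_add, h3, mul_one]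

lemma crd_eq_of_int (t : ℝ) (k : ℤ) : crd (t + k) = crd t := by
  have e1 : ePt (t + (k:ℝ)) = ePt t := Subtype.ext (ee_add_int t k)
  have e2 : ePt (t + (k:ℝ) + 1/3) = ePt (t + 1/3) := by
    apply Subtype.ext
    show ee (t + (k:ℝ) + 1/3) = ee (t + 1/3)
    rw [show t + (k:ℝ) + 1/3 = (t + 1/3) + (k:ℝ) by ring, ee_add_int]
  show s(ePt (t + (k:ℝ)), ePt (t + (k:ℝ) + 1/3)) = s(ePt t, ePt (t + 1/3))
  rw [e1, e2]

lemma ee_surj (z : SPt) : ∃ t : ℝ, ePt t = z := by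
  refine ⟨Complex.arg ↑z / (2*Real.pi), Subtype.ext ?_⟩
  show ee _ = ↑z
  rw [ee, show 2*Real.pi * (Complex.arg ↑z / (2*Real.pi)) = Complex.arg ↑z from by
    field_simp]
  have habs : ‖(z:ℂ)‖ = 1 := by exact z.2
  have h := Complex.norm_mul_exp_arg_mul_I (z:ℂ)
  rw [habs, Complex.ofReal_one, one_mul] at h
  exact h

lemma ip_re_mul_conj (x y : ℂ) : ip x y = (x * (starRingEnd ℂ) y).re := by
  simp only [ip, Complex.mul_re, Complex.conj_re, Complex.conj_im]; ring

lemma crit_angle_aux {a b : SPt} (hne : a ≠ b) (h3 : (a:ℂ)^3 = (b:ℂ)^3)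
    (him : 0 < ((b:ℂ) * (starRingEnd ℂ) ↑a).im) : ∃ t : ℝ, s(a, b) = crd t := by
  set w : ℂ := (b:ℂ) * (starRingEnd ℂ) ↑a with hw
  have hnsa : Complex.normSq (a : ℂ) = 1 := by
    rw [Complex.normSq_eq_norm_sq, a.2]; norm_num
  have hnsb : Complex.normSq (b : ℂ) = 1 := by
    rw [Complex.normSq_eq_norm_sq, b.2]; norm_num
  have hwre : w.re = -(1/2) := by
    have h := crit_ip hne.symm h3.symm
    rw [ip_re_mul_conj] at h
    exact h
  have hwns : Complex.normSq w = 1 := by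
    rw [hw, Complex.normSq_mul, Complex.normSq_conj, hnsa, hnsb]; norm_num
  have him2 : w.im^2 = 3/4 := by
    have := Complex.normSq_apply w
    nlinarith [hwns.symm.trans (Complex.normSq_apply w)]
  have himv : w.im = Real.sqrt 3 / 2 := by
    have hs3 : (Real.sqrt 3)^2 = 3 := Real.sq_sqrt (by norm_num)
    have hs3p : 0 < Real.sqrt 3 := Real.sqrt_pos.mpr (by norm_num)
    nlinarith
  have hwe : w = ee (1/3) := by
    apply Complex.ext
    · rw [hwre, ee_re, show 2*Real.pi*(1/3) = Real.pi - Real.pi/3 by ring,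
        Real.cos_pi_sub, Real.cos_pi_div_three]
    · rw [himv, ee_im, show 2*Real.pi*(1/3) = Real.pi - Real.pi/3 by ring,
        Real.sin_pi_sub, Real.sin_pi_div_three]
  obtain ⟨t, ht⟩ := ee_surj a
  refine ⟨t, ?_⟩
  have hb : b = ePt (t + 1/3) := by
    apply Subtype.ext
    show (b:ℂ) = ee (t + 1/3)
    have hba : (b:ℂ) = w * ↑a := by
      rw [hw, mul_assoc, mul_comm ((starRingEnd ℂ) (↑a:ℂ)) (↑a:ℂ), Complex.mul_conj, hnsa,
        Complex.ofReal_one, mul_one]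
    rw [hba, hwe, show ((a:SPt):ℂ) = ee t from by rw [← ht]; rfl, ← ee_add, add_comm]
  rw [hb, show a = ePt t from ht.symm]
  rfl

lemma crit_angle {c : Chord} (h : IsCritChord c) : ∃ t : ℝ, c = crd t := by
  obtain ⟨a, b, rfl⟩ : ∃ a b : SPt, c = s(a, b) := by
    induction c using Sym2.ind with | _ x y => exact ⟨x, y, rfl⟩
  obtain ⟨hne, h3⟩ := crit_facts h
  set w : ℂ := (b:ℂ) * (starRingEnd ℂ) ↑a with hw
  have hnsa : Complex.normSq (a : ℂ) = 1 := by
    rw [Complex.normSq_eq_norm_sq, a.2]; norm_num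
  have hnsb : Complex.normSq (b : ℂ) = 1 := by
    rw [Complex.normSq_eq_norm_sq, b.2]; norm_num
  have hwre : w.re = -(1/2) := by
    have h' := crit_ip hne.symm h3.symm
    rw [ip_re_mul_conj] at h'
    exact h'
  have hwns : Complex.normSq w = 1 := by
    rw [hw, Complex.normSq_mul, Complex.normSq_conj, hnsa, hnsb]; norm_num
  have him2 : w.im^2 = 3/4 := by
    nlinarith [hwns.symm.trans (Complex.normSq_apply w)]
  have him0 : w.im ≠ 0 := by intro hcon; rw [hcon] at him2; norm_num at him2
  rcases lt_or_gt_of_ne him0 with hlt | hgt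
  · -- w.im < 0 : use swapped roles
    have him' : 0 < ((a:ℂ) * (starRingEnd ℂ) ↑b).im := by
      have : (a:ℂ) * (starRingEnd ℂ) ↑b = (starRingEnd ℂ) w := by
        rw [hw, map_mul, Complex.conj_conj, mul_comm]
      rw [this, Complex.conj_im]
      linarith
    obtain ⟨t, ht⟩ := crit_angle_aux hne.symm h3.symm him'
    exact ⟨t, by rw [Sym2.eq_swap]; exact ht⟩
  · exact crit_angle_aux hne h3 hgt

lemma ee_dist_le {s t : ℝ} (h : |s - t| ≤ 1/8) : dist (ee s) (ee t) ≤ 16*|s - t| := by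
  have hfac : ee s - ee t = ee t * (ee (s - t) - 1) := by
    rw [mul_sub, ← ee_add, mul_one, show t + (s - t) = s by ring]
  rw [dist_eq_norm, hfac, norm_mul, ee_norm, one_mul]
  have habs : ‖((2*Real.pi*(s-t) : ℝ) : ℂ) * Complex.I‖ = |2*Real.pi*(s-t)| := by
    rw [norm_mul, Complex.norm_I, mul_one, Complex.norm_real, Real.norm_eq_abs]
  have hb8 : |2*Real.pi*(s-t)| ≤ 8*|s - t| := by
    rw [show 2*Real.pi*(s-t) = (2*Real.pi)*(s-t) by ring, abs_mul,
      abs_of_pos (by positivity : (0:ℝ) < 2*Real.pi)]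
    nlinarith [Real.pi_le_four, abs_nonneg (s - t)]
  have hb1 : ‖((2*Real.pi*(s-t) : ℝ) : ℂ) * Complex.I‖ ≤ 1 := by
    rw [habs]; linarith
  have hexp := Complex.norm_exp_sub_one_le hb1
  rw [habs] at hexp
  have : ‖ee (s-t) - 1‖ ≤ 2*|2*Real.pi*(s-t)| := by
    rw [ee]; exact hexp
  linarith

lemma crd_dist_le {s t : ℝ} (h : |s - t| ≤ 1/8) : chordDist (crd s) (crd t) ≤ 16*|s - t| := by
  have h1 : dist (ee s) (ee t) ≤ 16*|s - t| := ee_dist_le h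
  have h2 : dist (ee (s+1/3)) (ee (t+1/3)) ≤ 16*|s - t| := by
    have he : |(s + 1/3) - (t + 1/3)| = |s - t| := by rw [show (s+1/3) - (t+1/3) = s - t by ring]
    have := ee_dist_le (s := s + 1/3) (t := t + 1/3) (by rw [he]; exact h)
    rw [he] at this
    exact this
  calc chordDist (crd s) (crd t) ≤ max (dist ((ePt s : SPt):ℂ) ↑(ePt t))
        (dist ((ePt (s+1/3) : SPt):ℂ) ↑(ePt (t+1/3))) := chordDist_le
    _ ≤ 16*|s - t| := max_le h1 h2

lemma cos_third : Real.cos (2*Real.pi*(1/3)) = -(1/2) := by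
  rw [show 2*Real.pi*(1/3) = Real.pi - Real.pi/3 by ring, Real.cos_pi_sub,
    Real.cos_pi_div_three]

lemma cos_le_interval {x : ℝ} (h : Real.cos (2*Real.pi*x) ≤ -(1/2)) :
    1/3 ≤ Int.fract x ∧ Int.fract x ≤ 2/3 := by
  set d := Int.fract x with hd
  have hd0 : 0 ≤ d := Int.fract_nonneg x
  have hd1 : d < 1 := Int.fract_lt_one x
  have hπ := Real.pi_pos
  have hcos : Real.cos (2*Real.pi*d) ≤ -(1/2) := by
    have harg : 2*Real.pi*d = 2*Real.pi*x - (⌊x⌋ : ℝ)*(2*Real.pi) := by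
      rw [hd, ← Int.self_sub_floor]; ring
    rw [harg, Real.cos_sub_int_mul_two_pi]
    exact h
  constructor
  · by_contra hcon
    push_neg at hcon
    have hlt : Real.cos (2*Real.pi*(1/3)) < Real.cos (2*Real.pi*d) := by
      apply Real.cos_lt_cos_of_nonneg_of_le_pi (by positivity) (by nlinarith) (by nlinarith)
    rw [cos_third] at hlt
    linarith
  · by_contra hcon
    push_neg at hcon
    have heq : Real.cos (2*Real.pi*d) = Real.cos (2*Real.pi - 2*Real.pi*d) :=
      (Real.cos_two_pi_sub _).symm
    have hlt : Real.cos (2*Real.pi*(1/3)) < Real.cos (2*Real.pi - 2*Real.pi*d) := by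
      apply Real.cos_lt_cos_of_nonneg_of_le_pi (by nlinarith) (by nlinarith) (by nlinarith)
    rw [cos_third] at hlt
    linarith

lemma cos_lt_half {x : ℝ} (h1 : 1/6 < x) (h2 : x ≤ 1/2) : Real.cos (2*Real.pi*x) < 1/2 := by
  have hπ := Real.pi_pos
  have hlt : Real.cos (2*Real.pi*x) < Real.cos (2*Real.pi*(1/6)) := by
    apply Real.cos_lt_cos_of_nonneg_of_le_pi (by positivity) (by nlinarith) (by nlinarith)
  rw [show 2*Real.pi*(1/6) = Real.pi/3 by ring, Real.cos_pi_div_three] at hlt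
  linarith

lemma cos_lt_half' {x : ℝ} (h1 : 1/2 ≤ x) (h2 : x < 5/6) : Real.cos (2*Real.pi*x) < 1/2 := by
  have hkey := cos_lt_half (x := 1 - x) (by linarith) (by linarith)
  have heq : Real.cos (2*Real.pi*(1-x)) = Real.cos (2*Real.pi*x) := by
    rw [show 2*Real.pi*(1-x) = 2*Real.pi - 2*Real.pi*x by ring, Real.cos_two_pi_sub]
  rw [heq] at hkey
  exact hkey

lemma crd_strong_pt {t s : ℝ} (N : ℕ) (hN : 1 ≤ N)
    (horb : ee (((3:ℕ)^N : ℕ) * t) = ee (s + 1/6)) :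
    (critOrbit (crd t) ∩ Iarc (crd s)).Nonempty := by
  refine ⟨ePt (((3:ℕ)^N : ℕ) * t), mem_critOrbit _ N hN ?_, ?_⟩
  · show ee ((((3:ℕ)^N : ℕ) : ℝ) * t) = (ee t)^(3^N)
    rw [ee_pow]
  · show ePt (((3:ℕ)^N : ℕ) * t) ∈ Iarc s(ePt s, ePt (s + 1/3))
    rw [iarc_iff (crd_ip s), sum_crd s]
    show 1/2 < ip (ee ((((3:ℕ)^N : ℕ) : ℝ) * t)) (ee (s + 1/6))
    rw [horb, ip_ee, sub_self, mul_zero, Real.cos_zero]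
    norm_num

set_option maxHeartbeats 2000000 in
lemma strong_dense : ∀ K ∈ CrP, ∀ ε > (0:ℝ), ∃ K' : Portrait,
    IsStrong K' ∧ portraitDist K' K < ε := by
  intro K hK ε hε
  obtain ⟨c, y, rfl, hcc, hcy, hncr⟩ := hK
  obtain ⟨θ, rfl⟩ := crit_angle hcc
  obtain ⟨φ, rfl⟩ := crit_angle hcy
  obtain ⟨N, hNbig⟩ := pow_unbounded_of_one_lt (R := ℝ) (y := 3) (max 300 (300/ε)) (by norm_num)
  set R : ℝ := (3:ℝ)^N with hRdef
  have hRpos : 0 < R := by positivity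
  have hR300 : 300 < R := lt_of_le_of_lt (le_max_left _ _) hNbig
  have hRe : 300 < R*ε := by
    have h1 : 300/ε < R := lt_of_le_of_lt (le_max_right _ _) hNbig
    rw [div_lt_iff₀ hε] at h1
    nlinarith
  have hN1 : 1 ≤ N := by
    by_contra h
    push_neg at h
    interval_cases N
    rw [hRdef] at hR300
    norm_num at hR300
  have hcast : (((3:ℕ)^N : ℕ) : ℝ) = R := by rw [hRdef]; push_cast; rfl
  rcases crp_dichotomy (crd_ip θ) (crd_ip φ) hncr with heq | hle
  · -- the two chords coincide
    have heqc : crd θ = crd φ := heq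
    obtain ⟨p, hpb⟩ : ∃ p : ℤ, |(θ*(R-1) - 1/6) - (p:ℝ)| ≤ 1/2 :=
      ⟨round (θ*(R-1) - 1/6), abs_sub_round _⟩
    obtain ⟨θ', hθ'def⟩ : ∃ x : ℝ, x = (1/6 + (p:ℝ))/(R-1) := ⟨_, rfl⟩
    have hRe1 : (0:ℝ) < R - 1 := by linarith
    have hid : θ' * (R-1) = 1/6 + (p:ℝ) := by
      rw [hθ'def]; field_simp
    have hdist : |θ' - θ| ≤ 1/R := by
      have h1 : (θ' - θ) * (R-1) = 1/6 + (p:ℝ) - θ*(R-1) := by nlinarith [hid]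
      have h3 := hpb
      have h2 : |θ' - θ| * (R-1) ≤ 1/2 := by
        rw [← abs_of_pos hRe1, ← abs_mul, h1,
          show (1:ℝ)/6 + (p:ℝ) - θ*(R-1) = -((θ*(R-1) - 1/6) - (p:ℝ)) by ring, abs_neg]
        exact h3
      rw [le_div_iff₀ hRpos]
      nlinarith [abs_nonneg (θ' - θ), mul_nonneg (abs_nonneg (θ' - θ))
        (by linarith : (0:ℝ) ≤ R - 300)]
    have horb : ee ((((3:ℕ)^N : ℕ) : ℝ) * θ') = ee (θ' + 1/6) := by
      have harg : (((3:ℕ)^N : ℕ) : ℝ) * θ' = (θ' + 1/6) + (p:ℝ) := by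
        rw [hcast]; nlinarith [hid]
      rw [harg, ee_add_int]
    have spt := crd_strong_pt N hN1 horb
    refine ⟨s(crd θ', crd θ'), ⟨⟨crd θ', crd θ', rfl, crd_crit _, crd_crit _,
      fun hcr => hcr.1 rfl⟩, not_weak_mk spt spt⟩, ?_⟩
    rw [portraitDist_mk, ← heqc, max_self, min_self]
    have hsmall : |θ' - θ| ≤ 1/8 := by
      have : (1:ℝ)/R ≤ 1/8 := by rw [div_le_div_iff₀ hRpos (by norm_num)]; linarith
      linarith
    calc chordDist (crd θ') (crd θ) ≤ 16*|θ' - θ| := crd_dist_le hsmall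
      _ ≤ 16/R := by
          have := mul_le_mul_of_nonneg_left hdist (by norm_num : (0:ℝ) ≤ 16)
          have h16 : 16*((1:ℝ)/R) = 16/R := by ring
          linarith
      _ < ε := by rw [div_lt_iff₀ hRpos]; nlinarith
  · -- genuinely two chords
    rw [sum_crd θ, sum_crd φ, ip_ee,
      show (θ + 1/6) - (φ + 1/6) = θ - φ by ring] at hle
    have hcos : Real.cos (2*Real.pi*(φ - θ)) ≤ -(1/2) := by
      rw [show 2*Real.pi*(φ - θ) = -(2*Real.pi*(θ - φ)) by ring, Real.cos_neg]
      exact hle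
    obtain ⟨hδ1, hδ2⟩ := cos_le_interval hcos
    obtain ⟨δ0, hδ0def⟩ : ∃ x : ℝ, x = Int.fract (φ - θ) := ⟨_, rfl⟩
    rw [← hδ0def] at hδ1 hδ2
    obtain ⟨η, hηdef⟩ : ∃ x : ℝ, x = 6/R := ⟨_, rfl⟩
    have hη0 : 0 < η := by rw [hηdef]; positivity
    have hη6 : η < 1/6 := by rw [hηdef, div_lt_iff₀ hRpos]; linarith
    obtain ⟨δs, hδsdef⟩ : ∃ x : ℝ, x = min (max δ0 (1/3 + η)) (2/3 - η) := ⟨_, rfl⟩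
    have hδs1 : 1/3 + η ≤ δs := by
      rw [hδsdef]
      exact le_min (le_max_right _ _) (by linarith)
    have hδs2 : δs ≤ 2/3 - η := by rw [hδsdef]; exact min_le_right _ _
    have hδsd : |δs - δ0| ≤ η := by
      rw [abs_le]
      constructor
      · have h1 : δ0 - η ≤ max δ0 (1/3 + η) := le_trans (by linarith) (le_max_left _ _)
        have h2 : δ0 - η ≤ 2/3 - η := by linarith
        have := le_min h1 h2
        rw [← hδsdef] at this
        linarith
      · have h1 : max δ0 (1/3 + η) ≤ δ0 + η := max_le (by linarith) (by linarith)
        have h2 : δs ≤ max δ0 (1/3 + η) := by rw [hδsdef]; exact min_le_left _ _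
        linarith
    obtain ⟨φ0, hφ0def⟩ : ∃ x : ℝ, x = θ + δs := ⟨_, rfl⟩
    obtain ⟨ps, hpsdef⟩ : ∃ x : ℝ, x = R*θ - φ0 - 1/6 := ⟨_, rfl⟩
    obtain ⟨qs, hqsdef⟩ : ∃ x : ℝ, x = R*φ0 - θ - 1/6 := ⟨_, rfl⟩
    obtain ⟨p, hppq⟩ : ∃ p : ℤ, |(p:ℝ) - ps| ≤ 1/2 :=
      ⟨round ps, by rw [abs_sub_comm]; exact abs_sub_round ps⟩
    obtain ⟨q, hqqq⟩ : ∃ q : ℤ, |(q:ℝ) - qs| ≤ 1/2 :=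
      ⟨round qs, by rw [abs_sub_comm]; exact abs_sub_round qs⟩
    have hD : (0:ℝ) < R^2 - 1 := by nlinarith
    have hDne : R^2 - 1 ≠ 0 := ne_of_gt hD
    obtain ⟨θ', hθ'def⟩ : ∃ x : ℝ, x = (R*(1/6+(p:ℝ)) + 1/6 + (q:ℝ))/(R^2-1) := ⟨_, rfl⟩
    obtain ⟨φ', hφ'def⟩ : ∃ x : ℝ, x = (R*(1/6+(q:ℝ)) + 1/6 + (p:ℝ))/(R^2-1) := ⟨_, rfl⟩
    have hA : R*θ' - φ' = 1/6 + (p:ℝ) := by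
      rw [hθ'def, hφ'def]; field_simp; ring
    have hB : R*φ' - θ' = 1/6 + (q:ℝ) := by
      rw [hθ'def, hφ'def]; field_simp; ring
    have hθeq : θ = (R*(1/6+ps) + 1/6 + qs)/(R^2-1) := by
      rw [hpsdef, hqsdef]; field_simp; ring
    have hφeq : φ0 = (R*(1/6+qs) + 1/6 + ps)/(R^2-1) := by
      rw [hpsdef, hqsdef]; field_simp; ring
    have hθd : |θ' - θ| ≤ 2/R := by
      have hdiff : θ' - θ = (R*((p:ℝ)-ps) + ((q:ℝ)-qs))/(R^2-1) := by
        rw [hθ'def, hθeq]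
        field_simp
        ring
      rw [hdiff, abs_div, abs_of_pos hD]
      have habs : |R*((p:ℝ)-ps) + ((q:ℝ)-qs)| ≤ R*(1/2) + 1/2 := by
        calc |R*((p:ℝ)-ps) + ((q:ℝ)-qs)| ≤ |R*((p:ℝ)-ps)| + |(q:ℝ)-qs| := abs_add_le _ _
          _ = R*|(p:ℝ)-ps| + |(q:ℝ)-qs| := by rw [abs_mul, abs_of_pos hRpos]
          _ ≤ R*(1/2) + 1/2 := by nlinarith
      rw [div_le_div_iff₀ hD hRpos]
      nlinarith [abs_nonneg (R*((p:ℝ)-ps) + ((q:ℝ)-qs))]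
    have hφd : |φ' - φ0| ≤ 2/R := by
      have hdiff : φ' - φ0 = (R*((q:ℝ)-qs) + ((p:ℝ)-ps))/(R^2-1) := by
        rw [hφ'def, hφeq]
        field_simp
        ring
      rw [hdiff, abs_div, abs_of_pos hD]
      have habs : |R*((q:ℝ)-qs) + ((p:ℝ)-ps)| ≤ R*(1/2) + 1/2 := by
        calc |R*((q:ℝ)-qs) + ((p:ℝ)-ps)| ≤ |R*((q:ℝ)-qs)| + |(p:ℝ)-ps| := abs_add_le _ _
          _ = R*|(q:ℝ)-qs| + |(p:ℝ)-ps| := by rw [abs_mul, abs_of_pos hRpos]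
          _ ≤ R*(1/2) + 1/2 := by nlinarith
      rw [div_le_div_iff₀ hD hRpos]
      nlinarith [abs_nonneg (R*((q:ℝ)-qs) + ((p:ℝ)-ps))]
    have hδ'd : |(φ' - θ') - δs| ≤ 4/R := by
      have hsplit : (φ' - θ') - δs = (φ' - φ0) - (θ' - θ) := by rw [hφ0def]; ring
      calc |(φ' - θ') - δs| = |(φ' - φ0) - (θ' - θ)| := by rw [hsplit]
        _ ≤ |φ' - φ0| + |θ' - θ| := abs_sub _ _
        _ ≤ 4/R := by
            have : (2:ℝ)/R + 2/R = 4/R := by ring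
            linarith
    have h2Rpos : (0:ℝ) < 2/R := by positivity
    have hδ'lo : 1/3 + 2/R ≤ φ' - θ' := by
      have h1 := (abs_le.mp hδ'd).1
      have e1 : (6:ℝ)/R - 4/R = 2/R := by ring
      linarith [hηdef]
    have hδ'hi : φ' - θ' ≤ 2/3 - 2/R := by
      have h1 := (abs_le.mp hδ'd).2
      have e1 : (6:ℝ)/R - 4/R = 2/R := by ring
      linarith [hηdef]
    have hnc' : ¬ Cross (crd θ') (crd φ') := by
      apply not_cross_of_lt (crd_ip θ')
      · show ip (ee φ') (↑(ePt θ') + ↑(ePt (θ'+1/3))) < 1/2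
        rw [sum_crd θ', ip_ee, show φ' - (θ' + 1/6) = (φ' - θ') - 1/6 by ring]
        exact cos_lt_half (by linarith) (by linarith)
      · show ip (ee (φ'+1/3)) (↑(ePt θ') + ↑(ePt (θ'+1/3))) < 1/2
        rw [sum_crd θ', ip_ee, show (φ'+1/3) - (θ' + 1/6) = (φ' - θ') + 1/6 by ring]
        exact cos_lt_half' (by linarith) (by linarith)
    have horbA : ee ((((3:ℕ)^N : ℕ) : ℝ) * θ') = ee (φ' + 1/6) := by
      have harg : (((3:ℕ)^N : ℕ) : ℝ) * θ' = (φ' + 1/6) + (p:ℝ) := by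
        rw [hcast]; nlinarith [hA]
      rw [harg, ee_add_int]
    have horbB : ee ((((3:ℕ)^N : ℕ) : ℝ) * φ') = ee (θ' + 1/6) := by
      have harg : (((3:ℕ)^N : ℕ) : ℝ) * φ' = (θ' + 1/6) + (q:ℝ) := by
        rw [hcast]; nlinarith [hB]
      rw [harg, ee_add_int]
    have s1 := crd_strong_pt N hN1 horbA
    have s2 := crd_strong_pt N hN1 horbB
    refine ⟨s(crd θ', crd φ'), ⟨⟨crd θ', crd φ', rfl, crd_crit _, crd_crit _, hnc'⟩,
      not_weak_mk s1 s2⟩, ?_⟩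
    have hfr : crd φ = crd (θ + δ0) := by
      have hf : δ0 = (φ - θ) - (⌊φ - θ⌋ : ℝ) := by
        rw [hδ0def, ← Int.self_sub_floor]
      rw [show φ = (θ + δ0) + ((⌊φ - θ⌋ : ℤ) : ℝ) from by rw [hf]; ring, crd_eq_of_int]
    rw [portraitDist_mk]
    apply lt_of_le_of_lt (min_le_left _ _)
    apply max_lt
    · have hsmall : |θ' - θ| ≤ 1/8 := by
        have : (2:ℝ)/R ≤ 1/8 := by rw [div_le_div_iff₀ hRpos (by norm_num)]; linarith
        linarith
      calc chordDist (crd θ') (crd θ) ≤ 16*|θ' - θ| := crd_dist_le hsmall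
        _ ≤ 32/R := by
            have := mul_le_mul_of_nonneg_left hθd (by norm_num : (0:ℝ) ≤ 16)
            have h32 : 16*((2:ℝ)/R) = 32/R := by ring
            linarith
        _ < ε := by rw [div_lt_iff₀ hRpos]; nlinarith
    · rw [hfr]
      have hdd : |φ' - (θ + δ0)| ≤ 8/R := by
        have hsplit : φ' - (θ + δ0) = (φ' - φ0) + (δs - δ0) := by rw [hφ0def]; ring
        calc |φ' - (θ + δ0)| = |(φ' - φ0) + (δs - δ0)| := by rw [hsplit]
          _ ≤ |φ' - φ0| + |δs - δ0| := abs_add_le _ _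
          _ ≤ 2/R + 6/R := by rw [hηdef] at hδsd; linarith
          _ = 8/R := by ring
      have hsmall : |φ' - (θ + δ0)| ≤ 1/8 := by
        have : (8:ℝ)/R ≤ 1/8 := by rw [div_le_div_iff₀ hRpos (by norm_num)]; linarith
        linarith
      calc chordDist (crd φ') (crd (θ + δ0)) ≤ 16*|φ' - (θ + δ0)| := crd_dist_le hsmall
        _ ≤ 128/R := by
            have := mul_le_mul_of_nonneg_left hdd (by norm_num : (0:ℝ) ≤ 16)
            have h128 : 16*((8:ℝ)/R) = 128/R := by ring
            linarith
        _ < ε := by rw [div_lt_iff₀ hRpos]; nlinarith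

end Stmt6Dev

/-- the strong critical portraits form an open dense subset of
`CrP`, and the weak critical portraits form a closed nowhere dense subset of
`CrP` (all notions relative to the metric `portraitDist` on `CrP`). -/
theorem stmt6 :
    (∀ K : Portrait, IsStrong K →
      ∃ ε > (0 : ℝ), ∀ K' ∈ CrP, portraitDist K' K < ε → IsStrong K') ∧
    (∀ K ∈ CrP, ∀ ε > (0 : ℝ), ∃ K' : Portrait, IsStrong K' ∧ portraitDist K' K < ε) ∧
    (∀ K ∈ CrP, (∀ ε > (0 : ℝ), ∃ K' : Portrait, IsWeak K' ∧ portraitDist K' K < ε) →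
      IsWeak K) ∧
    (∀ K : Portrait, IsWeak K → ∀ ε > (0 : ℝ),
      ∃ K' ∈ CrP, portraitDist K' K < ε ∧ ¬ IsWeak K') := by
  refine ⟨Stmt6Dev.strong_open, Stmt6Dev.strong_dense, ?_, ?_⟩
  · intro K hK h
    by_cases hw : IsWeak K
    · exact hw
    · exfalso
      obtain ⟨ε, hε, hball⟩ := Stmt6Dev.strong_open K ⟨hK, hw⟩
      obtain ⟨K', hK'w, hd⟩ := h ε hε
      exact (hball K' hK'w.1 hd).2 hK'w
  · intro K hKw ε hε
    obtain ⟨K', hK's, hd⟩ := Stmt6Dev.strong_dense K hKw.1 ε hε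
    exact ⟨K', hK's.1, hd, hK's.2⟩
end
end

section
/- If cubic critical portraits K₁ and K₂ are friends, then there exists a chief Λ with K₁, K₂ ∈ C(Λ). Moreover, friendship is a closed relation: if K_i → K and K'_i → K' in CrP, and K_i and K'_i are friends for every i, then K and K' are friends. -/
noncomputable section

open Filter Metric

section AUX


instance : CompactSpace SPt := by
  have h : IsCompact {z : ℂ | ‖z‖ = 1} := by
    have : {z : ℂ | ‖z‖ = 1} = Metric.sphere (0:ℂ) 1 := by
      ext z; simp [Metric.mem_sphere, dist_zero_right]
    rw [this]; exact isCompact_sphere 0 1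
  exact isCompact_iff_compactSpace.mp h

lemma line_unit {a b c : ℂ} (ha : ‖a‖ = 1) (hb : ‖b‖ = 1) (hab : a ≠ b)
    {s : ℝ} (hc : c = a + s • (b - a)) (hcn : ‖c‖ = 1) : c = a ∨ c = b := by
  have hw : b - a ≠ 0 := sub_ne_zero.mpr (Ne.symm hab)
  have key : ∀ t : ℝ, ‖a + t • (b-a)‖^2 = 1 + (2*t*(inner ℝ a (b-a) : ℝ) + t^2*‖b-a‖^2) := by
    intro t
    rw [norm_add_sq_real, real_inner_smul_right, norm_smul, ha]
    simp [mul_pow]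
    ring
  have e2 : 2*(inner ℝ a (b-a) : ℝ) = -‖b-a‖^2 := by
    have h2 := key 1
    simp only [one_smul, one_pow, mul_one] at h2
    have : ‖a + (b - a)‖ = 1 := by simpa using hb
    rw [this] at h2
    nlinarith [h2]
  have e3 : s * (s - 1) * ‖b-a‖^2 = 0 := by
    have h3 := key s
    rw [← hc, hcn] at h3
    have e4 : s * (2*(inner ℝ a (b-a) : ℝ)) = s * (-‖b-a‖^2) := by rw [e2]
    nlinarith [h3, e4]
  have hn : ‖b-a‖^2 ≠ 0 := pow_ne_zero _ (norm_ne_zero_iff.mpr hw)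
  rcases mul_eq_zero.mp ((mul_eq_zero.mp e3).resolve_right hn) with h | h
  · left; rw [hc, h]; simp
  · right; rw [hc, sub_eq_zero.mp h]; simp

lemma seg_rep {a b x : ℂ} (h : x ∈ segment ℝ a b) : ∃ t : ℝ, t ∈ Set.Icc (0:ℝ) 1 ∧ x = a + t • (b - a) := by
  rw [segment_eq_image'] at h
  rcases h with ⟨t, ht, hx⟩
  exact ⟨t, ht, hx.symm⟩

lemma seg_norm_le {a b x : ℂ} (ha : ‖a‖ = 1) (hb : ‖b‖ = 1) (h : x ∈ segment ℝ a b) : ‖x‖ ≤ 1 := by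
  rcases h with ⟨u, v, hu, hv, huv, rfl⟩
  calc ‖u • a + v • b‖ ≤ ‖u • a‖ + ‖v • b‖ := norm_add_le _ _
  _ = u + v := by rw [norm_smul, norm_smul, ha, hb]; simp [abs_of_nonneg hu, abs_of_nonneg hv]
  _ = 1 := huv

lemma seg_unit_mem {a b x : ℂ} (ha : ‖a‖ = 1) (hb : ‖b‖ = 1) (h : x ∈ segment ℝ a b)
    (hx : ‖x‖ = 1) : x = a ∨ x = b := by
  by_cases hab : a = b
  · subst hab; rw [segment_same] at h; exact Or.inl h
  · rcases seg_rep h with ⟨t, _, hxa⟩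
    exact line_unit ha hb hab hxa hx

lemma seg_norm_lt {a b x : ℂ} (ha : ‖a‖ = 1) (hb : ‖b‖ = 1) (h : x ∈ segment ℝ a b)
    (hxa : x ≠ a) (hxb : x ≠ b) : ‖x‖ < 1 :=
  lt_of_le_of_ne (seg_norm_le ha hb h) (fun he => by rcases seg_unit_mem ha hb h he with h'|h' <;> tauto)

lemma mid_mem_seg (a b : ℂ) : a + (2⁻¹ : ℝ) • (b - a) ∈ segment ℝ a b := by
  rw [segment_eq_image']
  exact ⟨2⁻¹, by norm_num, rfl⟩

lemma mid_norm_lt {a b : ℂ} (ha : ‖a‖ = 1) (hb : ‖b‖ = 1) (hab : a ≠ b) :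
    ‖a + (2⁻¹ : ℝ) • (b - a)‖ < 1 := by
  apply seg_norm_lt ha hb (mid_mem_seg a b)
  · simp only [ne_eq, add_eq_left, smul_eq_zero, sub_eq_zero]
    push_neg; exact ⟨by norm_num, Ne.symm hab⟩
  · intro h
    apply hab
    have h1 : b - a = (2⁻¹ : ℝ) • (b - a) := sub_eq_iff_eq_add'.mpr h.symm
    have h2 : ((1:ℝ) - 2⁻¹) • (b - a) = 0 := by rw [sub_smul, one_smul, ← h1, sub_self]
    rcases smul_eq_zero.mp h2 with h'|h'
    · norm_num at h'
    · exact (sub_eq_zero.mp h').symm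

/-- planar cross product (determinant). -/
def cross2 (w z : ℂ) : ℝ := w.re * z.im - w.im * z.re

lemma cross2_self (w : ℂ) : cross2 w w = 0 := by simp [cross2]; ring

lemma cross2_zero (w : ℂ) : cross2 w 0 = 0 := by simp [cross2]

lemma cross2_add_smul (w z₁ z₂ : ℂ) (r : ℝ) :
    cross2 w (z₁ + r • z₂) = cross2 w z₁ + r * cross2 w z₂ := by
  simp [cross2, Complex.add_re, Complex.add_im, Complex.real_smul, Complex.ofReal_mul]
  ring

lemma cross2_smul (w z : ℂ) (r : ℝ) : cross2 w (r • z) = r * cross2 w z := by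
  have := cross2_add_smul w 0 z r
  simpa [cross2_zero] using this

lemma cross2_eq_zero_imp {w z : ℂ} (hw : w ≠ 0) (h : cross2 w z = 0) :
    z = ((w.re * z.re + w.im * z.im) / (w.re^2 + w.im^2)) • w := by
  have hnz : w.re^2 + w.im^2 ≠ 0 := by
    intro h0
    apply hw
    have h1 : w.re = 0 := by nlinarith [sq_nonneg w.re, sq_nonneg w.im]
    have h2 : w.im = 0 := by nlinarith [sq_nonneg w.re, sq_nonneg w.im]
    exact Complex.ext h1 h2
  have hc : w.re * z.im - w.im * z.re = 0 := h
  have key : (w.re^2 + w.im^2) • z = (w.re*z.re + w.im*z.im) • w := by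
    apply Complex.ext
    · simp only [Complex.real_smul, Complex.mul_re, Complex.mul_im, Complex.ofReal_re,
        Complex.ofReal_im]
      linear_combination (-(w.im)) * hc
    · simp only [Complex.real_smul, Complex.mul_re, Complex.mul_im, Complex.ofReal_re,
        Complex.ofReal_im]
      linear_combination w.re * hc
  calc z = ((w.re^2 + w.im^2)⁻¹ * (w.re*z.re + w.im*z.im)) • w := by
        rw [← smul_smul, ← key, smul_smul, inv_mul_cancel₀ hnz, one_smul]
  _ = ((w.re * z.re + w.im * z.im) / (w.re^2 + w.im^2)) • w := by rw [div_eq_inv_mul]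

lemma cross2_tendsto {f g : ℕ → ℂ} {w z : ℂ} (hf : Tendsto f atTop (nhds w))
    (hg : Tendsto g atTop (nhds z)) :
    Tendsto (fun n => cross2 (f n) (g n)) atTop (nhds (cross2 w z)) := by
  have hre : ∀ {u : ℕ → ℂ} {v : ℂ}, Tendsto u atTop (nhds v) → Tendsto (fun n => (u n).re) atTop (nhds v.re) :=
    fun h => (Complex.continuous_re.tendsto _).comp h
  have him : ∀ {u : ℕ → ℂ} {v : ℂ}, Tendsto u atTop (nhds v) → Tendsto (fun n => (u n).im) atTop (nhds v.im) :=
    fun h => (Complex.continuous_im.tendsto _).comp h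
  exact ((hre hf).mul (him hg)).sub ((him hf).mul (hre hg))

lemma ratio_mem_Ioo {u v : ℝ} (h : u * v < 0) : u / (u - v) ∈ Set.Ioo (0:ℝ) 1 := by
  rcases lt_or_gt_of_ne (fun h0 : u = 0 => by simp [h0] at h) with hu | hu
  · have hv : 0 < v := by nlinarith
    constructor
    · exact div_pos_of_neg_of_neg hu (by linarith)
    · rw [div_lt_one_of_neg (by linarith)]; linarith
  · have hv : v < 0 := by nlinarith
    constructor
    · exact div_pos hu (by linarith)
    · rw [div_lt_one (by linarith)]; linarith

lemma cross2_mul (w z : ℂ) (r : ℝ) : cross2 w ((r:ℂ) * z) = r * cross2 w z := by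
  simpa [Complex.real_smul] using cross2_smul w z r

lemma cross2_add (w z₁ z₂ : ℂ) : cross2 w (z₁ + z₂) = cross2 w z₁ + cross2 w z₂ := by
  simpa using cross2_add_smul w z₁ z₂ 1

lemma seg_mem_of_param {a b x : ℂ} {t : ℝ} (ht : t ∈ Set.Icc (0:ℝ) 1) (hx : x = a + t • (b - a)) :
    x ∈ segment ℝ a b := by
  rw [segment_eq_image']; exact ⟨t, ht, hx.symm⟩

lemma cross_open_C {a b c d p : ℂ} {A B C D : ℕ → ℂ}
    (ha : ‖a‖ = 1) (hb : ‖b‖ = 1) (hc : ‖c‖ = 1) (hd : ‖d‖ = 1)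
    (hpair : ¬((a = c ∧ b = d) ∨ (a = d ∧ b = c)))
    (hp1 : p ∈ segment ℝ a b) (hp2 : p ∈ segment ℝ c d) (hpn : ‖p‖ < 1)
    (hA : Tendsto A atTop (nhds a)) (hB : Tendsto B atTop (nhds b))
    (hC : Tendsto C atTop (nhds c)) (hD : Tendsto D atTop (nhds d)) :
    ∀ᶠ n in atTop, (∃ x, x ∈ segment ℝ (A n) (B n) ∧ x ∈ segment ℝ (C n) (D n) ∧ ‖x‖ < 1)
      ∧ ¬((A n = C n ∧ B n = D n) ∨ (A n = D n ∧ B n = C n)) := by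
  have hab : a ≠ b := by
    intro h; subst h; rw [segment_same] at hp1
    rw [Set.mem_singleton_iff.mp hp1, ha] at hpn; exact lt_irrefl _ hpn
  have hcd : c ≠ d := by
    intro h; subst h; rw [segment_same] at hp2
    rw [Set.mem_singleton_iff.mp hp2, hc] at hpn; exact lt_irrefl _ hpn
  obtain ⟨t, ht01, hpt⟩ := seg_rep hp1
  obtain ⟨s, hs01, hps⟩ := seg_rep hp2
  have hpt' : p = a + (t:ℂ) * (b - a) := by rw [hpt, Complex.real_smul]
  have hps' : p = c + (s:ℂ) * (d - c) := by rw [hps, Complex.real_smul]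
  have hpa : p ≠ a := fun h => by rw [h, ha] at hpn; exact lt_irrefl _ hpn
  have hpb : p ≠ b := fun h => by rw [h, hb] at hpn; exact lt_irrefl _ hpn
  have hpc : p ≠ c := fun h => by rw [h, hc] at hpn; exact lt_irrefl _ hpn
  have hpd : p ≠ d := fun h => by rw [h, hd] at hpn; exact lt_irrefl _ hpn
  have ht0 : 0 < t := by
    rcases lt_or_eq_of_le ht01.1 with h | h
    · exact h
    · exact absurd (by rw [hpt, ← h]; simp) hpa
  have ht1 : t < 1 := by
    rcases lt_or_eq_of_le ht01.2 with h | h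
    · exact h
    · exact absurd (by rw [hpt', h]; push_cast; ring) hpb
  have hs0 : 0 < s := by
    rcases lt_or_eq_of_le hs01.1 with h | h
    · exact h
    · exact absurd (by rw [hps, ← h]; simp) hpc
  have hs1 : s < 1 := by
    rcases lt_or_eq_of_le hs01.2 with h | h
    · exact h
    · exact absurd (by rw [hps', h]; push_cast; ring) hpd
  set w := d - c with hwdef
  have hw : w ≠ 0 := sub_ne_zero.mpr (Ne.symm hcd)
  set B0 := cross2 w (b - a) with hB0def
  have hB0 : B0 ≠ 0 := by
    intro h0
    obtain hr := cross2_eq_zero_imp hw h0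
    set r := ((w.re * (b-a).re + w.im * (b-a).im) / (w.re^2 + w.im^2)) with hrdef
    have hr' : b - a = (r:ℂ) * w := by rw [hr, Complex.real_smul]
    have hac : a = c + ((s - t*r : ℝ):ℂ) * w := by
      push_cast; linear_combination hps' - hpt' - (t:ℂ) * hr'
    have hbc : b = c + ((s + (1-t)*r : ℝ):ℂ) * w := by
      push_cast; linear_combination hps' - hpt' + ((1:ℂ) - t) * hr'
    have h1 : a = c ∨ a = d :=
      line_unit hc hd hcd (by rw [hac, Complex.real_smul]) ha
    have h2 : b = c ∨ b = d :=
      line_unit hc hd hcd (by rw [hbc, Complex.real_smul]) hb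
    rcases h1 with h1 | h1 <;> rcases h2 with h2 | h2
    · exact hab (h1.trans h2.symm)
    · exact hpair (Or.inl ⟨h1, h2⟩)
    · exact hpair (Or.inr ⟨h1, h2⟩)
    · exact hab (h1.trans h2.symm)
  have hfa : cross2 w (a - c) = -t * B0 := by
    have h1 : a - c = ((s:ℝ):ℂ) * w + ((-t:ℝ):ℂ) * (b - a) := by
      push_cast; linear_combination hps' - hpt'
    rw [h1, cross2_add, cross2_mul, cross2_mul, cross2_self]
    rw [hB0def]; ring
  have hfb : cross2 w (b - c) = (1-t) * B0 := by
    have h1 : b - c = ((s:ℝ):ℂ) * w + ((1-t:ℝ):ℂ) * (b - a) := by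
      push_cast; linear_combination hps' - hpt'
    rw [h1, cross2_add, cross2_mul, cross2_mul, cross2_self]
    rw [hB0def]; ring
  have hprod : cross2 w (a-c) * cross2 w (b-c) < 0 := by
    rw [hfa, hfb]
    have hB2 : 0 < B0^2 := lt_of_le_of_ne (sq_nonneg _) (Ne.symm (pow_ne_zero 2 hB0))
    nlinarith [mul_pos ht0 (by linarith : (0:ℝ) < 1 - t)]
  -- sequences
  set W := fun n => D n - C n with hWdef
  set FA := fun n => cross2 (W n) (A n - C n) with hFAdef
  set FB := fun n => cross2 (W n) (B n - C n) with hFBdef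
  have hWt : Tendsto W atTop (nhds w) := hD.sub hC
  have hFAt : Tendsto FA atTop (nhds (cross2 w (a - c))) := cross2_tendsto hWt (hA.sub hC)
  have hFBt : Tendsto FB atTop (nhds (cross2 w (b - c))) := cross2_tendsto hWt (hB.sub hC)
  have hEprod : ∀ᶠ n in atTop, FA n * FB n < 0 :=
    (hFAt.mul hFBt).eventually_lt_const hprod
  have hden : cross2 w (a-c) - cross2 w (b-c) = -B0 := by rw [hfa, hfb]; ring
  have hdenne : cross2 w (a-c) - cross2 w (b-c) ≠ 0 := by rw [hden]; exact neg_ne_zero.mpr hB0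
  have htinf : cross2 w (a-c) / (cross2 w (a-c) - cross2 w (b-c)) = t := by
    rw [hden, hfa]; field_simp
  set TN := fun n => FA n / (FA n - FB n) with hTNdef
  have hTNt : Tendsto TN atTop (nhds t) := by
    have := Tendsto.div hFAt (hFAt.sub hFBt) hdenne
    rw [htinf] at this; exact this
  set X := fun n => A n + TN n • (B n - A n) with hXdef
  have hXt : Tendsto X atTop (nhds p) := by
    have : Tendsto (fun n => A n + TN n • (B n - A n)) atTop (nhds (a + t • (b - a))) :=
      hA.add (hTNt.smul (hB.sub hA))
    rwa [← hpt] at this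
  have hEx : ∀ᶠ n in atTop, ‖X n‖ < 1 := hXt.norm.eventually_lt_const hpn
  have hEw : ∀ᶠ n in atTop, 0 < ‖W n‖ :=
    hWt.norm.eventually_const_lt (norm_pos_iff.mpr hw)
  -- the parameter along cd
  set SN := fun n => ((W n).re * (X n - C n).re + (W n).im * (X n - C n).im) / ((W n).re^2 + (W n).im^2) with hSNdef
  have hre : ∀ {u : ℕ → ℂ} {v : ℂ}, Tendsto u atTop (nhds v) → Tendsto (fun n => (u n).re) atTop (nhds v.re) :=
    fun h => (Complex.continuous_re.tendsto _).comp h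
  have him : ∀ {u : ℕ → ℂ} {v : ℂ}, Tendsto u atTop (nhds v) → Tendsto (fun n => (u n).im) atTop (nhds v.im) :=
    fun h => (Complex.continuous_im.tendsto _).comp h
  have hwnorm : w.re^2 + w.im^2 ≠ 0 := by
    intro h0
    apply hw
    have h1 : w.re = 0 := by nlinarith [sq_nonneg w.re, sq_nonneg w.im]
    have h2 : w.im = 0 := by nlinarith [sq_nonneg w.re, sq_nonneg w.im]
    exact Complex.ext h1 h2
  have hSNt : Tendsto SN atTop (nhds s) := by
    have hnum : Tendsto (fun n => (W n).re * (X n - C n).re + (W n).im * (X n - C n).im) atTop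
        (nhds (w.re * (p - c).re + w.im * (p - c).im)) :=
      ((hre hWt).mul (hre (hXt.sub hC))).add ((him hWt).mul (him (hXt.sub hC)))
    have hden2 : Tendsto (fun n => (W n).re^2 + (W n).im^2) atTop (nhds (w.re^2 + w.im^2)) :=
      ((hre hWt).pow 2).add ((him hWt).pow 2)
    have := Tendsto.div hnum hden2 hwnorm
    have hval : (w.re * (p - c).re + w.im * (p - c).im) / (w.re^2 + w.im^2) = s := by
      have hpc' : p - c = (s:ℂ) * w := by linear_combination hps'
      rw [hpc']
      simp only [Complex.mul_re, Complex.mul_im, Complex.ofReal_re, Complex.ofReal_im]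
      field_simp
      ring
    rwa [hval] at this
  have hEs0 : ∀ᶠ n in atTop, 0 < SN n := hSNt.eventually_const_lt hs0
  have hEs1 : ∀ᶠ n in atTop, SN n < 1 := hSNt.eventually_lt_const hs1
  filter_upwards [hEprod, hEx, hEw, hEs0, hEs1] with n hpr hxn hwn hsn0 hsn1
  have hdn : FA n - FB n ≠ 0 := by
    intro h0
    rw [sub_eq_zero] at h0
    rw [← h0] at hpr
    nlinarith [sq_nonneg (FA n)]
  have hTmem : TN n ∈ Set.Ioo (0:ℝ) 1 := ratio_mem_Ioo hpr
  constructor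
  · refine ⟨X n, seg_mem_of_param ⟨le_of_lt hTmem.1, le_of_lt hTmem.2⟩ rfl, ?_, hxn⟩
    -- X n on segment C D
    have hwn' : W n ≠ 0 := norm_pos_iff.mp hwn
    have hcross0 : cross2 (W n) (X n - C n) = 0 := by
      have hx1 : X n - C n = (A n - C n) + ((TN n : ℝ):ℂ) * ((B n - C n) - (A n - C n)) := by
        show A n + TN n • (B n - A n) - C n = _
        rw [Complex.real_smul]; ring
      rw [hx1, cross2_add, cross2_mul]
      have : cross2 (W n) (B n - C n - (A n - C n)) = FB n - FA n := by
        have h2 : B n - C n - (A n - C n) = (B n - C n) + ((-1:ℝ):ℂ) * (A n - C n) := by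
          push_cast; ring
        rw [h2, cross2_add, cross2_mul]; rw [hFBdef, hFAdef]; ring
      rw [this]
      show FA n + TN n * (FB n - FA n) = 0
      rw [hTNdef]
      field_simp
      ring
    have hXC := cross2_eq_zero_imp hwn' hcross0
    refine seg_mem_of_param ⟨le_of_lt hsn0, le_of_lt hsn1⟩ ?_
    show X n = C n + SN n • (D n - C n)
    rw [show SN n • (D n - C n) = SN n • W n from rfl, ← hXC]
    ring
  · rintro (⟨h1, h2⟩ | ⟨h1, h2⟩)
    · have hz : FA n = 0 := by
        show cross2 (W n) (A n - C n) = 0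
        rw [h1, sub_self, cross2_zero]
      rw [hz, zero_mul] at hpr; exact lt_irrefl _ hpr
    · have hz : FA n = 0 := by
        show cross2 (W n) (A n - C n) = 0
        have hh : A n - C n = W n := by show A n - C n = D n - C n; rw [h1]
        rw [hh, cross2_self]
      rw [hz, zero_mul] at hpr; exact lt_irrefl _ hpr

lemma cube_expand {a b : ℂ} (ha : ‖a‖ = 1) (hb : ‖b‖ = 1) (h : ‖a - b‖ ≤ 1/3) :
    2 * ‖a - b‖ ≤ ‖a^3 - b^3‖ := by
  have hfac : a^3 - b^3 = (a - b) * (a^2 + a*b + b^2) := by ring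
  have hsum : a^2 + a*b + b^2 = 3*a^2 + (b - a)*(2*a + b) := by ring
  have h2 : ‖(3:ℂ)*a^2‖ = 3 := by
    rw [norm_mul, norm_pow, ha]
    simp
  have h3 : ‖(b - a)*(2*a + b)‖ ≤ 1 := by
    rw [norm_mul]
    have e1 : ‖b - a‖ ≤ 1/3 := by rwa [norm_sub_rev] at h
    have e2 : ‖2*a + b‖ ≤ 3 := by
      calc ‖2*a + b‖ ≤ ‖(2:ℂ)*a‖ + ‖b‖ := norm_add_le _ _
      _ ≤ 3 := by rw [norm_mul, ha, hb]; simp; norm_num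
    calc ‖b - a‖ * ‖2*a + b‖ ≤ (1/3) * 3 :=
          mul_le_mul e1 e2 (norm_nonneg _) (by norm_num)
    _ = 1 := by norm_num
  have h4 : 2 ≤ ‖a^2 + a*b + b^2‖ := by
    have := norm_sub_norm_le ((3:ℂ)*a^2) (-((b - a)*(2*a + b)))
    rw [sub_neg_eq_add, norm_neg] at this
    have heq : (3:ℂ)*a^2 + (b - a)*(2*a + b) = a^2 + a*b + b^2 := by ring
    rw [heq, h2] at this
    linarith
  rw [hfac, norm_mul]
  nlinarith [norm_nonneg (a - b)]

lemma cube_root_sep {p q : ℂ} (hp : ‖p‖ = 1) (hq : ‖q‖ = 1) (h3 : p^3 = q^3) (hne : p ≠ q) :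
    1 ≤ ‖p - q‖ := by
  set c := (starRingEnd ℂ) q with hcdef
  have hqc : q * c = 1 := by
    rw [hcdef, Complex.mul_conj]
    norm_cast
    rw [← Complex.sq_norm, hq]; norm_num
  set u := p * c with hudef
  have hu : ‖u‖ = 1 := by
    rw [hudef, norm_mul, hcdef, RCLike.norm_conj, hp, hq]; norm_num
  have h2 : p^2 + p*q + q^2 = 0 := by
    have hd : (p - q) * (p^2 + p*q + q^2) = 0 := by linear_combination h3
    rcases mul_eq_zero.mp hd with h | h
    · exact absurd (sub_eq_zero.mp h) hne
    · exact h
  have hu2 : u^2 + u + 1 = 0 := by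
    have : u^2 + u + 1 = c^2 * (p^2 + p*q + q^2) := by
      rw [hudef]; linear_combination (-(p*c + q*c + 1)) * hqc
    rw [this, h2, mul_zero]
  have eq1 : u.re^2 - u.im^2 + u.re + 1 = 0 := by
    have := congrArg Complex.re hu2
    simp only [Complex.add_re, Complex.one_re, Complex.zero_re, pow_two, Complex.mul_re] at this
    linarith [this]
  have eq2 : 2*u.re*u.im + u.im = 0 := by
    have := congrArg Complex.im hu2
    simp only [Complex.add_im, Complex.one_im, Complex.zero_im, pow_two, Complex.mul_im] at this
    linarith [this]
  have eq3 : u.re^2 + u.im^2 = 1 := by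
    have : ‖u‖^2 = 1 := by rw [hu]; norm_num
    rw [Complex.sq_norm, Complex.normSq_apply] at this
    linarith [this]
  have hure : u.re = -(1/2) := by
    have h5 : u.re * (2*u.re + 1) = 0 := by linear_combination eq1 + eq3
    have h6 : u.im * (2*u.re + 1) = 0 := by linear_combination eq2
    by_contra hcon
    have h7 : 2*u.re + 1 ≠ 0 := fun h0 => hcon (by linarith [h0])
    have h8 : u.re = 0 := by
      rcases mul_eq_zero.mp h5 with h | h
      · exact h
      · exact absurd h h7
    have h9 : u.im = 0 := by
      rcases mul_eq_zero.mp h6 with h | h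
      · exact h
      · exact absurd h h7
    rw [h8, h9] at eq3; norm_num at eq3
  have hure' : p.re * q.re + p.im * q.im = -(1/2) := by
    have : u.re = p.re * q.re + p.im * q.im := by
      rw [hudef, Complex.mul_re, hcdef, Complex.conj_re, Complex.conj_im]
      ring
    linarith [this ▸ hure]
  have hpn : p.re^2 + p.im^2 = 1 := by
    have : ‖p‖^2 = 1 := by rw [hp]; norm_num
    rw [Complex.sq_norm, Complex.normSq_apply] at this
    linarith [this]
  have hqn : q.re^2 + q.im^2 = 1 := by
    have : ‖q‖^2 = 1 := by rw [hq]; norm_num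
    rw [Complex.sq_norm, Complex.normSq_apply] at this
    linarith [this]
  have h7 : ‖p - q‖^2 = 3 := by
    rw [Complex.sq_norm, Complex.normSq_apply]
    simp only [Complex.sub_re, Complex.sub_im]
    nlinarith [hpn, hqn, hure']
  nlinarith [h7, norm_nonneg (p - q)]

lemma cube_fiber_finite (a : ℂ) : {x : ℂ | x^3 = a}.Finite := by
  have h : {x : ℂ | x^3 = a} ⊆ {x : ℂ | (Polynomial.X^3 - Polynomial.C a).IsRoot x} := by
    intro x hx
    simp only [Set.mem_setOf_eq, Polynomial.IsRoot, Polynomial.eval_sub, Polynomial.eval_pow,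
      Polynomial.eval_X, Polynomial.eval_C]
    rw [hx]; ring
  exact (Polynomial.finite_setOf_isRoot (Polynomial.X_pow_sub_C_ne_zero (by norm_num) a)).subset h

/- ## Chord-level lemmas -/

lemma sym2_rep {α : Type*} (q : Sym2 α) : ∃ a b : α, q = s(a, b) :=
  Sym2.ind (fun a b => ⟨a, b, rfl⟩) q

lemma chordSet_mk (a b : SPt) : chordSet s(a, b) = segment ℝ (a:ℂ) (b:ℂ) := rfl

lemma chordMap_mk (d : ℕ) (a b : SPt) : chordMap d s(a, b) = s(sigmaS d a, sigmaS d b) :=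
  Sym2.map_pair_eq _ _ _

lemma sigmaS_coe (d : ℕ) (z : SPt) : ((sigmaS d z : SPt) : ℂ) = (z:ℂ)^d := rfl

lemma seg_compact (a b : ℂ) : IsCompact (segment ℝ a b) := by
  rw [segment_eq_image']
  exact isCompact_Icc.image (by continuity)

lemma chordSet_compact (ℓ : Chord) : IsCompact (chordSet ℓ) := by
  obtain ⟨a, b, rfl⟩ := sym2_rep ℓ
  rw [chordSet_mk]; exact seg_compact _ _

lemma chordSet_nonempty (ℓ : Chord) : (chordSet ℓ).Nonempty := by
  obtain ⟨a, b, rfl⟩ := sym2_rep ℓ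
  rw [chordSet_mk]; exact ⟨a, left_mem_segment _ _ _⟩

lemma chordSet_edist_ne_top (ℓ₁ ℓ₂ : Chord) :
    EMetric.hausdorffEdist (chordSet ℓ₁) (chordSet ℓ₂) ≠ ⊤ :=
  Metric.hausdorffEdist_ne_top_of_nonempty_of_bounded (chordSet_nonempty _) (chordSet_nonempty _)
    (chordSet_compact _).isBounded (chordSet_compact _).isBounded

lemma chordDist_triangle (ℓ₁ ℓ₂ ℓ₃ : Chord) :
    chordDist ℓ₁ ℓ₃ ≤ chordDist ℓ₁ ℓ₂ + chordDist ℓ₂ ℓ₃ :=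
  Metric.hausdorffDist_triangle (chordSet_edist_ne_top _ _)

lemma chordDist_comm (ℓ₁ ℓ₂ : Chord) : chordDist ℓ₁ ℓ₂ = chordDist ℓ₂ ℓ₁ :=
  Metric.hausdorffDist_comm

-- distinct endpoint pairs from segment equality
lemma seg_eq_pairs {a b c d : SPt} (h : segment ℝ (a:ℂ) b = segment ℝ (c:ℂ) d) :
    (a = c ∧ b = d) ∨ (a = d ∧ b = c) := by
  have hmem : ∀ (x y z : SPt), (x:ℂ) ∈ segment ℝ (y:ℂ) (z:ℂ) → x = y ∨ x = z := by
    intro x y z hx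
    rcases seg_unit_mem y.2 z.2 hx x.2 with h' | h'
    · exact Or.inl (Subtype.ext h')
    · exact Or.inr (Subtype.ext h')
  have hA : a = c ∨ a = d := hmem a c d (h ▸ left_mem_segment ℝ (a:ℂ) (b:ℂ))
  have hB : b = c ∨ b = d := hmem b c d (h ▸ right_mem_segment ℝ (a:ℂ) (b:ℂ))
  have hC : c = a ∨ c = b := hmem c a b (h ▸ left_mem_segment ℝ (c:ℂ) (d:ℂ))
  have hD : d = a ∨ d = b := hmem d a b (h ▸ right_mem_segment ℝ (c:ℂ) (d:ℂ))
  rcases hA with rfl | rfl <;> rcases hB with rfl | rfl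
  · rcases hD with rfl | rfl
    · exact Or.inl ⟨rfl, rfl⟩
    · exact Or.inl ⟨rfl, rfl⟩
  · exact Or.inl ⟨rfl, rfl⟩
  · exact Or.inr ⟨rfl, rfl⟩
  · rcases hC with rfl | rfl
    · exact Or.inl ⟨rfl, rfl⟩
    · exact Or.inr ⟨rfl, rfl⟩

lemma chordSet_inj {ℓ₁ ℓ₂ : Chord} (h : chordSet ℓ₁ = chordSet ℓ₂) : ℓ₁ = ℓ₂ := by
  obtain ⟨a, b, rfl⟩ := sym2_rep ℓ₁
  obtain ⟨c, d, rfl⟩ := sym2_rep ℓ₂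
  rw [chordSet_mk, chordSet_mk] at h
  rcases seg_eq_pairs h with ⟨rfl, rfl⟩ | ⟨rfl, rfl⟩
  · rfl
  · exact Sym2.eq_swap

lemma mem_openDisk_iff {x : ℂ} : x ∈ openDisk ↔ ‖x‖ < 1 := by
  rw [openDisk, Metric.mem_ball, dist_zero_right]

/-- chord-level crossing openness -/
lemma cross_open_chord {a b c d : SPt} {A B C D : ℕ → SPt}
    (hne : s(a,b) ≠ s(c,d))
    (hx : (chordSet s(a,b) ∩ chordSet s(c,d) ∩ openDisk).Nonempty)
    (hA : Tendsto (fun n => ((A n : SPt) : ℂ)) atTop (nhds (a:ℂ)))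
    (hB : Tendsto (fun n => ((B n : SPt) : ℂ)) atTop (nhds (b:ℂ)))
    (hC : Tendsto (fun n => ((C n : SPt) : ℂ)) atTop (nhds (c:ℂ)))
    (hD : Tendsto (fun n => ((D n : SPt) : ℂ)) atTop (nhds (d:ℂ))) :
    ∀ᶠ n in atTop, Cross s(A n, B n) s(C n, D n) := by
  obtain ⟨p, ⟨hp1, hp2⟩, hp3⟩ := hx
  rw [chordSet_mk] at hp1 hp2
  rw [mem_openDisk_iff] at hp3
  have hpair : ¬(((a:ℂ) = c ∧ (b:ℂ) = d) ∨ ((a:ℂ) = d ∧ (b:ℂ) = c)) := by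
    rintro (⟨h1, h2⟩ | ⟨h1, h2⟩) <;>
      exact hne (Sym2.eq_iff.mpr (by
        first
        | exact Or.inl ⟨Subtype.ext h1, Subtype.ext h2⟩
        | exact Or.inr ⟨Subtype.ext h1, Subtype.ext h2⟩))
  have hev := cross_open_C a.2 b.2 c.2 d.2 hpair hp1 hp2 hp3 hA hB hC hD
  filter_upwards [hev] with n hn
  obtain ⟨⟨x, hx1, hx2, hx3⟩, hnp⟩ := hn
  refine ⟨?_, x, ⟨?_, ?_⟩, mem_openDisk_iff.mpr hx3⟩
  · intro he
    rcases Sym2.eq_iff.mp he with ⟨h1, h2⟩ | ⟨h1, h2⟩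
    · exact hnp (Or.inl ⟨congrArg _ h1, congrArg _ h2⟩)
    · exact hnp (Or.inr ⟨congrArg _ h1, congrArg _ h2⟩)
  · rw [chordSet_mk]; exact hx1
  · rw [chordSet_mk]; exact hx2

/-- pair-set of a lamination -/
def pairs (L : Set Chord) : Set (SPt × SPt) := {q | s(q.1, q.2) ∈ L}

lemma mem_pairs {L : Set Chord} {a b : SPt} : (a, b) ∈ pairs L ↔ s(a,b) ∈ L := Iff.rfl

lemma tendsto_coe_of_tendsto {f : ℕ → SPt} {x : SPt} (h : Tendsto f atTop (nhds x)) :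
    Tendsto (fun n => ((f n : SPt) : ℂ)) atTop (nhds (x:ℂ)) :=
  tendsto_subtype_rng.mp h

/- ## Lamination-level lemmas -/

lemma pairs_closed (Λ : Lamination) : IsClosed (pairs Λ.leaves) := by
  apply IsSeqClosed.isClosed
  rintro q ⟨a, b⟩ hmem hlim
  have ha : Tendsto (fun n => (((q n).1 : SPt) : ℂ)) atTop (nhds ((a : SPt) : ℂ)) :=
    tendsto_coe_of_tendsto ((continuous_fst.tendsto _).comp hlim)
  have hb : Tendsto (fun n => (((q n).2 : SPt) : ℂ)) atTop (nhds ((b : SPt) : ℂ)) :=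
    tendsto_coe_of_tendsto ((continuous_snd.tendsto _).comp hlim)
  by_cases hab : a = b
  · show s(a, b) ∈ Λ.leaves
    rw [← hab]
    exact Λ.diag_mem a
  · -- midpoint argument
    have habC : (a:ℂ) ≠ (b:ℂ) := fun h => hab (Subtype.ext h)
    set p := (a:ℂ) + (2⁻¹:ℝ) • ((b:ℂ) - (a:ℂ)) with hpdef
    have hpmem : p ∈ Λ.plus := by
      have hcl : IsClosed Λ.plus := Λ.plus_compact.isClosed
      have hseq : ∀ n, ((q n).1 : ℂ) + (2⁻¹:ℝ) • (((q n).2 : ℂ) - ((q n).1 : ℂ)) ∈ Λ.plus := by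
        intro n
        have hqn : s((q n).1, (q n).2) ∈ Λ.leaves := hmem n
        show _ ∈ ⋃ ℓ ∈ Λ.leaves, chordSet ℓ
        refine Set.mem_biUnion hqn ?_
        rw [chordSet_mk]
        exact mid_mem_seg _ _
      have hlim2 : Tendsto (fun n => ((q n).1 : ℂ) + (2⁻¹:ℝ) • (((q n).2 : ℂ) - ((q n).1 : ℂ)))
          atTop (nhds p) := ha.add (tendsto_const_nhds.smul (hb.sub ha))
      exact hcl.mem_of_tendsto hlim2 (Filter.Eventually.of_forall hseq)
    obtain ⟨m, hm, hpm⟩ := Set.mem_iUnion₂.mp hpmem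
    by_cases heq : s(a, b) = m
    · show s(a, b) ∈ Λ.leaves
      rw [heq]; exact hm
    · exfalso
      obtain ⟨u, v, rfl⟩ := sym2_rep m
      have hx : (chordSet s(a,b) ∩ chordSet s(u,v) ∩ openDisk).Nonempty := by
        refine ⟨p, ⟨?_, hpm⟩, ?_⟩
        · rw [chordSet_mk]; exact mid_mem_seg _ _
        · rw [mem_openDisk_iff]; exact mid_norm_lt a.2 b.2 habC
      have hev := cross_open_chord heq hx ha hb
        (tendsto_coe_of_tendsto (tendsto_const_nhds (x := u)))
        (tendsto_coe_of_tendsto (tendsto_const_nhds (x := v)))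
      obtain ⟨n, hn⟩ := hev.exists
      exact Λ.no_cross _ (hmem n) _ hm hn

lemma plus_eq_image (L : Set Chord) :
    (⋃ ℓ ∈ L, chordSet ℓ) =
      (fun z : (SPt × SPt) × ℝ => ((z.1.1 : ℂ)) + z.2 • (((z.1.2 : ℂ)) - z.1.1)) ''
        ((pairs L) ×ˢ Set.Icc (0:ℝ) 1) := by
  ext x
  constructor
  · intro hx
    obtain ⟨ℓ, hl, hxl⟩ := Set.mem_iUnion₂.mp hx
    obtain ⟨a, b, rfl⟩ := sym2_rep ℓ
    rw [chordSet_mk] at hxl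
    obtain ⟨t, ht, hxt⟩ := seg_rep hxl
    exact ⟨((a, b), t), ⟨hl, ht⟩, hxt.symm⟩
  · rintro ⟨⟨⟨a, b⟩, t⟩, ⟨hq, ht⟩, rfl⟩
    show (a:ℂ) + t • ((b:ℂ) - (a:ℂ)) ∈ ⋃ ℓ ∈ L, chordSet ℓ
    refine Set.mem_biUnion hq ?_
    rw [chordSet_mk]
    exact seg_mem_of_param ht rfl

lemma plus_compact_of_closed {L : Set Chord} (hL : IsClosed (pairs L)) :
    IsCompact (⋃ ℓ ∈ L, chordSet ℓ) := by
  rw [plus_eq_image]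
  apply IsCompact.image (hL.isCompact.prod isCompact_Icc)
  apply Continuous.add
  · exact continuous_subtype_val.comp (continuous_fst.comp continuous_fst)
  · exact continuous_snd.smul ((continuous_subtype_val.comp (continuous_snd.comp continuous_fst)).sub
      (continuous_subtype_val.comp (continuous_fst.comp continuous_fst)))

/-- every sibling-forward-invariant nonempty set of leaves has a long leaf -/
lemma long_leaf_exists {L : Set Chord} (hfw : ∀ ℓ ∈ L, chordMap 3 ℓ ∈ L)
    (hne : ∃ ℓ ∈ L, ¬ ℓ.IsDiag) :
    ∃ a b : SPt, s(a,b) ∈ L ∧ 1/3 ≤ ‖(a:ℂ) - (b:ℂ)‖ := by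
  by_contra hcon
  push_neg at hcon
  obtain ⟨ℓ₀, hℓ₀, hnd⟩ := hne
  obtain ⟨a₀, b₀, rfl⟩ := sym2_rep ℓ₀
  have hab : a₀ ≠ b₀ := fun h => hnd (Sym2.mk_isDiag_iff.mpr h)
  have habC : (a₀:ℂ) ≠ (b₀:ℂ) := fun h => hab (Subtype.ext h)
  set e := ‖(a₀:ℂ) - (b₀:ℂ)‖ with hedef
  have he : 0 < e := norm_pos_iff.mpr (sub_ne_zero.mpr habC)
  set A := fun n => (sigmaS 3)^[n] a₀ with hA
  set B := fun n => (sigmaS 3)^[n] b₀ with hB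
  have hAs : ∀ k, A (k+1) = sigmaS 3 (A k) := by
    intro k; rw [hA]; exact Function.iterate_succ_apply' _ _ _
  have hBs : ∀ k, B (k+1) = sigmaS 3 (B k) := by
    intro k; rw [hB]; exact Function.iterate_succ_apply' _ _ _
  have hmem : ∀ n, s(A n, B n) ∈ L := by
    intro n
    induction n with
    | zero => exact hℓ₀
    | succ k ih =>
      have : s(A (k+1), B (k+1)) = chordMap 3 s(A k, B k) := by
        rw [chordMap_mk, hAs, hBs]
      rw [this]
      exact hfw _ ih
  have hgrow : ∀ n, 2^n * e ≤ ‖((A n : SPt) : ℂ) - ((B n : SPt) : ℂ)‖ := by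
    intro n
    induction n with
    | zero => simp [hA, hB, hedef]
    | succ k ih =>
      have hlt : ‖((A k : SPt) : ℂ) - ((B k : SPt) : ℂ)‖ < 1/3 := hcon (A k) (B k) (hmem k)
      have hstep := cube_expand (A k).2 (B k).2 (le_of_lt hlt)
      have hAk : ((A (k+1) : SPt) : ℂ) = ((A k : SPt) : ℂ)^3 := by
        rw [hAs]; rfl
      have hBk : ((B (k+1) : SPt) : ℂ) = ((B k : SPt) : ℂ)^3 := by
        rw [hBs]; rfl
      rw [hAk, hBk]
      calc 2^(k+1) * e = 2 * (2^k * e) := by ring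
      _ ≤ 2 * ‖((A k : SPt) : ℂ) - ((B k : SPt) : ℂ)‖ := by linarith [ih]
      _ ≤ _ := hstep
  obtain ⟨n, hn⟩ := pow_unbounded_of_one_lt (2/e) (by norm_num : (1:ℝ) < 2)
  have h2 : ‖((A n : SPt) : ℂ) - ((B n : SPt) : ℂ)‖ ≤ 2 := by
    calc ‖((A n : SPt) : ℂ) - ((B n : SPt) : ℂ)‖ ≤ ‖((A n : SPt) : ℂ)‖ + ‖((B n : SPt) : ℂ)‖ :=
          norm_sub_le _ _
    _ = 2 := by rw [(A n).2, (B n).2]; norm_num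
  have h3 : 2 < 2^n * e := by
    rw [div_lt_iff₀ he] at hn
    linarith
  linarith [hgrow n]

lemma chord_fiber_finite (ℓ : Chord) : {p : Chord | chordMap 3 p = ℓ}.Finite := by
  obtain ⟨a, b, rfl⟩ := sym2_rep ℓ
  have hfib : ∀ z : SPt, {u : SPt | sigmaS 3 u = z}.Finite := by
    intro z
    have : {u : SPt | sigmaS 3 u = z} ⊆ (fun u : SPt => (u : ℂ)) ⁻¹' {x : ℂ | x^3 = (z:ℂ)} := by
      intro u hu
      simp only [Set.mem_preimage, Set.mem_setOf_eq]
      exact congrArg Subtype.val hu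
    exact ((cube_fiber_finite (z:ℂ)).preimage (Subtype.coe_injective.injOn)).subset this
  have hsub : {p : Chord | chordMap 3 p = s(a,b)} ⊆
      (fun q : SPt × SPt => s(q.1, q.2)) ''
        (({u | sigmaS 3 u = a} ×ˢ {u | sigmaS 3 u = b}) ∪
         ({u | sigmaS 3 u = b} ×ˢ {u | sigmaS 3 u = a})) := by
    intro p hp
    obtain ⟨u, v, rfl⟩ := sym2_rep p
    rw [Set.mem_setOf_eq, chordMap_mk] at hp
    rcases Sym2.eq_iff.mp hp with ⟨h1, h2⟩ | ⟨h1, h2⟩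
    · exact ⟨(u, v), Or.inl ⟨h1, h2⟩, rfl⟩
    · exact ⟨(u, v), Or.inr ⟨h1, h2⟩, rfl⟩
  exact ((((hfib a).prod (hfib b)).union ((hfib b).prod (hfib a))).image _).subset hsub

/-- chain + finite set intersection lemma -/
lemma chain_finite_inter {α : Type*} {F : Set α} (hF : F.Finite) {c : Set (Set α)}
    (hc : IsChain (· ⊆ ·) c) (hcne : c.Nonempty) (h : ∀ L ∈ c, (F ∩ L).Nonempty) :
    (F ∩ ⋂₀ c).Nonempty := by
  set N := {n : ℕ | ∃ L ∈ c, (F ∩ L).ncard = n} with hN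
  have hNne : N.Nonempty := by
    obtain ⟨L, hL⟩ := hcne
    exact ⟨(F ∩ L).ncard, L, hL, rfl⟩
  obtain ⟨n, hnN, hmin⟩ := wellFounded_lt.has_min N hNne
  obtain ⟨L₀, hL₀, hn⟩ := hnN
  have hsub : ∀ L ∈ c, F ∩ L₀ ⊆ F ∩ L := by
    intro L hL
    rcases eq_or_ne L L₀ with rfl | hne'
    · exact subset_rfl
    rcases hc.total hL₀ hL with h' | h'
    · exact Set.inter_subset_inter_right F h'
    · have h1 : F ∩ L ⊆ F ∩ L₀ := Set.inter_subset_inter_right F h'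
      have h2 : (F ∩ L₀).ncard ≤ (F ∩ L).ncard := by
        rw [hn]
        by_contra hlt
        push_neg at hlt
        exact hmin _ ⟨L, hL, rfl⟩ hlt
      have := Set.eq_of_subset_of_ncard_le h1 h2 (hF.inter_of_left L₀)
      rw [this]
  obtain ⟨x, hxF, hxL₀⟩ := h L₀ hL₀
  refine ⟨x, hxF, ?_⟩
  rw [Set.mem_sInter]
  intro L hL
  exact (hsub L hL ⟨hxF, hxL₀⟩).2

/- ## Chief existence (Part 1) -/

def InvS (L : Set Chord) : Prop :=
  (∀ ℓ ∈ L, chordMap 3 ℓ ∈ L) ∧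
  (∀ ℓ ∈ L, ∃ p ∈ L, chordMap 3 p = ℓ) ∧
  (∀ ℓ ∈ L, ¬ (chordMap 3 ℓ).IsDiag →
    ∃ s : Fin 3 → Chord, (∃ i, s i = ℓ) ∧ (∀ i, s i ∈ L) ∧
      Function.Injective s ∧
      (∀ i j, i ≠ j → chordSet (s i) ∩ chordSet (s j) = ∅) ∧
      (∀ i, chordMap 3 (s i) = chordMap 3 ℓ))

lemma invS_iff (Λ : Lamination) : Λ.Invariant 3 ↔ InvS Λ.leaves := Iff.rfl

def mkLam (Λ : Lamination) (L : Set Chord) (h1 : L ⊆ Λ.leaves)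
    (h2 : ∀ z, Sym2.diag z ∈ L) (h3 : IsClosed (pairs L)) : Lamination where
  leaves := L
  no_cross := fun ℓ₁ m1 ℓ₂ m2 => Λ.no_cross _ (h1 m1) _ (h1 m2)
  diag_mem := h2
  plus_compact := plus_compact_of_closed h3

lemma chief_exists (Λ : Lamination) (hinv : Λ.Invariant 3) (hne : Λ.NonemptyLam) :
    ∃ Λc : Lamination, IsChiefOf 3 Λc Λ := by
  classical
  set S : Set (Set Chord) := {L | L ⊆ Λ.leaves ∧ (∀ z, Sym2.diag z ∈ L) ∧
    IsClosed (pairs L) ∧ InvS L ∧ (∃ ℓ ∈ L, ¬ ℓ.IsDiag)} with hSdef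
  have hΛS : Λ.leaves ∈ S := ⟨subset_rfl, Λ.diag_mem, pairs_closed Λ, hinv, hne⟩
  have hchain : ∀ c ⊆ S, IsChain (· ⊆ ·) c → c.Nonempty → ∃ lb ∈ S, ∀ s ∈ c, lb ⊆ s := by
    intro c hcS hchain hcne
    obtain ⟨L₀, hL₀⟩ := hcne
    refine ⟨⋂₀ c, ⟨?_, ?_, ?_, ⟨?_, ?_, ?_⟩, ?_⟩, fun L hL => Set.sInter_subset_of_mem hL⟩
    · exact (Set.sInter_subset_of_mem hL₀).trans (hcS hL₀).1
    · intro z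
      rw [Set.mem_sInter]
      exact fun L hL => (hcS hL).2.1 z
    · have : pairs (⋂₀ c) = ⋂ L ∈ c, pairs L := by
        ext q
        simp only [pairs, Set.mem_setOf_eq, Set.mem_sInter, Set.mem_iInter]
      rw [this]
      exact isClosed_biInter (fun L hL => (hcS hL).2.2.1)
    · intro ℓ hℓ
      rw [Set.mem_sInter] at hℓ ⊢
      exact fun L hL => (hcS hL).2.2.2.1.1 ℓ (hℓ L hL) 
    · intro ℓ hℓ
      rw [Set.mem_sInter] at hℓ
      have hF : {p : Chord | chordMap 3 p = ℓ}.Finite := chord_fiber_finite ℓ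
      have hnon : ∀ L ∈ c, ({p : Chord | chordMap 3 p = ℓ} ∩ L).Nonempty := by
        intro L hL
        obtain ⟨p, hp, hmap⟩ := (hcS hL).2.2.2.1.2.1 ℓ (hℓ L hL)
        exact ⟨p, hmap, hp⟩
      obtain ⟨p, hpF, hpI⟩ := chain_finite_inter hF hchain ⟨L₀, hL₀⟩ hnon
      exact ⟨p, hpI, hpF⟩
    · intro ℓ hℓ himg
      have hℓ' := Set.mem_sInter.mp hℓ
      set F' : Set Chord := {p : Chord | chordMap 3 p = chordMap 3 ℓ} with hF'def
      have hF' : F'.Finite := chord_fiber_finite _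
      set T : Set (Fin 3 → Chord) := {s | (∃ i, s i = ℓ) ∧ Function.Injective s ∧
        (∀ i j, i ≠ j → chordSet (s i) ∩ chordSet (s j) = ∅) ∧
        (∀ i, chordMap 3 (s i) = chordMap 3 ℓ)} with hTdef
      have hT : T.Finite := by
        have hsub : T ⊆ Set.pi Set.univ (fun _ : Fin 3 => F') := by
          intro s hs
          rw [Set.mem_univ_pi]
          exact fun i => hs.2.2.2 i
        exact (Set.Finite.pi (fun _ => hF')).subset hsub
      set G : Set Chord → Set (Fin 3 → Chord) := fun L => {s | ∀ i, s i ∈ L} with hGdef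
      have hGmono : ∀ {L₁ L₂}, L₁ ⊆ L₂ → G L₁ ⊆ G L₂ :=
        fun h s hs i => h (hs i)
      have hchain' : IsChain (· ⊆ ·) (G '' c) := by
        rintro _ ⟨L₁, hL₁, rfl⟩ _ ⟨L₂, hL₂, rfl⟩ hne'
        rcases eq_or_ne L₁ L₂ with rfl | hne''
        · exact absurd rfl hne'
        rcases hchain hL₁ hL₂ hne'' with h | h
        · exact Or.inl (hGmono h)
        · exact Or.inr (hGmono h)
      have hnon : ∀ M ∈ G '' c, (T ∩ M).Nonempty := by
        rintro _ ⟨L, hL, rfl⟩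
        obtain ⟨s, hsi, hsm, hinj, hdisj, hmap⟩ := (hcS hL).2.2.2.1.2.2 ℓ (hℓ' L hL) himg
        exact ⟨s, ⟨hsi, hinj, hdisj, hmap⟩, hsm⟩
      obtain ⟨s, hsT, hsI⟩ := chain_finite_inter hT hchain' ⟨G L₀, L₀, hL₀, rfl⟩ hnon
      refine ⟨s, hsT.1, ?_, hsT.2.1, hsT.2.2.1, hsT.2.2.2⟩
      intro i
      rw [Set.mem_sInter]
      intro L hL
      have : G L ∈ G '' c := ⟨L, hL, rfl⟩
      exact (Set.mem_sInter.mp hsI _ this) i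
    · -- nonemptiness via compactness
      set K : Set (SPt × SPt) := {q | 1/3 ≤ ‖(q.1 : ℂ) - (q.2 : ℂ)‖} with hKdef
      have hKcl : IsClosed K := by
        have : K = (fun q : SPt × SPt => ‖(q.1 : ℂ) - (q.2 : ℂ)‖) ⁻¹' Set.Ici (1/3) := rfl
        rw [this]
        apply IsClosed.preimage _ isClosed_Ici
        exact ((continuous_subtype_val.comp continuous_fst).sub
          (continuous_subtype_val.comp continuous_snd)).norm
      have hmain := IsCompact.nonempty_iInter_of_directed_nonempty_isCompact_isClosed
        (X := SPt × SPt) (ι := {L // L ∈ c}) (hι := ⟨⟨L₀, hL₀⟩⟩)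
        (fun L => pairs L.1 ∩ K) ?_ ?_ ?_ ?_
      · obtain ⟨q, hq⟩ := hmain
        rw [Set.mem_iInter] at hq
        refine ⟨s(q.1, q.2), ?_, ?_⟩
        · rw [Set.mem_sInter]
          exact fun L hL => (hq ⟨L, hL⟩).1
        · intro hd
          have : (q.1 : ℂ) = q.2 := congrArg _ (Sym2.mk_isDiag_iff.mp hd)
          have h2 := (hq ⟨L₀, hL₀⟩).2
          rw [Set.mem_setOf_eq, this, sub_self, norm_zero] at h2
          linarith
      · -- directed
        rintro ⟨L₁, hL₁⟩ ⟨L₂, hL₂⟩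
        rcases eq_or_ne L₁ L₂ with rfl | hne'
        · exact ⟨⟨L₁, hL₁⟩, subset_rfl, subset_rfl⟩
        rcases hchain hL₁ hL₂ hne' with h | h
        · refine ⟨⟨L₁, hL₁⟩, subset_rfl, ?_⟩
          exact Set.inter_subset_inter_left K (fun q hq => h hq)
        · refine ⟨⟨L₂, hL₂⟩, ?_, subset_rfl⟩
          exact Set.inter_subset_inter_left K (fun q hq => h hq)
      · -- nonempty
        rintro ⟨L, hL⟩
        obtain ⟨a, b, hmem, hlen⟩ := long_leaf_exists (hcS hL).2.2.2.1.1 (hcS hL).2.2.2.2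
        exact ⟨(a, b), hmem, hlen⟩
      · rintro ⟨L, hL⟩
        exact (((hcS hL).2.2.1.inter hKcl).isCompact)
      · rintro ⟨L, hL⟩
        exact (hcS hL).2.2.1.inter hKcl
  obtain ⟨m, hmsub, hmin⟩ := zorn_superset_nonempty S hchain Λ.leaves hΛS
  have hmS : m ∈ S := hmin.1
  refine ⟨mkLam Λ m hmS.1 hmS.2.1 hmS.2.2.1, hmS.1, hmS.2.2.2.1, hmS.2.2.2.2, ?_⟩
  intro Λ' hsub' hinv' hne'
  have hΛ'S : Λ'.leaves ∈ S :=
    ⟨hsub'.trans hmS.1, Λ'.diag_mem, pairs_closed Λ', hinv', hne'⟩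
  exact Set.Subset.antisymm hsub' (hmin.2 hΛ'S hsub')

/- ## Part 2 helpers -/

lemma continuous_sigmaS (d : ℕ) : Continuous (sigmaS d) :=
  Continuous.subtype_mk (continuous_subtype_val.pow d) _

lemma tendsto_sigmaS {f : ℕ → SPt} {x : SPt} (h : Tendsto f atTop (nhds x)) :
    Tendsto (fun n => sigmaS 3 (f n)) atTop (nhds (sigmaS 3 x)) :=
  ((continuous_sigmaS 3).tendsto _).comp h

lemma exists_const_extraction {β : Type*} [Finite β] (f : ℕ → β) :
    ∃ (b : β) (φ : ℕ → ℕ), StrictMono φ ∧ ∀ j, f (φ j) = b := by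
  obtain ⟨b, hb⟩ := Finite.exists_infinite_fiber f
  have hfreq : ∃ᶠ n in atTop, f n = b := by
    rw [Nat.frequently_atTop_iff_infinite]
    exact Set.infinite_coe_iff.mp hb
  obtain ⟨φ, hφ, hfb⟩ := Filter.extraction_of_frequently_atTop hfreq
  exact ⟨b, φ, hφ, hfb⟩

lemma frequently_or_of_forall {A B : ℕ → Prop} (h : ∀ n, A n ∨ B n) :
    (∃ᶠ n in atTop, A n) ∨ (∃ᶠ n in atTop, B n) := by
  rw [← Filter.frequently_or_distrib]
  exact Filter.Frequently.of_forall h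

lemma limit_sym2_eq {P Q R S : ℕ → SPt} {p q r s : SPt}
    (hP : Tendsto P atTop (nhds p)) (hQ : Tendsto Q atTop (nhds q))
    (hR : Tendsto R atTop (nhds r)) (hS : Tendsto S atTop (nhds s))
    (h : ∀ k, s(P k, Q k) = s(R k, S k)) : s(p, q) = s(r, s) := by
  have hcases : ∀ k, (P k = R k ∧ Q k = S k) ∨ (P k = S k ∧ Q k = R k) :=
    fun k => Sym2.eq_iff.mp (h k)
  rcases frequently_or_of_forall hcases with hf | hf
  · obtain ⟨φ, hφ, hc⟩ := Filter.extraction_of_frequently_atTop hf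
    have h1 : p = r := tendsto_nhds_unique (hP.comp hφ.tendsto_atTop)
      (by
        have : (fun j => P (φ j)) = fun j => R (φ j) := funext (fun j => (hc j).1)
        rw [show (P ∘ φ) = fun j => P (φ j) from rfl, this]
        exact hR.comp hφ.tendsto_atTop)
    have h2 : q = s := tendsto_nhds_unique (hQ.comp hφ.tendsto_atTop)
      (by
        have : (fun j => Q (φ j)) = fun j => S (φ j) := funext (fun j => (hc j).2)
        rw [show (Q ∘ φ) = fun j => Q (φ j) from rfl, this]
        exact hS.comp hφ.tendsto_atTop)
    rw [h1, h2]
  · obtain ⟨φ, hφ, hc⟩ := Filter.extraction_of_frequently_atTop hf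
    have h1 : p = s := tendsto_nhds_unique (hP.comp hφ.tendsto_atTop)
      (by
        have : (fun j => P (φ j)) = fun j => S (φ j) := funext (fun j => (hc j).1)
        rw [show (P ∘ φ) = fun j => P (φ j) from rfl, this]
        exact hS.comp hφ.tendsto_atTop)
    have h2 : q = r := tendsto_nhds_unique (hQ.comp hφ.tendsto_atTop)
      (by
        have : (fun j => Q (φ j)) = fun j => R (φ j) := funext (fun j => (hc j).2)
        rw [show (Q ∘ φ) = fun j => Q (φ j) from rfl, this]
        exact hR.comp hφ.tendsto_atTop)
    rw [h1, h2, Sym2.eq_swap]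

lemma mem_sym2_pair_eq {α : Type*} {x y u v : α} (hx : x ∈ s(u,v)) (hy : y ∈ s(u,v))
    (hne : x ≠ y) : s(x, y) = s(u, v) := by
  rcases Sym2.mem_iff.mp hx with rfl | rfl <;> rcases Sym2.mem_iff.mp hy with rfl | rfl
  · exact absurd rfl hne
  · rfl
  · exact Sym2.eq_swap
  · exact absurd rfl hne

lemma seg_point_dist {a b c d : ℂ} {t : ℝ} (ht : t ∈ Set.Icc (0:ℝ) 1) :
    dist (a + t • (b - a)) (c + t • (d - c)) ≤ max (dist a c) (dist b d) := by
  rw [dist_eq_norm]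
  have heq : a + t • (b - a) - (c + t • (d - c)) =
      ((1 - t : ℝ):ℂ) * (a - c) + (t:ℂ) * (b - d) := by
    simp only [Complex.real_smul]
    push_cast
    ring
  rw [heq]
  calc ‖((1 - t : ℝ):ℂ) * (a - c) + (t:ℂ) * (b - d)‖
      ≤ ‖((1 - t : ℝ):ℂ) * (a - c)‖ + ‖(t:ℂ) * (b - d)‖ := norm_add_le _ _
  _ = (1 - t) * ‖a - c‖ + t * ‖b - d‖ := by
      rw [norm_mul, norm_mul, Complex.norm_real, Complex.norm_real, Real.norm_eq_abs,
        Real.norm_eq_abs, abs_of_nonneg (by linarith [ht.2]), abs_of_nonneg ht.1]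
  _ ≤ (1 - t) * max (dist a c) (dist b d) + t * max (dist a c) (dist b d) := by
      apply add_le_add
      · apply mul_le_mul_of_nonneg_left _ (by linarith [ht.2])
        rw [dist_eq_norm]; exact le_max_left _ _
      · apply mul_le_mul_of_nonneg_left _ ht.1
        rw [dist_eq_norm b d]; exact le_max_right _ _
  _ = max (dist a c) (dist b d) := by ring

lemma chordDist_le_endpoints (a b c d : SPt) :
    chordDist s(a,b) s(c,d) ≤ max (dist (a:ℂ) (c:ℂ)) (dist (b:ℂ) (d:ℂ)) := by
  rw [chordDist, chordSet_mk, chordSet_mk]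
  apply Metric.hausdorffDist_le_of_mem_dist (le_max_iff.mpr (Or.inl dist_nonneg))
  · intro x hx
    obtain ⟨t, ht, rfl⟩ := seg_rep hx
    exact ⟨(c:ℂ) + t • ((d:ℂ) - c), seg_mem_of_param ht rfl, seg_point_dist ht⟩
  · intro x hx
    obtain ⟨t, ht, rfl⟩ := seg_rep hx
    refine ⟨(a:ℂ) + t • ((b:ℂ) - a), seg_mem_of_param ht rfl, ?_⟩
    rw [dist_comm]
    exact seg_point_dist ht

lemma chordDist_nonneg (ℓ₁ ℓ₂ : Chord) : 0 ≤ chordDist ℓ₁ ℓ₂ :=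
  Metric.hausdorffDist_nonneg

lemma chordDist_zero_iff (ℓ₁ ℓ₂ : Chord) : chordDist ℓ₁ ℓ₂ = 0 ↔ ℓ₁ = ℓ₂ := by
  constructor
  · intro h
    apply chordSet_inj
    exact ((chordSet_compact ℓ₁).isClosed.hausdorffDist_zero_iff_eq
      (chordSet_compact ℓ₂).isClosed (chordSet_edist_ne_top _ _)).mp h
  · rintro rfl
    exact Metric.hausdorffDist_self_zero

/-- from chordDist convergence extract endpoint-convergent subsequence -/
lemma chord_approx_endpoints {e : ℕ → Chord} {c : Chord}
    (h : Tendsto (fun k => chordDist (e k) c) atTop (nhds 0)) :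
    ∃ (φ : ℕ → ℕ) (u v : ℕ → SPt) (p q : SPt), StrictMono φ ∧
      (∀ j, e (φ j) = s(u j, v j)) ∧ c = s(p, q) ∧
      Tendsto (fun j => ((u j : SPt) : ℂ)) atTop (nhds (p:ℂ)) ∧
      Tendsto (fun j => ((v j : SPt) : ℂ)) atTop (nhds (q:ℂ)) := by
  have hrep : ∀ k, ∃ w : SPt × SPt, e k = s(w.1, w.2) := by
    intro k
    obtain ⟨u, v, huv⟩ := sym2_rep (e k)
    exact ⟨(u, v), huv⟩
  choose W hW using hrep
  obtain ⟨pq, _, φ, hφ, hconv⟩ := IsCompact.tendsto_subseq (isCompact_univ (X := SPt × SPt))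
    (fun k => Set.mem_univ (W k))
  have hu : Tendsto (fun j => (W (φ j)).1) atTop (nhds pq.1) :=
    (continuous_fst.tendsto _).comp hconv
  have hv : Tendsto (fun j => (W (φ j)).2) atTop (nhds pq.2) :=
    (continuous_snd.tendsto _).comp hconv
  have hceq : c = s(pq.1, pq.2) := by
    have h1 : Tendsto (fun j => chordDist (e (φ j)) s(pq.1, pq.2)) atTop (nhds 0) := by
      have hb : Tendsto (fun j => max (dist ((W (φ j)).1 : ℂ) (pq.1:ℂ))
          (dist ((W (φ j)).2 : ℂ) (pq.2:ℂ))) atTop (nhds 0) := by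
        have h1 := tendsto_coe_of_tendsto hu
        have h2 := tendsto_coe_of_tendsto hv
        have := ((tendsto_iff_dist_tendsto_zero.mp h1).max (tendsto_iff_dist_tendsto_zero.mp h2))
        simpa using this
      apply squeeze_zero (fun j => chordDist_nonneg _ _) _ hb
      intro j
      rw [hW (φ j)]
      exact chordDist_le_endpoints _ _ _ _
    have h2 : Tendsto (fun j => chordDist (e (φ j)) c) atTop (nhds 0) :=
      h.comp hφ.tendsto_atTop
    have h3 : chordDist c s(pq.1, pq.2) = 0 := by
      have hle : ∀ j, chordDist c s(pq.1, pq.2) ≤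
          chordDist (e (φ j)) c + chordDist (e (φ j)) s(pq.1, pq.2) := by
        intro j
        calc chordDist c s(pq.1, pq.2) ≤ chordDist c (e (φ j)) + chordDist (e (φ j)) s(pq.1, pq.2) :=
              chordDist_triangle _ _ _
        _ = chordDist (e (φ j)) c + chordDist (e (φ j)) s(pq.1, pq.2) := by
              rw [chordDist_comm]
      have hlim : Tendsto (fun j => chordDist (e (φ j)) c + chordDist (e (φ j)) s(pq.1, pq.2))
          atTop (nhds 0) := by simpa using h2.add h1
      have := le_of_tendsto_of_tendsto' tendsto_const_nhds hlim hle
      linarith [chordDist_nonneg c s(pq.1, pq.2), this]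
    exact (chordDist_zero_iff _ _).mp h3
  exact ⟨φ, fun j => (W (φ j)).1, fun j => (W (φ j)).2, pq.1, pq.2, hφ,
    fun j => hW (φ j), hceq, tendsto_coe_of_tendsto hu, tendsto_coe_of_tendsto hv⟩

/- ## Hyperspace limit lemmas -/

open TopologicalSpace in
lemma hyper_edist_ne_top {α : Type*} [MetricSpace α] (s t : NonemptyCompacts α) :
    EMetric.hausdorffEdist (s : Set α) (t : Set α) ≠ ⊤ :=
  Metric.hausdorffEdist_ne_top_of_nonempty_of_bounded s.nonempty t.nonempty
    s.isCompact.isBounded t.isCompact.isBounded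

open TopologicalSpace in
lemma hyper_limit_mem {α : Type*} [MetricSpace α] {Rc : ℕ → NonemptyCompacts α}
    {R : NonemptyCompacts α} (hconv : Tendsto Rc atTop (nhds R))
    {σ : ℕ → α} {ψ : ℕ → ℕ} (hψ : StrictMono ψ) (hmem : ∀ j, σ j ∈ (Rc (ψ j) : Set α))
    {x : α} (hx : Tendsto σ atTop (nhds x)) : x ∈ (R : Set α) := by
  have hd : Tendsto (fun j => dist (Rc (ψ j)) R) atTop (nhds 0) :=
    (tendsto_iff_dist_tendsto_zero.mp hconv).comp hψ.tendsto_atTop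
  have hb : ∀ j, Metric.infDist x (R : Set α) ≤ dist x (σ j) + dist (Rc (ψ j)) R := by
    intro j
    calc Metric.infDist x (R : Set α) ≤ Metric.infDist (σ j) (R : Set α) + dist x (σ j) :=
          Metric.infDist_le_infDist_add_dist
    _ ≤ Metric.hausdorffDist (Rc (ψ j) : Set α) (R : Set α) + dist x (σ j) := by
          apply add_le_add_left
          exact Metric.infDist_le_hausdorffDist_of_mem (hmem j) (hyper_edist_ne_top _ _)
    _ = dist x (σ j) + dist (Rc (ψ j)) R := by rw [add_comm]; rfl
  have hdist : Tendsto (fun j => dist x (σ j) + dist (Rc (ψ j)) R) atTop (nhds 0) := by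
    have h1 : Tendsto (fun j => dist x (σ j)) atTop (nhds 0) := by
      have := tendsto_iff_dist_tendsto_zero.mp hx
      simpa [dist_comm] using this
    simpa using h1.add hd
  have hle : Metric.infDist x (R : Set α) ≤ 0 :=
    le_of_tendsto_of_tendsto' tendsto_const_nhds hdist hb
  have h0 : Metric.infDist x (R : Set α) = 0 :=
    le_antisymm hle Metric.infDist_nonneg
  exact (R.isCompact.isClosed.mem_iff_infDist_zero R.nonempty).mpr h0

open TopologicalSpace in
lemma hyper_approx {α : Type*} [MetricSpace α] {Rc : ℕ → NonemptyCompacts α}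
    {R : NonemptyCompacts α} (hconv : Tendsto Rc atTop (nhds R))
    {x : α} (hx : x ∈ (R : Set α)) :
    ∃ σ : ℕ → α, (∀ k, σ k ∈ (Rc k : Set α)) ∧ Tendsto σ atTop (nhds x) := by
  have hch : ∀ k, ∃ y ∈ (Rc k : Set α), Metric.infDist x (Rc k : Set α) = dist x y :=
    fun k => (Rc k).isCompact.exists_infDist_eq_dist (Rc k).nonempty x
  choose σ hmem hdist using hch
  refine ⟨σ, hmem, ?_⟩
  rw [tendsto_iff_dist_tendsto_zero]
  have hx0 : Metric.infDist x (R : Set α) = 0 := Metric.infDist_zero_of_mem hx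
  have hlip : ∀ k, dist x (σ k) ≤ dist (Rc k) R := by
    intro k
    rw [← hdist k]
    have := (Metric.lipschitz_infDist_set x).dist_le_mul (Rc k) R
    rw [Real.dist_eq, hx0, sub_zero, NNReal.coe_one, one_mul] at this
    calc Metric.infDist x (Rc k : Set α) ≤ |Metric.infDist x (Rc k : Set α)| := le_abs_self _
    _ ≤ dist (Rc k) R := this
  have h2 : Tendsto (fun k => dist (Rc k) R) atTop (nhds 0) :=
    tendsto_iff_dist_tendsto_zero.mp hconv
  exact squeeze_zero (fun k => dist_nonneg) (fun k => by rw [dist_comm]; exact hlip k) h2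

open TopologicalSpace in
lemma hyper_two_sided {α : Type*} [MetricSpace α] {Rc : ℕ → NonemptyCompacts α}
    {R : NonemptyCompacts α} (hconv : Tendsto Rc atTop (nhds R)) {ε : ℝ} (hε : 0 < ε) :
    ∀ᶠ k in atTop, (∀ x ∈ (Rc k : Set α), ∃ y ∈ (R : Set α), dist x y < ε) ∧
      (∀ y ∈ (R : Set α), ∃ x ∈ (Rc k : Set α), dist x y < ε) := by
  have hd : Tendsto (fun k => dist (Rc k) R) atTop (nhds 0) :=
    tendsto_iff_dist_tendsto_zero.mp hconv
  filter_upwards [hd.eventually_lt_const hε] with k hk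
  have hk' : Metric.hausdorffDist (Rc k : Set α) (R : Set α) < ε := hk
  constructor
  · intro x hx
    exact Metric.exists_dist_lt_of_hausdorffDist_lt hx hk' (hyper_edist_ne_top _ _)
  · intro y hy
    obtain ⟨x, hx, hd'⟩ := Metric.exists_dist_lt_of_hausdorffDist_lt' hy hk' (hyper_edist_ne_top _ _)
    exact ⟨x, hx, hd'⟩

/- ## Limit lamination -/

open TopologicalSpace in
lemma limit_lamination {Θ : ℕ → Lamination} (hinv : ∀ k, (Θ k).Invariant 3)
    (hnem : ∀ k, (Θ k).NonemptyLam)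
    {Rc : ℕ → NonemptyCompacts (SPt × SPt)}
    (hRc : ∀ k, (Rc k : Set (SPt × SPt)) = pairs (Θ k).leaves)
    {R : NonemptyCompacts (SPt × SPt)} (hconv : Tendsto Rc atTop (nhds R)) :
    ∃ Λ : Lamination, Λ.Invariant 3 ∧ Λ.NonemptyLam ∧
      pairs Λ.leaves = (R : Set (SPt × SPt)) := by
  classical
  set RS := (R : Set (SPt × SPt)) with hRSdef
  set LL : Set Chord := {ℓ : Chord | ∃ q : SPt × SPt, q ∈ RS ∧ ℓ = s(q.1, q.2)} with hLdef
  have hmemRc : ∀ {k : ℕ} {w : SPt × SPt}, s(w.1, w.2) ∈ (Θ k).leaves ↔ w ∈ (Rc k : Set _) := by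
    intro k w
    rw [hRc k]
    rfl
  have hsymm : ∀ {q : SPt × SPt}, q ∈ RS → (q.2, q.1) ∈ RS := by
    intro q hq
    obtain ⟨σ, hσmem, hσconv⟩ := hyper_approx hconv hq
    apply hyper_limit_mem hconv strictMono_id (σ := fun k => ((σ k).2, (σ k).1))
    · intro k
      apply hmemRc.mp
      have := hmemRc.mpr (hσmem k)
      rw [show s(((σ k).2, (σ k).1).1, ((σ k).2, (σ k).1).2) = s((σ k).1, (σ k).2) from
        Sym2.eq_swap]
      exact this
    · exact ((continuous_snd.prodMk continuous_fst).tendsto _).comp hσconv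
  have hpairsL : pairs LL = RS := by
    ext ⟨a, b⟩
    constructor
    · rintro ⟨q, hq, heq⟩
      rcases Sym2.eq_iff.mp heq with ⟨h1, h2⟩ | ⟨h1, h2⟩
      · have : (a, b) = q := Prod.ext h1 h2
        rw [this]; exact hq
      · have : (a, b) = (q.2, q.1) := Prod.ext h1 h2
        rw [this]; exact hsymm hq
    · intro h
      exact ⟨(a, b), h, rfl⟩
  have hLclosed : IsClosed (pairs LL) := by rw [hpairsL]; exact R.isCompact.isClosed
  have hdg : ∀ z : SPt, Sym2.diag z ∈ LL := by
    intro z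
    have : (z, z) ∈ RS := by
      apply hyper_limit_mem hconv strictMono_id (σ := fun _ => (z, z))
      · intro k
        exact hmemRc.mp ((Θ k).diag_mem z)
      · exact tendsto_const_nhds
    exact ⟨(z, z), this, rfl⟩
  have hnc : ∀ ℓ₁ ∈ LL, ∀ ℓ₂ ∈ LL, ¬ Cross ℓ₁ ℓ₂ := by
    rintro ℓ₁ ⟨qa, hqa, rfl⟩ ℓ₂ ⟨qc, hqc, rfl⟩ ⟨hne, hx⟩
    obtain ⟨σ₁, hσ₁mem, hσ₁conv⟩ := hyper_approx hconv hqa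
    obtain ⟨σ₂, hσ₂mem, hσ₂conv⟩ := hyper_approx hconv hqc
    have hev := cross_open_chord hne hx
      (tendsto_coe_of_tendsto ((continuous_fst.tendsto _).comp hσ₁conv))
      (tendsto_coe_of_tendsto ((continuous_snd.tendsto _).comp hσ₁conv))
      (tendsto_coe_of_tendsto ((continuous_fst.tendsto _).comp hσ₂conv))
      (tendsto_coe_of_tendsto ((continuous_snd.tendsto _).comp hσ₂conv))
    obtain ⟨k, hk⟩ := hev.exists
    exact (Θ k).no_cross _ (hmemRc.mpr (hσ₁mem k)) _ (hmemRc.mpr (hσ₂mem k)) hk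
  refine ⟨⟨LL, hnc, hdg, plus_compact_of_closed hLclosed⟩, ⟨?_, ?_, ?_⟩, ?_, hpairsL⟩
  · -- forward invariance
    rintro ℓ ⟨q, hq, rfl⟩
    obtain ⟨σ, hσmem, hσconv⟩ := hyper_approx hconv hq
    have hmem : (sigmaS 3 q.1, sigmaS 3 q.2) ∈ RS := by
      apply hyper_limit_mem hconv strictMono_id
        (σ := fun k => (sigmaS 3 (σ k).1, sigmaS 3 (σ k).2))
      · intro k
        apply hmemRc.mp
        have := (hinv k).1 _ (hmemRc.mpr (hσmem k))
        rwa [chordMap_mk] at this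
      · exact (tendsto_sigmaS ((continuous_fst.tendsto _).comp hσconv)).prodMk_nhds
          (tendsto_sigmaS ((continuous_snd.tendsto _).comp hσconv))
    rw [chordMap_mk]
    exact ⟨_, hmem, rfl⟩
  · -- preimages
    rintro ℓ ⟨q, hq, rfl⟩
    obtain ⟨σ, hσmem, hσconv⟩ := hyper_approx hconv hq
    have hpre : ∀ k, ∃ w : SPt × SPt, s(w.1, w.2) ∈ (Θ k).leaves ∧
        chordMap 3 s(w.1, w.2) = s((σ k).1, (σ k).2) := by
      intro k
      obtain ⟨p, hp, hm⟩ := (hinv k).2.1 _ (hmemRc.mpr (hσmem k))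
      obtain ⟨u, v, rfl⟩ := sym2_rep p
      exact ⟨(u, v), hp, hm⟩
    choose W hWmem hWmap using hpre
    obtain ⟨w, -, ψ, hψ, hwconv⟩ :=
      IsCompact.tendsto_subseq (isCompact_univ (X := SPt × SPt)) (fun k => Set.mem_univ (W k))
    have hwRS : w ∈ RS :=
      hyper_limit_mem hconv hψ (fun j => hmemRc.mp (hWmem (ψ j))) hwconv
    have hw1 : Tendsto (fun j => (W (ψ j)).1) atTop (nhds w.1) :=
      (continuous_fst.tendsto _).comp hwconv
    have hw2 : Tendsto (fun j => (W (ψ j)).2) atTop (nhds w.2) :=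
      (continuous_snd.tendsto _).comp hwconv
    refine ⟨s(w.1, w.2), ⟨w, hwRS, rfl⟩, ?_⟩
    rw [chordMap_mk]
    apply limit_sym2_eq (tendsto_sigmaS hw1) (tendsto_sigmaS hw2)
      ((continuous_fst.tendsto _).comp (hσconv.comp hψ.tendsto_atTop))
      ((continuous_snd.tendsto _).comp (hσconv.comp hψ.tendsto_atTop))
    intro j
    have := hWmap (ψ j)
    rwa [chordMap_mk] at this
  · -- siblings
    rintro ℓ ⟨q, hq, rfl⟩ himg
    have himg' : sigmaS 3 q.1 ≠ sigmaS 3 q.2 := by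
      rw [chordMap_mk] at himg
      exact fun h => himg (Sym2.mk_isDiag_iff.mpr h)
    obtain ⟨σ, hσmem, hσconv⟩ := hyper_approx hconv hq
    have hσ1 : Tendsto (fun k => (σ k).1) atTop (nhds q.1) := (continuous_fst.tendsto _).comp hσconv
    have hσ2 : Tendsto (fun k => (σ k).2) atTop (nhds q.2) := (continuous_snd.tendsto _).comp hσconv
    have hevnd : ∀ᶠ k in atTop, sigmaS 3 (σ k).1 ≠ sigmaS 3 (σ k).2 := by
      by_contra hcon
      rw [Filter.not_eventually] at hcon
      obtain ⟨φ, hφ, heq⟩ := Filter.extraction_of_frequently_atTop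
        (hcon.mono fun k h => not_not.mp h)
      apply himg'
      have h1 : Tendsto (fun j => sigmaS 3 (σ (φ j)).1) atTop (nhds (sigmaS 3 q.1)) :=
        tendsto_sigmaS (hσ1.comp hφ.tendsto_atTop)
      have h2 : Tendsto (fun j => sigmaS 3 (σ (φ j)).2) atTop (nhds (sigmaS 3 q.2)) :=
        tendsto_sigmaS (hσ2.comp hφ.tendsto_atTop)
      have hfe : (fun j => sigmaS 3 (σ (φ j)).1) = fun j => sigmaS 3 (σ (φ j)).2 :=
        funext fun j => heq j
      rw [hfe] at h1
      exact tendsto_nhds_unique h1 h2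
    obtain ⟨N, hN⟩ := Filter.eventually_atTop.mp hevnd
    set ι : ℕ → ℕ := fun j => j + N with hιdef
    have hιmono : StrictMono ι := fun x y h => Nat.add_lt_add_right h N
    have hιnd : ∀ j, sigmaS 3 (σ (ι j)).1 ≠ sigmaS 3 (σ (ι j)).2 :=
      fun j => hN (j + N) (Nat.le_add_left N j)
    have hsib : ∀ j, ∃ (Y : Fin 3 → SPt × SPt) (i₀ : Fin 3),
        (s((Y i₀).1, (Y i₀).2) = s((σ (ι j)).1, (σ (ι j)).2)) ∧
        (∀ i, s((Y i).1, (Y i).2) ∈ (Θ (ι j)).leaves) ∧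
        (∀ i i', i ≠ i' → chordSet s((Y i).1, (Y i).2) ∩ chordSet s((Y i').1, (Y i').2) = ∅) ∧
        (∀ i, chordMap 3 s((Y i).1, (Y i).2) = chordMap 3 s((σ (ι j)).1, (σ (ι j)).2)) := by
      intro j
      have hleaf : s((σ (ι j)).1, (σ (ι j)).2) ∈ (Θ (ι j)).leaves := hmemRc.mpr (hσmem (ι j))
      have hndeg : ¬ (chordMap 3 s((σ (ι j)).1, (σ (ι j)).2)).IsDiag := by
        rw [chordMap_mk]
        exact fun h => hιnd j (Sym2.mk_isDiag_iff.mp h)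
      obtain ⟨st, ⟨i₀, hi₀⟩, hstmem, -, hdisj, hmap⟩ := (hinv (ι j)).2.2 _ hleaf hndeg
      have hrep : ∀ i, ∃ w : SPt × SPt, st i = s(w.1, w.2) := by
        intro i
        obtain ⟨u, v, h⟩ := sym2_rep (st i)
        exact ⟨(u, v), h⟩
      choose Y hY using hrep
      refine ⟨Y, i₀, by rw [← hY]; exact hi₀, fun i => by rw [← hY]; exact hstmem i,
        fun i i' hne' => by rw [← hY, ← hY]; exact hdisj i i' hne',
        fun i => by rw [← hY]; exact hmap i⟩
    choose Ys Is hIs hYmem hYdisj hYmap using hsib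
    obtain ⟨i₀, φ₁, hφ₁, hIconst⟩ := exists_const_extraction Is
    obtain ⟨YL, -, φ₂, hφ₂, hYconv⟩ := IsCompact.tendsto_subseq
      (isCompact_univ (X := Fin 3 → SPt × SPt)) (x := fun j => Ys (φ₁ j))
      (fun j => Set.mem_univ _)
    set χ : ℕ → ℕ := fun m => φ₁ (φ₂ m) with hχdef
    have hχ : StrictMono χ := hφ₁.comp hφ₂
    set κ : ℕ → ℕ := fun m => ι (χ m) with hκdef
    have hκ : StrictMono κ := hιmono.comp hχ
    have hYconv' : ∀ i : Fin 3, Tendsto (fun m => Ys (χ m) i) atTop (nhds (YL i)) := by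
      intro i
      exact ((continuous_apply i).tendsto _).comp hYconv
    have hY1 : ∀ i, Tendsto (fun m => (Ys (χ m) i).1) atTop (nhds (YL i).1) :=
      fun i => (continuous_fst.tendsto _).comp (hYconv' i)
    have hY2 : ∀ i, Tendsto (fun m => (Ys (χ m) i).2) atTop (nhds (YL i).2) :=
      fun i => (continuous_snd.tendsto _).comp (hYconv' i)
    have hσκ1 : Tendsto (fun m => (σ (κ m)).1) atTop (nhds q.1) := hσ1.comp hκ.tendsto_atTop
    have hσκ2 : Tendsto (fun m => (σ (κ m)).2) atTop (nhds q.2) := hσ2.comp hκ.tendsto_atTop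
    have hmemLL : ∀ i : Fin 3, YL i ∈ RS := by
      intro i
      apply hyper_limit_mem hconv hκ (σ := fun m => Ys (χ m) i)
      · intro m
        exact hmemRc.mp (hYmem (χ m) i)
      · exact hYconv' i
    have himgeq : ∀ i : Fin 3,
        chordMap 3 s((YL i).1, (YL i).2) = chordMap 3 s(q.1, q.2) := by
      intro i
      rw [chordMap_mk, chordMap_mk]
      apply limit_sym2_eq (tendsto_sigmaS (hY1 i)) (tendsto_sigmaS (hY2 i))
        (tendsto_sigmaS hσκ1) (tendsto_sigmaS hσκ2)
      intro m
      have h1 := hYmap (χ m) i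
      rwa [chordMap_mk, chordMap_mk] at h1
    have hi₀eq : s((YL i₀).1, (YL i₀).2) = s(q.1, q.2) := by
      apply limit_sym2_eq (hY1 i₀) (hY2 i₀) hσκ1 hσκ2
      intro m
      have h2 : Is (χ m) = i₀ := hIconst (φ₂ m)
      have h1 := hIs (χ m)
      rw [h2] at h1
      exact h1
    have hcol : ∀ (i i' : Fin 3), i ≠ i' → ∀ (pm qm : ℕ → SPt) (p : SPt),
        (∀ m, pm m = (Ys (χ m) i).1 ∨ pm m = (Ys (χ m) i).2) →
        (∀ m, qm m = (Ys (χ m) i').1 ∨ qm m = (Ys (χ m) i').2) →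
        Tendsto pm atTop (nhds p) → Tendsto qm atTop (nhds p) → False := by
      intro i i' hii' pm qm p hpend hqend hpt hqt
      have hne' : ∀ m, pm m ≠ qm m := by
        intro m heq'
        have hp1 : (pm m : ℂ) ∈ chordSet s((Ys (χ m) i).1, (Ys (χ m) i).2) := by
          rw [chordSet_mk]
          rcases hpend m with h | h
          · rw [h]; exact left_mem_segment _ _ _
          · rw [h]; exact right_mem_segment _ _ _
        have hq1 : (pm m : ℂ) ∈ chordSet s((Ys (χ m) i').1, (Ys (χ m) i').2) := by
          rw [chordSet_mk, heq']
          rcases hqend m with h | h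
          · rw [h]; exact left_mem_segment _ _ _
          · rw [h]; exact right_mem_segment _ _ _
        have hd := hYdisj (χ m) i i' hii'
        have hmm : (pm m : ℂ) ∈ (∅ : Set ℂ) := hd ▸ Set.mem_inter hp1 hq1
        exact hmm
      have hpcube : ∀ m, sigmaS 3 (pm m) ∈ s(sigmaS 3 (σ (κ m)).1, sigmaS 3 (σ (κ m)).2) := by
        intro m
        have h1 := hYmap (χ m) i
        rw [chordMap_mk, chordMap_mk] at h1
        rcases hpend m with h | h
        · rw [h, ← h1]; exact Sym2.mem_mk_left _ _
        · rw [h, ← h1]; exact Sym2.mem_mk_right _ _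
      have hqcube : ∀ m, sigmaS 3 (qm m) ∈ s(sigmaS 3 (σ (κ m)).1, sigmaS 3 (σ (κ m)).2) := by
        intro m
        have h1 := hYmap (χ m) i'
        rw [chordMap_mk, chordMap_mk] at h1
        rcases hqend m with h | h
        · rw [h, ← h1]; exact Sym2.mem_mk_left _ _
        · rw [h, ← h1]; exact Sym2.mem_mk_right _ _
      have hdich : ∀ m, (sigmaS 3 (pm m) = sigmaS 3 (qm m)) ∨
          (s(sigmaS 3 (pm m), sigmaS 3 (qm m)) =
            s(sigmaS 3 (σ (κ m)).1, sigmaS 3 (σ (κ m)).2)) := by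
        intro m
        by_cases h : sigmaS 3 (pm m) = sigmaS 3 (qm m)
        · exact Or.inl h
        · exact Or.inr (mem_sym2_pair_eq (hpcube m) (hqcube m) h)
      rcases frequently_or_of_forall hdich with hf | hf
      · obtain ⟨φ₃, hφ₃, hc⟩ := Filter.extraction_of_frequently_atTop hf
        have hsep : ∀ j, 1 ≤ ‖((pm (φ₃ j)) : ℂ) - ((qm (φ₃ j)) : ℂ)‖ := by
          intro j
          apply cube_root_sep (pm (φ₃ j)).2 (qm (φ₃ j)).2
          · exact congrArg Subtype.val (hc j)
          · exact fun h => hne' (φ₃ j) (Subtype.ext h)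
        have hlim0 : Tendsto (fun j => ‖((pm (φ₃ j)) : ℂ) - ((qm (φ₃ j)) : ℂ)‖) atTop (nhds 0) := by
          have h1 := tendsto_coe_of_tendsto (hpt.comp hφ₃.tendsto_atTop)
          have h2 := tendsto_coe_of_tendsto (hqt.comp hφ₃.tendsto_atTop)
          have h3 := (h1.sub h2).norm
          simpa using h3
        obtain ⟨j, hj⟩ := (hlim0.eventually_lt_const (by norm_num : (0:ℝ) < 1)).exists
        linarith [hsep j]
      · obtain ⟨φ₃, hφ₃, hc⟩ := Filter.extraction_of_frequently_atTop hf
        have hkey : s(sigmaS 3 p, sigmaS 3 p) = s(sigmaS 3 q.1, sigmaS 3 q.2) := by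
          apply limit_sym2_eq
            (tendsto_sigmaS (hpt.comp hφ₃.tendsto_atTop))
            (tendsto_sigmaS (hqt.comp hφ₃.tendsto_atTop))
            (tendsto_sigmaS (hσκ1.comp hφ₃.tendsto_atTop))
            (tendsto_sigmaS (hσκ2.comp hφ₃.tendsto_atTop))
            hc
        rcases Sym2.eq_iff.mp hkey with ⟨h1, h2⟩ | ⟨h1, h2⟩
        · exact himg' (h1.symm.trans h2)
        · exact himg' (h2.symm.trans h1)
    have hdisjLL : ∀ i i' : Fin 3, i ≠ i' →
        chordSet s((YL i).1, (YL i).2) ∩ chordSet s((YL i').1, (YL i').2) = ∅ := by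
      intro i i' hii'
      by_contra hconempty
      obtain ⟨x, hx1, hx2⟩ := Set.nonempty_iff_ne_empty.mpr hconempty
      rw [chordSet_mk] at hx1 hx2
      by_cases hxlt : ‖x‖ < 1
      · by_cases heq2 : s((YL i).1, (YL i).2) = s((YL i').1, (YL i').2)
        · rcases Sym2.eq_iff.mp heq2 with ⟨h1, h2⟩ | ⟨h1, h2⟩
          · exact hcol i i' hii' (fun m => (Ys (χ m) i).1) (fun m => (Ys (χ m) i').1) (YL i).1
              (fun m => Or.inl rfl) (fun m => Or.inl rfl) (hY1 i) (by rw [h1]; exact hY1 i')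
          · exact hcol i i' hii' (fun m => (Ys (χ m) i).1) (fun m => (Ys (χ m) i').2) (YL i).1
              (fun m => Or.inl rfl) (fun m => Or.inr rfl) (hY1 i) (by rw [h1]; exact hY2 i')
        · have hev := cross_open_chord heq2
            ⟨x, ⟨by rw [chordSet_mk]; exact hx1, by rw [chordSet_mk]; exact hx2⟩,
              mem_openDisk_iff.mpr hxlt⟩
            (tendsto_coe_of_tendsto (hY1 i)) (tendsto_coe_of_tendsto (hY2 i))
            (tendsto_coe_of_tendsto (hY1 i')) (tendsto_coe_of_tendsto (hY2 i'))
          obtain ⟨m, hm⟩ := hev.exists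
          obtain ⟨y, ⟨hy1, hy2⟩, -⟩ := hm.2
          have hd := hYdisj (χ m) i i' hii'
          have hmm : y ∈ (∅ : Set ℂ) := hd ▸ Set.mem_inter hy1 hy2
          exact hmm
      · have hx1' : ‖x‖ = 1 :=
          le_antisymm (seg_norm_le (YL i).1.2 (YL i).2.2 hx1) (not_lt.mp hxlt)
        rcases seg_unit_mem (YL i).1.2 (YL i).2.2 hx1 hx1' with h1 | h1 <;>
          rcases seg_unit_mem (YL i').1.2 (YL i').2.2 hx2 hx1' with h2 | h2
        · have hee : (YL i').1 = (YL i).1 := Subtype.ext (by rw [← h1, ← h2])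
          exact hcol i i' hii' (fun m => (Ys (χ m) i).1) (fun m => (Ys (χ m) i').1) (YL i).1
            (fun m => Or.inl rfl) (fun m => Or.inl rfl) (hY1 i) (hee ▸ hY1 i')
        · have hee : (YL i').2 = (YL i).1 := Subtype.ext (by rw [← h1, ← h2])
          exact hcol i i' hii' (fun m => (Ys (χ m) i).1) (fun m => (Ys (χ m) i').2) (YL i).1
            (fun m => Or.inl rfl) (fun m => Or.inr rfl) (hY1 i) (hee ▸ hY2 i')
        · have hee : (YL i').1 = (YL i).2 := Subtype.ext (by rw [← h1, ← h2])
          exact hcol i i' hii' (fun m => (Ys (χ m) i).2) (fun m => (Ys (χ m) i').1) (YL i).2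
            (fun m => Or.inr rfl) (fun m => Or.inl rfl) (hY2 i) (hee ▸ hY1 i')
        · have hee : (YL i').2 = (YL i).2 := Subtype.ext (by rw [← h1, ← h2])
          exact hcol i i' hii' (fun m => (Ys (χ m) i).2) (fun m => (Ys (χ m) i').2) (YL i).2
            (fun m => Or.inr rfl) (fun m => Or.inr rfl) (hY2 i) (hee ▸ hY2 i')
    refine ⟨fun i => s((YL i).1, (YL i).2), ⟨i₀, hi₀eq⟩, fun i => ⟨YL i, hmemLL i, rfl⟩,
      ?_, hdisjLL, himgeq⟩
    intro i i' h
    by_contra hii'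
    have hd := hdisjLL i i' hii'
    obtain ⟨y, hy⟩ := chordSet_nonempty s((YL i).1, (YL i).2)
    have h' : s((YL i).1, (YL i).2) = s((YL i').1, (YL i').2) := h
    have hy' : y ∈ chordSet s((YL i').1, (YL i').2) := by rw [← h']; exact hy
    have hmm : y ∈ (∅ : Set ℂ) := hd ▸ Set.mem_inter hy hy'
    exact hmm
  · -- nonemptiness
    have hlong : ∀ k, ∃ w : SPt × SPt, w ∈ (Rc k : Set _) ∧ 1/3 ≤ ‖(w.1 : ℂ) - (w.2 : ℂ)‖ := by
      intro k
      obtain ⟨a, b, hmem, hlen⟩ := long_leaf_exists (hinv k).1 (hnem k)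
      exact ⟨(a, b), hmemRc.mp hmem, hlen⟩
    choose Wl hWlmem hWllen using hlong
    obtain ⟨w, -, ψ, hψ, hwconv⟩ :=
      IsCompact.tendsto_subseq (isCompact_univ (X := SPt × SPt)) (fun k => Set.mem_univ (Wl k))
    have hwRS : w ∈ RS :=
      hyper_limit_mem hconv hψ (fun j => hWlmem (ψ j)) hwconv
    have hlen : 1/3 ≤ ‖(w.1 : ℂ) - (w.2 : ℂ)‖ := by
      have hn : Tendsto (fun j => ‖((Wl (ψ j)).1 : ℂ) - ((Wl (ψ j)).2 : ℂ)‖) atTop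
          (nhds ‖(w.1 : ℂ) - (w.2 : ℂ)‖) :=
        ((tendsto_coe_of_tendsto ((continuous_fst.tendsto _).comp hwconv)).sub
          (tendsto_coe_of_tendsto ((continuous_snd.tendsto _).comp hwconv))).norm
      exact le_of_tendsto_of_tendsto' tendsto_const_nhds hn (fun j => hWllen (ψ j))
    refine ⟨s(w.1, w.2), ⟨w, hwRS, rfl⟩, ?_⟩
    intro hd
    have : (w.1 : ℂ) = (w.2 : ℂ) := congrArg _ (Sym2.mk_isDiag_iff.mp hd)
    rw [this, sub_self, norm_zero] at hlen
    linarith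

/- ## Compatibility in the limit -/

open TopologicalSpace in
lemma compat_limit {Θ : ℕ → Lamination} {Rc : ℕ → NonemptyCompacts (SPt × SPt)}
    (hRc : ∀ k, (Rc k : Set (SPt × SPt)) = pairs (Θ k).leaves)
    {R : NonemptyCompacts (SPt × SPt)} (hconv : Tendsto Rc atTop (nhds R))
    {Λ : Lamination} (hpairs : pairs Λ.leaves = (R : Set (SPt × SPt)))
    {P : ℕ → Portrait} {K : Portrait}
    (hcompat : ∀ k, Compat (P k) (Θ k))
    (htend : Tendsto (fun k => portraitDist (P k) K) atTop (nhds 0)) :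
    Compat K Λ := by
  classical
  obtain ⟨c₀, y₀, rfl⟩ := sym2_rep K
  have hmemRc : ∀ {k : ℕ} {w : SPt × SPt}, s(w.1, w.2) ∈ (Θ k).leaves ↔ w ∈ (Rc k : Set _) := by
    intro k w
    rw [hRc k]
    rfl
  have hrep : ∀ k, ∃ w : Chord × Chord, P k = s(w.1, w.2) := by
    intro k
    obtain ⟨u, v, h⟩ := sym2_rep (P k)
    exact ⟨(u, v), h⟩
  choose E hE using hrep
  set m1 : ℕ → ℝ := fun k => max (chordDist (E k).1 c₀) (chordDist (E k).2 y₀) with hm1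
  set m2 : ℕ → ℝ := fun k => max (chordDist (E k).1 y₀) (chordDist (E k).2 c₀) with hm2
  have hDeq : ∀ k, portraitDist (P k) s(c₀, y₀) = min (m1 k) (m2 k) := by
    intro k
    rw [hE k]
    exact Sym2.lift₂_mk _ _ _ _ _
  have htend' : Tendsto (fun k => min (m1 k) (m2 k)) atTop (nhds 0) := by
    have : (fun k => portraitDist (P k) s(c₀, y₀)) = fun k => min (m1 k) (m2 k) :=
      funext hDeq
    rwa [this] at htend
  have hsel : ∀ c : Chord, c ∈ s(c₀, y₀) → ∃ (ψ : ℕ → ℕ) (e : ℕ → Chord), StrictMono ψ ∧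
      (∀ j, e j ∈ P (ψ j)) ∧ Tendsto (fun j => chordDist (e j) c) atTop (nhds 0) := by
    intro c hc
    rcases frequently_or_of_forall (fun k => le_total (m1 k) (m2 k)) with hf | hf
    · obtain ⟨ψ, hψ, hle⟩ := Filter.extraction_of_frequently_atTop hf
      have hm1lim : Tendsto (fun j => m1 (ψ j)) atTop (nhds 0) := by
        have heq2 : (fun j => m1 (ψ j)) = fun j => min (m1 (ψ j)) (m2 (ψ j)) :=
          funext fun j => (min_eq_left (hle j)).symm
        rw [heq2]
        exact htend'.comp hψ.tendsto_atTop
      have h1 : Tendsto (fun j => chordDist ((E (ψ j)).1) c₀) atTop (nhds 0) :=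
        squeeze_zero (fun j => chordDist_nonneg _ _) (fun j => le_max_left _ _) hm1lim
      have h2 : Tendsto (fun j => chordDist ((E (ψ j)).2) y₀) atTop (nhds 0) :=
        squeeze_zero (fun j => chordDist_nonneg _ _) (fun j => le_max_right _ _) hm1lim
      rcases Sym2.mem_iff.mp hc with rfl | rfl
      · exact ⟨ψ, fun j => (E (ψ j)).1, hψ,
          fun j => by rw [hE (ψ j)]; exact Sym2.mem_mk_left _ _, h1⟩
      · exact ⟨ψ, fun j => (E (ψ j)).2, hψ,
          fun j => by rw [hE (ψ j)]; exact Sym2.mem_mk_right _ _, h2⟩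
    · obtain ⟨ψ, hψ, hle⟩ := Filter.extraction_of_frequently_atTop hf
      have hm2lim : Tendsto (fun j => m2 (ψ j)) atTop (nhds 0) := by
        have heq2 : (fun j => m2 (ψ j)) = fun j => min (m1 (ψ j)) (m2 (ψ j)) :=
          funext fun j => (min_eq_right (hle j)).symm
        rw [heq2]
        exact htend'.comp hψ.tendsto_atTop
      have h1 : Tendsto (fun j => chordDist ((E (ψ j)).2) c₀) atTop (nhds 0) :=
        squeeze_zero (fun j => chordDist_nonneg _ _) (fun j => le_max_right _ _) hm2lim
      have h2 : Tendsto (fun j => chordDist ((E (ψ j)).1) y₀) atTop (nhds 0) :=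
        squeeze_zero (fun j => chordDist_nonneg _ _) (fun j => le_max_left _ _) hm2lim
      rcases Sym2.mem_iff.mp hc with rfl | rfl
      · exact ⟨ψ, fun j => (E (ψ j)).2, hψ,
          fun j => by rw [hE (ψ j)]; exact Sym2.mem_mk_right _ _, h1⟩
      · exact ⟨ψ, fun j => (E (ψ j)).1, hψ,
          fun j => by rw [hE (ψ j)]; exact Sym2.mem_mk_left _ _, h2⟩
  intro c hc ℓ hℓ hcross
  obtain ⟨ψ, e, hψ, hemem, hedist⟩ := hsel c hc
  obtain ⟨φ₄, u, v, p, qh, hφ₄, herep, hcrep, hu, hv⟩ := chord_approx_endpoints hedist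
  obtain ⟨α, β, rfl⟩ := sym2_rep ℓ
  have hαβ : (α, β) ∈ (R : Set (SPt × SPt)) := by
    rw [← hpairs]
    exact hℓ
  obtain ⟨σL, hσLmem, hσLconv⟩ := hyper_approx hconv hαβ
  set θ : ℕ → ℕ := fun j => ψ (φ₄ j) with hθ
  have hθmono : StrictMono θ := hψ.comp hφ₄
  rw [hcrep] at hcross
  obtain ⟨hne, hx⟩ := hcross
  have hσθ : Tendsto (fun j => σL (θ j)) atTop (nhds (α, β)) :=
    hσLconv.comp hθmono.tendsto_atTop
  have hev := cross_open_chord hne hx hu hv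
    (tendsto_coe_of_tendsto ((continuous_fst.tendsto _).comp hσθ))
    (tendsto_coe_of_tendsto ((continuous_snd.tendsto _).comp hσθ))
  obtain ⟨j, hj⟩ := hev.exists
  have hchord : s(u j, v j) = e (φ₄ j) := (herep j).symm
  rw [hchord] at hj
  exact hcompat (θ j) (e (φ₄ j)) (hemem (φ₄ j)) _ (hmemRc.mpr (hσLmem (θ j))) hj

/- ## diagonal clean sequence -/

open TopologicalSpace in
lemma lamtendsto_diag {Θ : ℕ → Lamination} {Rc : ℕ → NonemptyCompacts (SPt × SPt)}
    (hRc : ∀ k, (Rc k : Set (SPt × SPt)) = pairs (Θ k).leaves)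
    {R : NonemptyCompacts (SPt × SPt)} (hconv : Tendsto Rc atTop (nhds R))
    {Λ : Lamination} (hpairs : pairs Λ.leaves = (R : Set (SPt × SPt)))
    {Cs : ℕ → ℕ → Lamination}
    (hCsprop : ∀ k n, (Cs k n).Invariant 3 ∧ (Cs k n).Clean)
    (hCst : ∀ k, LamTendsto (Cs k) (Θ k)) :
    ∃ M : ℕ → Lamination, (∀ k, (M k).Invariant 3 ∧ (M k).Clean) ∧ LamTendsto M Λ := by
  classical
  have hpick : ∀ k : ℕ, ∃ n,
      (∀ ℓ ∈ (Cs k n).leaves, ∃ ℓ' ∈ (Θ k).leaves, chordDist ℓ ℓ' < 1/(k+1)) ∧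
      (∀ ℓ' ∈ (Θ k).leaves, ∃ ℓ ∈ (Cs k n).leaves, chordDist ℓ ℓ' < 1/(k+1)) := by
    intro k
    exact (hCst k (1/(k+1)) (by positivity)).exists
  choose nk hnk1 hnk2 using hpick
  refine ⟨fun k => Cs k (nk k), fun k => hCsprop k (nk k), ?_⟩
  intro ε hε
  have hev1 : ∀ᶠ k : ℕ in atTop, (1:ℝ)/(k+1) < ε/4 :=
    tendsto_one_div_add_atTop_nhds_zero_nat.eventually_lt_const (by positivity)
  have hev2 := hyper_two_sided hconv (show (0:ℝ) < ε/4 by positivity)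
  filter_upwards [hev1, hev2] with k hk1 hk2
  obtain ⟨hk2a, hk2b⟩ := hk2
  constructor
  · intro ℓ hℓ
    obtain ⟨ℓ₁, hℓ₁mem, hd1⟩ := hnk1 k ℓ hℓ
    obtain ⟨u, v, hℓ₁rep⟩ := sym2_rep ℓ₁
    have huv : (u, v) ∈ (Rc k : Set _) := by
      rw [hRc k]
      show s(u, v) ∈ (Θ k).leaves
      rw [← hℓ₁rep]
      exact hℓ₁mem
    obtain ⟨y, hyR, hdy⟩ := hk2a (u, v) huv
    have hy2 : s(y.1, y.2) ∈ Λ.leaves := by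
      have : (y.1, y.2) ∈ pairs Λ.leaves := by
        rw [hpairs]
        exact hyR
      exact this
    refine ⟨s(y.1, y.2), hy2, ?_⟩
    have hstep : chordDist ℓ₁ s(y.1, y.2) < ε/4 := by
      rw [hℓ₁rep]
      calc chordDist s(u, v) s(y.1, y.2) ≤ max (dist (u:ℂ) (y.1:ℂ)) (dist (v:ℂ) (y.2:ℂ)) :=
            chordDist_le_endpoints _ _ _ _
      _ ≤ dist (u, v) y := by
            rw [Prod.dist_eq]
            exact max_le_max (le_of_eq (Subtype.dist_eq u y.1).symm)
              (le_of_eq (Subtype.dist_eq v y.2).symm)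
      _ < ε/4 := hdy
    calc chordDist ℓ s(y.1, y.2) ≤ chordDist ℓ ℓ₁ + chordDist ℓ₁ s(y.1, y.2) :=
          chordDist_triangle _ _ _
    _ < 1/(k+1) + ε/4 := add_lt_add hd1 hstep
    _ < ε := by
        have : (1:ℝ)/(k+1) < ε/4 := hk1
        linarith
  · intro ℓ' hℓ'
    obtain ⟨α, β, hrep⟩ := sym2_rep ℓ'
    have hαβ : (α, β) ∈ (R : Set (SPt × SPt)) := by
      rw [← hpairs]
      show s(α, β) ∈ Λ.leaves
      rw [← hrep]
      exact hℓ'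
    obtain ⟨x, hxmem, hdx⟩ := hk2b (α, β) hαβ
    have hx2 : s(x.1, x.2) ∈ (Θ k).leaves := by
      have : (x.1, x.2) ∈ pairs (Θ k).leaves := by
        rw [← hRc k]
        exact hxmem
      exact this
    obtain ⟨m, hm, hdm⟩ := hnk2 k _ hx2
    refine ⟨m, hm, ?_⟩
    have hstep : chordDist s(x.1, x.2) ℓ' < ε/4 := by
      rw [hrep]
      calc chordDist s(x.1, x.2) s(α, β) ≤ max (dist (x.1:ℂ) (α:ℂ)) (dist (x.2:ℂ) (β:ℂ)) :=
            chordDist_le_endpoints _ _ _ _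
      _ ≤ dist x (α, β) := by
            rw [Prod.dist_eq]
            exact max_le_max (le_of_eq (Subtype.dist_eq x.1 α).symm)
              (le_of_eq (Subtype.dist_eq x.2 β).symm)
      _ < ε/4 := hdx
    calc chordDist m ℓ' ≤ chordDist m s(x.1, x.2) + chordDist s(x.1, x.2) ℓ' :=
          chordDist_triangle _ _ _
    _ < 1/(k+1) + ε/4 := add_lt_add hdm hstep
    _ < ε := by
        have : (1:ℝ)/(k+1) < ε/4 := hk1
        linarith

end AUX

/-- friends are compatible with a common chief, and friendship
is a closed relation. -/
theorem stmt11 :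
    (∀ K₁ K₂ : Portrait, Friends K₁ K₂ →
      ∃ Λ : Lamination, IsChief Λ ∧ K₁ ∈ CC Λ ∧ K₂ ∈ CC Λ) ∧
    (∀ (Ki Ki' : ℕ → Portrait) (K K' : Portrait), K ∈ CrP → K' ∈ CrP →
      PortraitTendsto Ki K → PortraitTendsto Ki' K' →
      (∀ i, Friends (Ki i) (Ki' i)) → Friends K K') := by
  classical
  constructor
  · -- part 1: friends share a chief
    rintro K₁ K₂ ⟨Λ, hlim, hne, hK₁, hK₂⟩
    obtain ⟨Λc, hchief⟩ := chief_exists Λ hlim.1 hne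
    have hsub : Λc.leaves ⊆ Λ.leaves := hchief.1
    refine ⟨Λc, ⟨Λ, hlim, hne, hchief⟩, ⟨hK₁.1, ?_⟩, ⟨hK₂.1, ?_⟩⟩
    · intro c hc ℓ hℓ
      exact hK₁.2 c hc ℓ (hsub hℓ)
    · intro c hc ℓ hℓ
      exact hK₂.2 c hc ℓ (hsub hℓ)
  · -- part 2: friendship is closed
    rintro Ki Ki' K K' hKP hKP' htK htK' hfr
    choose Λs hall using hfr
    have hlim : ∀ i, IsLimitLam (Λs i) := fun i => (hall i).1
    have hnem : ∀ i, (Λs i).NonemptyLam := fun i => (hall i).2.1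
    have hKc : ∀ i, Compat (Ki i) (Λs i) := fun i => (hall i).2.2.1.2
    have hKc' : ∀ i, Compat (Ki' i) (Λs i) := fun i => (hall i).2.2.2.2
    set z₀ : SPt := ⟨1, by norm_num⟩ with hz₀
    set RcA : ℕ → TopologicalSpace.NonemptyCompacts (SPt × SPt) := fun i =>
      ⟨⟨pairs (Λs i).leaves, (pairs_closed (Λs i)).isCompact⟩,
        ⟨(z₀, z₀), (Λs i).diag_mem z₀⟩⟩ with hRcA
    obtain ⟨R, -, φ₀, hφ₀, hconv⟩ := IsCompact.tendsto_subseq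
      (isCompact_univ (X := TopologicalSpace.NonemptyCompacts (SPt × SPt)))
      (fun i => Set.mem_univ (RcA i))
    have hRc : ∀ k, ((RcA (φ₀ k)) : Set (SPt × SPt)) = pairs ((Λs (φ₀ k)).leaves) :=
      fun k => rfl
    obtain ⟨Λi, hinvi, hnei, hpairsi⟩ := limit_lamination
      (Θ := fun k => Λs (φ₀ k)) (fun k => (hlim (φ₀ k)).1) (fun k => hnem (φ₀ k)) hRc hconv
    have hCs : ∀ k, ∃ Ci : ℕ → Lamination,
        (∀ n, (Ci n).Invariant 3 ∧ (Ci n).Clean) ∧ LamTendsto Ci (Λs (φ₀ k)) :=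
      fun k => (hlim (φ₀ k)).2
    choose Cs hCsprop hCst using hCs
    obtain ⟨M, hMprop, hMtend⟩ := lamtendsto_diag hRc hconv hpairsi hCsprop hCst
    have hcompatK : Compat K Λi :=
      compat_limit hRc hconv hpairsi (fun k => hKc (φ₀ k)) (htK.comp hφ₀.tendsto_atTop)
    have hcompatK' : Compat K' Λi :=
      compat_limit hRc hconv hpairsi (fun k => hKc' (φ₀ k)) (htK'.comp hφ₀.tendsto_atTop)
    exact ⟨Λi, ⟨hinvi, M, hMprop, hMtend⟩, hnei, ⟨hKP, hcompatK⟩, ⟨hKP', hcompatK'⟩⟩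
end
end
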